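/- arXiv:2311.14247 — 9 statements merged into one kernel-verified Lean document; each statement's English description precedes it below -/
import Mathlib

section
/- Let (X, dist) be a finite metric space, let μ and ν be probability distributions on X, and let Γ = {Γ_1, …, Γ_k} be a partition of X. Then EMD_dist(μ, ν) ≤ diam(X) · d_TV(μ_Γ, ν_Γ) + E_{x∼μ}[diam(Γ_{γ(x)})], where the expectation equals Σ_{i=1}^k μ[Γ_i] · diam(Γ_i). -/
open scoped BigOperators

/-- Let `(X, dist)` be a finite metric space, `μ, ν` probability
distributions on `X`, and `Γ = {Γ_1, …, Γ_k}` a partition of `X`. Then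
`EMD(μ,ν) ≤ diam(X) · d_TV(μ_Γ, ν_Γ) + Σ_i μ[Γ_i] · diam(Γ_i)`,
where `EMD` is the infimum over couplings `π` of `μ` and `ν` of the expected distance. -/
theorem emd_le_diam_tv_add_expected_diam
    {X : Type*} [MetricSpace X] [Fintype X] {k : ℕ}
    (μ ν : X → ℝ)
    (hμ0 : ∀ x, 0 ≤ μ x) (hμ1 : ∑ x, μ x = 1)
    (hν0 : ∀ x, 0 ≤ ν x) (hν1 : ∑ x, ν x = 1)
    (Γ : Fin k → Finset X)
    (hdisj : ∀ i j, i ≠ j → Disjoint (Γ i) (Γ j))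
    (hcover : ∀ x : X, ∃ i, x ∈ Γ i) :
    sInf {c : ℝ | ∃ π : X × X → ℝ,
        (∀ q, 0 ≤ π q) ∧
        (∀ x, ∑ y, π (x, y) = μ x) ∧
        (∀ y, ∑ x, π (x, y) = ν y) ∧
        c = ∑ q : X × X, π q * dist q.1 q.2} ≤
      Metric.diam (Set.univ : Set X) *
          ((1 / 2) * ∑ i, |(∑ x ∈ Γ i, μ x) - ∑ x ∈ Γ i, ν x|) +
        ∑ i, (∑ x ∈ Γ i, μ x) * Metric.diam (Γ i : Set X) := by
  classical
  let γ : X → Fin k := fun x => (hcover x).choose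
  have hγ : ∀ x, x ∈ Γ (γ x) := fun x => (hcover x).choose_spec
  have hγeq : ∀ {x : X} {i : Fin k}, x ∈ Γ i → γ x = i := by
    intro x i hx
    by_contra h
    exact Finset.disjoint_left.mp (hdisj _ _ h) (hγ x) hx
  have hfib : ∀ i, Finset.univ.filter (fun x => γ x = i) = Γ i := by
    intro i; ext x
    simp only [Finset.mem_filter, Finset.mem_univ, true_and]
    exact ⟨fun h => h ▸ hγ x, fun h => hγeq h⟩
  have hpart : ∀ g : X → ℝ, ∑ i, ∑ x ∈ Γ i, g x = ∑ x, g x := by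
    intro g
    rw [← Finset.sum_fiberwise Finset.univ γ g]
    exact Finset.sum_congr rfl fun i _ => by rw [hfib]
  let a : Fin k → ℝ := fun i => ∑ x ∈ Γ i, μ x
  let b : Fin k → ℝ := fun i => ∑ x ∈ Γ i, ν x
  let D : Fin k → ℝ := fun i => Metric.diam (Γ i : Set X)
  let Dx : ℝ := Metric.diam (Set.univ : Set X)
  let m : Fin k → ℝ := fun i => min (a i) (b i)
  let f : Fin k → ℝ := fun i => m i / (a i * b i)
  let r : Fin k → ℝ := fun i => m i / a i
  let t : Fin k → ℝ := fun i => m i / b i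
  have ha0 : ∀ i, 0 ≤ a i := fun i => Finset.sum_nonneg fun x _ => hμ0 x
  have hb0 : ∀ i, 0 ≤ b i := fun i => Finset.sum_nonneg fun x _ => hν0 x
  have hm0 : ∀ i, 0 ≤ m i := fun i => le_min (ha0 i) (hb0 i)
  have hma : ∀ i, m i ≤ a i := fun i => min_le_left _ _
  have hmb : ∀ i, m i ≤ b i := fun i => min_le_right _ _
  have hD0 : ∀ i, 0 ≤ D i := fun i => Metric.diam_nonneg
  have hDx0 : 0 ≤ Dx := Metric.diam_nonneg
  have hf0 : ∀ i, 0 ≤ f i := fun i =>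
    div_nonneg (hm0 i) (mul_nonneg (ha0 i) (hb0 i))
  have har : ∀ i, a i * r i = m i := by
    intro i
    rcases eq_or_ne (a i) 0 with h | h
    · have : m i = 0 := le_antisymm (h ▸ hma i) (hm0 i)
      simp [r, h, this]
    · show a i * (m i / a i) = m i
      field_simp
  have hbt : ∀ i, b i * t i = m i := by
    intro i
    rcases eq_or_ne (b i) 0 with h | h
    · have : m i = 0 := le_antisymm (h ▸ hmb i) (hm0 i)
      simp [t, h, this]
    · show b i * (m i / b i) = m i
      field_simp
  have hfb : ∀ i, f i * b i = r i := by
    intro i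
    rcases eq_or_ne (b i) 0 with h | h
    · have hm : m i = 0 := le_antisymm (h ▸ hmb i) (hm0 i)
      simp [f, r, h, hm]
    · rw [div_mul_eq_mul_div, mul_comm (a i) (b i), mul_comm (m i) (b i),
        mul_div_mul_left _ _ h]
  have hfa : ∀ i, f i * a i = t i := by
    intro i
    rcases eq_or_ne (a i) 0 with h | h
    · have hm : m i = 0 := le_antisymm (h ▸ hma i) (hm0 i)
      simp [f, t, h, hm]
    · rw [div_mul_eq_mul_div, mul_comm (m i) (a i), mul_div_mul_left _ _ h]
  have hr1 : ∀ i, r i ≤ 1 := by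
    intro i
    rcases eq_or_ne (a i) 0 with h | h
    · have : m i = 0 := le_antisymm (h ▸ hma i) (hm0 i)
      simp [r, this]
    · exact (div_le_one (lt_of_le_of_ne (ha0 i) (Ne.symm h))).mpr (hma i)
  have ht1 : ∀ i, t i ≤ 1 := by
    intro i
    rcases eq_or_ne (b i) 0 with h | h
    · have : m i = 0 := le_antisymm (h ▸ hmb i) (hm0 i)
      simp [t, this]
    · exact (div_le_one (lt_of_le_of_ne (hb0 i) (Ne.symm h))).mpr (hmb i)
  have hr0 : ∀ i, 0 ≤ r i := fun i => div_nonneg (hm0 i) (ha0 i)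
  have ht0 : ∀ i, 0 ≤ t i := fun i => div_nonneg (hm0 i) (hb0 i)
  -- leftover distributions
  let μ' : X → ℝ := fun x => μ x * (1 - r (γ x))
  let ν' : X → ℝ := fun y => ν y * (1 - t (γ y))
  let s : ℝ := ∑ i, (a i - m i)
  have hμ'0 : ∀ x, 0 ≤ μ' x := fun x =>
    mul_nonneg (hμ0 x) (by linarith [hr1 (γ x)])
  have hν'0 : ∀ y, 0 ≤ ν' y := fun y =>
    mul_nonneg (hν0 y) (by linarith [ht1 (γ y)])
  have hA : ∑ i, a i = 1 := (hpart μ).trans hμ1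
  have hB : ∑ i, b i = 1 := (hpart ν).trans hν1
  have hcell : ∀ (i) (g : Fin k → ℝ), ∑ x ∈ Γ i, μ x * g (γ x) = a i * g i := by
    intro i g
    rw [show a i * g i = ∑ x ∈ Γ i, μ x * g i by rw [← Finset.sum_mul]]
    exact Finset.sum_congr rfl fun x hx => by rw [hγeq hx]
  have hcellν : ∀ (i) (g : Fin k → ℝ), ∑ y ∈ Γ i, ν y * g (γ y) = b i * g i := by
    intro i g
    rw [show b i * g i = ∑ y ∈ Γ i, ν y * g i by rw [← Finset.sum_mul]]
    exact Finset.sum_congr rfl fun y hy => by rw [hγeq hy]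
  have hμ's : ∑ x, μ' x = s := by
    rw [← hpart μ']
    refine Finset.sum_congr rfl fun i _ => ?_
    rw [hcell i (fun j => 1 - r j), mul_sub, mul_one, har]
  have hν's : ∑ y, ν' y = s := by
    have h1 : ∑ y, ν' y = ∑ i, (b i - m i) := by
      rw [← hpart ν']
      refine Finset.sum_congr rfl fun i _ => ?_
      rw [hcellν i (fun j => 1 - t j), mul_sub, mul_one, hbt]
    rw [h1]
    have : ∑ i, (a i - m i) = ∑ i, (b i - m i) := by
      rw [Finset.sum_sub_distrib, Finset.sum_sub_distrib, hA, hB]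
    simpa [s] using this.symm
  have hs0 : 0 ≤ s := Finset.sum_nonneg fun i _ => by linarith [hma i]
  -- the coupling
  let π1 : X → X → ℝ := fun x y => if γ x = γ y then f (γ x) * (μ x * ν y) else 0
  let π2 : X → X → ℝ := fun x y => μ' x * ν' y / s
  let π : X × X → ℝ := fun q => π1 q.1 q.2 + π2 q.1 q.2
  have hπ1nn : ∀ x y, 0 ≤ π1 x y := by
    intro x y
    by_cases h : γ x = γ y
    · simp only [π1, if_pos h]
      exact mul_nonneg (hf0 _) (mul_nonneg (hμ0 x) (hν0 y))
    · simp [π1, h]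
  have hπ2nn : ∀ x y, 0 ≤ π2 x y :=
    fun x y => div_nonneg (mul_nonneg (hμ'0 x) (hν'0 y)) hs0
  -- marginals of π1
  have hrow1 : ∀ x, ∑ y, π1 x y = μ x * r (γ x) := by
    intro x
    have : ∑ y, π1 x y = ∑ y ∈ Finset.univ.filter (fun y => γ y = γ x),
        f (γ x) * (μ x * ν y) := by
      rw [Finset.sum_filter]
      exact Finset.sum_congr rfl fun y _ => by simp [π1, eq_comm]
    rw [this, hfib, ← Finset.mul_sum, ← Finset.mul_sum]
    have : (∑ x_1 ∈ Γ (γ x), ν x_1) = b (γ x) := rfl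
    rw [this]
    rw [show f (γ x) * (μ x * b (γ x)) = μ x * (f (γ x) * b (γ x)) by ring, hfb]
  have hcol1 : ∀ y, ∑ x, π1 x y = ν y * t (γ y) := by
    intro y
    have : ∑ x, π1 x y = ∑ x ∈ Finset.univ.filter (fun x => γ x = γ y),
        f (γ y) * (μ x * ν y) := by
      rw [Finset.sum_filter]
      refine Finset.sum_congr rfl fun x _ => ?_
      by_cases h : γ x = γ y <;> simp [π1, h]
    rw [this, hfib]
    have : ∑ x ∈ Γ (γ y), f (γ y) * (μ x * ν y)
        = (f (γ y) * ν y) * a (γ y) :=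
      calc ∑ x ∈ Γ (γ y), f (γ y) * (μ x * ν y)
          = ∑ x ∈ Γ (γ y), (f (γ y) * ν y) * μ x :=
            Finset.sum_congr rfl fun x _ => by ring
        _ = (f (γ y) * ν y) * a (γ y) := (Finset.mul_sum _ _ _).symm
    rw [this, show f (γ y) * ν y * a (γ y) = ν y * (f (γ y) * a (γ y)) by ring, hfa]
  have hrow2 : ∀ x, ∑ y, π2 x y = μ' x := by
    intro x
    simp only [π2]
    rw [← Finset.sum_div, ← Finset.mul_sum, hν's]
    rcases eq_or_ne s 0 with h | h
    · have : μ' x = 0 := by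
        have := (Finset.sum_eq_zero_iff_of_nonneg
          (fun y _ => hμ'0 y)).mp (hμ's.trans h)
        exact this x (Finset.mem_univ x)
      simp [this, h]
    · rw [mul_div_assoc, div_self h, mul_one]
  have hcol2 : ∀ y, ∑ x, π2 x y = ν' y := by
    intro y
    simp only [π2]
    rw [← Finset.sum_div, ← Finset.sum_mul, hμ's]
    rcases eq_or_ne s 0 with h | h
    · have : ν' y = 0 := by
        have := (Finset.sum_eq_zero_iff_of_nonneg
          (fun x _ => hν'0 x)).mp (hν's.trans h)
        exact this y (Finset.mem_univ y)
      simp [this, h]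
    · rw [mul_comm, mul_div_assoc, div_self h, mul_one]
  -- cost bound
  have hdistcell : ∀ x y, γ x = γ y → dist x y ≤ D (γ x) := by
    intro x y h
    refine Metric.dist_le_diam_of_mem ((Γ (γ x)).finite_toSet.isBounded)
      (hγ x) ?_
    rw [h]; exact hγ y
  have hdistX : ∀ x y : X, dist x y ≤ Dx := fun x y =>
    Metric.dist_le_diam_of_mem Set.finite_univ.isBounded trivial trivial
  have hcost1 : ∑ x, ∑ y, π1 x y * dist x y ≤ ∑ i, a i * D i := by
    have step1 : ∀ x, ∑ y, π1 x y * dist x y ≤ μ x * r (γ x) * D (γ x) := by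
      intro x
      have : ∑ y, π1 x y * dist x y ≤ ∑ y, π1 x y * D (γ x) := by
        refine Finset.sum_le_sum fun y _ => ?_
        by_cases h : γ x = γ y
        · exact mul_le_mul_of_nonneg_left (hdistcell x y h) (hπ1nn x y)
        · simp [π1, h]
      refine this.trans ?_
      rw [← Finset.sum_mul, hrow1]
    calc ∑ x, ∑ y, π1 x y * dist x y
        ≤ ∑ x, μ x * r (γ x) * D (γ x) := Finset.sum_le_sum fun x _ => step1 x
      _ = ∑ i, a i * (r i * D i) := by
          rw [← hpart (fun x => μ x * r (γ x) * D (γ x))]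
          refine Finset.sum_congr rfl fun i _ => ?_
          rw [← hcell i (fun j => r j * D j)]
          exact Finset.sum_congr rfl fun x _ => by ring
      _ = ∑ i, m i * D i := by
          refine Finset.sum_congr rfl fun i _ => ?_
          rw [← mul_assoc, har]
      _ ≤ ∑ i, a i * D i :=
          Finset.sum_le_sum fun i _ => mul_le_mul_of_nonneg_right (hma i) (hD0 i)
  have hπ2sum : ∑ x, ∑ y, π2 x y = s := by
    rw [show ∑ x, ∑ y, π2 x y = ∑ x, μ' x by
      exact Finset.sum_congr rfl fun x _ => hrow2 x, hμ's]
  have hcost2 : ∑ x, ∑ y, π2 x y * dist x y ≤ Dx * s := by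
    have : ∑ x, ∑ y, π2 x y * dist x y ≤ ∑ x, ∑ y, π2 x y * Dx := by
      refine Finset.sum_le_sum fun x _ => Finset.sum_le_sum fun y _ => ?_
      exact mul_le_mul_of_nonneg_left (hdistX x y) (hπ2nn x y)
    refine this.trans ?_
    have : ∑ x, ∑ y, π2 x y * Dx = (∑ x, ∑ y, π2 x y) * Dx := by
      rw [Finset.sum_mul]
      exact Finset.sum_congr rfl fun x _ => by rw [Finset.sum_mul]
    rw [this, hπ2sum, mul_comm]
  have hstv : s = (1 / 2) * ∑ i, |a i - b i| := by
    have habs : ∀ i, |a i - b i| = a i + b i - 2 * m i := by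
      intro i
      rcases le_total (a i) (b i) with h | h
      · rw [abs_of_nonpos (by linarith), show m i = a i from min_eq_left h]; ring
      · rw [abs_of_nonneg (by linarith), show m i = b i from min_eq_right h]; ring
    have h2 : ∑ i, |a i - b i| = 2 * s := by
      rw [Finset.sum_congr rfl fun i _ => habs i]
      have : ∑ i, (a i + b i - 2 * m i) = ∑ i, ((a i - m i) + (b i - m i)) :=
        Finset.sum_congr rfl fun i _ => by ring
      rw [this, Finset.sum_add_distrib]
      have hsb : ∑ i, (b i - m i) = s := by
        simp only [s]
        rw [Finset.sum_sub_distrib, Finset.sum_sub_distrib, hA, hB]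
      rw [hsb]
      simp only [s]; ring
    rw [h2]; ring
  -- assemble
  have hmem : (∑ q : X × X, π q * dist q.1 q.2) ∈ {c : ℝ | ∃ π : X × X → ℝ,
      (∀ q, 0 ≤ π q) ∧
      (∀ x, ∑ y, π (x, y) = μ x) ∧
      (∀ y, ∑ x, π (x, y) = ν y) ∧
      c = ∑ q : X × X, π q * dist q.1 q.2} := by
    refine ⟨π, fun q => add_nonneg (hπ1nn q.1 q.2) (hπ2nn q.1 q.2), ?_, ?_, rfl⟩
    · intro x
      simp only [π]
      rw [Finset.sum_add_distrib, hrow1, hrow2]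
      simp only [μ']; ring
    · intro y
      simp only [π]
      rw [Finset.sum_add_distrib, hcol1, hcol2]
      simp only [ν']; ring
  have hbdd : BddBelow {c : ℝ | ∃ π : X × X → ℝ,
      (∀ q, 0 ≤ π q) ∧
      (∀ x, ∑ y, π (x, y) = μ x) ∧
      (∀ y, ∑ x, π (x, y) = ν y) ∧
      c = ∑ q : X × X, π q * dist q.1 q.2} := by
    refine ⟨0, fun c hc => ?_⟩
    obtain ⟨p, hp0, -, -, hceq⟩ := hc
    rw [hceq]
    exact Finset.sum_nonneg fun q _ => mul_nonneg (hp0 q) dist_nonneg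
  refine (csInf_le hbdd hmem).trans ?_
  have hsplit : ∑ q : X × X, π q * dist q.1 q.2
      = (∑ x, ∑ y, π1 x y * dist x y) + ∑ x, ∑ y, π2 x y * dist x y := by
    rw [Fintype.sum_prod_type]
    rw [← Finset.sum_add_distrib]
    refine Finset.sum_congr rfl fun x _ => ?_
    rw [← Finset.sum_add_distrib]
    exact Finset.sum_congr rfl fun y _ => by simp only [π]; ring
  rw [hsplit]
  have : (∑ x, ∑ y, π1 x y * dist x y) + ∑ x, ∑ y, π2 x y * dist x y
      ≤ (∑ i, a i * D i) + Dx * s := add_le_add hcost1 hcost2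
  refine this.trans ?_
  rw [hstv]
  exact le_of_eq (by ring)
end

section
/- Let (X, dist) be a finite metric space and let (Γ^(1), …, Γ^(t)) be a hierarchical clustering of X (each Γ^(i+1) is a refinement of the partition Γ^(i)) with diameter bounds δ_1, …, δ_t, i.e. every cell of Γ^(i) has diameter at most δ_i; set δ_0 = diam(X). Then for every pair of probability distributions μ, ν on X: EMD_dist(μ, ν) ≤ Σ_{i=1}^t δ_{i−1} · d_TV(μ_{Γ^(i)}, ν_{Γ^(i)}) + E_{x∼μ}[diam(Γ^(t)_{γ^(t)(x)})], where γ^(t)(x) is the index of the cell of Γ^(t) containing x. -/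
open scoped BigOperators

namespace EMDAux

variable {X : Type*} [Fintype X]

/-- mass of the fiber `g = v` under `f`. -/
def cellMass (g : X → ℕ) (f : X → ℝ) (v : ℕ) : ℝ :=
  ∑ x ∈ Finset.univ.filter (fun x => g x = v), f x

lemma cellMass_nonneg {g : X → ℕ} {f : X → ℝ} (hf : ∀ x, 0 ≤ f x) (v : ℕ) :
    0 ≤ cellMass g f v :=
  Finset.sum_nonneg fun x _ => hf x

lemma eq_zero_of_cellMass {g : X → ℕ} {f : X → ℝ} (hf : ∀ x, 0 ≤ f x) {x : X}
    (hx : cellMass g f (g x) = 0) : f x = 0 :=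
  (Finset.sum_eq_zero_iff_of_nonneg (fun y _ => hf y)).1 hx x (by simp)

/-- the residual of `f` after matching with `h` inside each cell of `g`. -/
noncomputable def res (g : X → ℕ) (f h : X → ℝ) (x : X) : ℝ :=
  f x * max (cellMass g f (g x) - cellMass g h (g x)) 0 / cellMass g f (g x)

lemma res_nonneg {g : X → ℕ} {f : X → ℝ} (hf : ∀ x, 0 ≤ f x) (h : X → ℝ) (x : X) :
    0 ≤ res g f h x :=
  div_nonneg (mul_nonneg (hf x) (le_max_right _ 0)) (cellMass_nonneg hf _)

lemma res_le_self {g : X → ℕ} {f h : X → ℝ} (hf : ∀ x, 0 ≤ f x) (hh : ∀ x, 0 ≤ h x)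
    (x : X) : res g f h x ≤ f x := by
  unfold res
  rcases eq_or_lt_of_le (cellMass_nonneg hf (g x)) with hM | hM
  · rw [← hM, div_zero]; exact hf x
  · rw [div_le_iff₀ hM]
    have hn := cellMass_nonneg (g := g) hh (g x)
    have h1 : max (cellMass g f (g x) - cellMass g h (g x)) 0 ≤ cellMass g f (g x) := by
      rcases max_cases (cellMass g f (g x) - cellMass g h (g x)) 0 with ⟨h2, _⟩ | ⟨h2, _⟩ <;>
        rw [h2] <;> linarith
    exact mul_le_mul_of_nonneg_left h1 (hf x)

lemma sub_res_nonneg {g : X → ℕ} {f h : X → ℝ} (hf : ∀ x, 0 ≤ f x) (hh : ∀ x, 0 ≤ h x)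
    (x : X) : 0 ≤ f x - res g f h x :=
  sub_nonneg.2 (res_le_self hf hh x)

lemma cellMass_res {g : X → ℕ} {f h : X → ℝ} (hf : ∀ x, 0 ≤ f x) (hh : ∀ x, 0 ≤ h x)
    (v : ℕ) :
    cellMass g (res g f h) v = max (cellMass g f v - cellMass g h v) 0 := by
  have hcongr : cellMass g (res g f h) v
      = ∑ x ∈ Finset.univ.filter (fun x => g x = v),
          f x * (max (cellMass g f v - cellMass g h v) 0 / cellMass g f v) := by
    refine Finset.sum_congr rfl fun x hx => ?_
    rw [Finset.mem_filter] at hx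
    rw [res, hx.2, mul_div_assoc]
  rw [hcongr, ← Finset.sum_mul]
  have hid : (∑ x ∈ Finset.univ.filter (fun x => g x = v), f x) = cellMass g f v := rfl
  rw [hid]
  rcases eq_or_ne (cellMass g f v) 0 with h0 | h0
  · rw [h0, zero_mul, zero_sub,
      max_eq_right (by linarith [cellMass_nonneg (g := g) hh v] : -cellMass g h v ≤ 0)]
  · rw [mul_div_cancel₀ _ h0]

lemma cellMass_sub {g : X → ℕ} (f f' : X → ℝ) (v : ℕ) :
    cellMass g (fun x => f x - f' x) v = cellMass g f v - cellMass g f' v :=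
  Finset.sum_sub_distrib f f'

lemma cellMass_sub_res {g : X → ℕ} {f h : X → ℝ} (hf : ∀ x, 0 ≤ f x) (hh : ∀ x, 0 ≤ h x)
    (v : ℕ) :
    cellMass g (fun x => f x - res g f h x) v = min (cellMass g f v) (cellMass g h v) := by
  rw [cellMass_sub, cellMass_res hf hh]
  rcases le_total (cellMass g f v) (cellMass g h v) with h1 | h1
  · rw [max_eq_right (by linarith), min_eq_left h1, sub_zero]
  · rw [max_eq_left (by linarith), min_eq_right h1]; ring

lemma sub_res_eq_zero_of_min {g : X → ℕ} {f h : X → ℝ} (hf : ∀ x, 0 ≤ f x)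
    (hh : ∀ x, 0 ≤ h x) {x : X}
    (hm : min (cellMass g f (g x)) (cellMass g h (g x)) = 0) :
    f x - res g f h x = 0 := by
  rcases le_total (cellMass g f (g x)) (cellMass g h (g x)) with h1 | h1
  · rw [min_eq_left h1] at hm
    have hfx := eq_zero_of_cellMass hf hm
    have h2 := res_le_self (g := g) hf hh x
    have h3 := res_nonneg (g := g) hf h x
    linarith
  · rw [min_eq_right h1] at hm
    rcases eq_or_ne (cellMass g f (g x)) 0 with h0 | h0
    · have hfx := eq_zero_of_cellMass hf h0
      have h2 := res_le_self (g := g) hf hh x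
      have h3 := res_nonneg (g := g) hf h x
      linarith
    · have : res g f h x = f x := by
        unfold res
        rw [hm, sub_zero, max_eq_left (cellMass_nonneg hf (g x)),
          mul_div_cancel_right₀ _ h0]
      rw [this, sub_self]

lemma sum_eq_sum_cellMass (g : X → ℕ) (f : X → ℝ) :
    ∑ x, f x = ∑ v ∈ Finset.univ.image g, cellMass g f v :=
  (Finset.sum_fiberwise_of_maps_to
    (fun x _ => Finset.mem_image_of_mem g (Finset.mem_univ x)) f).symm

lemma cellMass_fiber {g₀ g : X → ℕ} (hcoarse : ∀ x y, g₀ x = g₀ y → g x = g y)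
    (f : X → ℝ) (v : ℕ) :
    cellMass g f v
      = ∑ w ∈ (Finset.univ.filter (fun x => g x = v)).image g₀, cellMass g₀ f w := by
  classical
  unfold cellMass
  rw [← Finset.sum_fiberwise_of_maps_to
    (fun x hx => Finset.mem_image_of_mem g₀ hx) f]
  refine Finset.sum_congr rfl fun w hw => ?_
  refine Finset.sum_congr ?_ fun _ _ => rfl
  ext x
  simp only [Finset.mem_filter, Finset.mem_univ, true_and]
  constructor
  · rintro ⟨_, h2⟩; exact h2
  · intro h2
    obtain ⟨x₀, hx₀, hgx₀⟩ := Finset.mem_image.1 hw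
    rw [Finset.mem_filter] at hx₀
    exact ⟨by rw [hcoarse x x₀ (h2.trans hgx₀.symm)]; exact hx₀.2, h2⟩

/-- key invariance: matching within cells of a finer partition does not change the
difference of the masses of cells of a coarser partition. -/
lemma cellMass_res_sub_res {g₀ g : X → ℕ} (hcoarse : ∀ x y, g₀ x = g₀ y → g x = g y)
    {f h : X → ℝ} (hf : ∀ x, 0 ≤ f x) (hh : ∀ x, 0 ≤ h x) (v : ℕ) :
    cellMass g (res g₀ f h) v - cellMass g (res g₀ h f) v
      = cellMass g f v - cellMass g h v := by
  rw [cellMass_fiber hcoarse (res g₀ f h), cellMass_fiber hcoarse (res g₀ h f),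
    cellMass_fiber hcoarse f, cellMass_fiber hcoarse h,
    ← Finset.sum_sub_distrib, ← Finset.sum_sub_distrib]
  refine Finset.sum_congr rfl fun w _ => ?_
  rw [cellMass_res hf hh, cellMass_res hh hf]
  rcases le_total (cellMass g₀ f w) (cellMass g₀ h w) with h1 | h1
  · rw [max_eq_right (by linarith), max_eq_left (by linarith)]; ring
  · rw [max_eq_left (by linarith), max_eq_right (by linarith)]; ring

/-- iterated residual pair, matching from the finest level upwards. -/
noncomputable def iterPair (γ : ℕ → X → ℕ) (t : ℕ) (μ ν : X → ℝ) : ℕ → (X → ℝ) × (X → ℝ)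
  | 0 => (μ, ν)
  | (k+1) => (res (γ (t-1-k)) (iterPair γ t μ ν k).1 (iterPair γ t μ ν k).2,
              res (γ (t-1-k)) (iterPair γ t μ ν k).2 (iterPair γ t μ ν k).1)

/-- within-cell coupling of the matched mass at one level. -/
noncomputable def fineC (g : X → ℕ) (f h : X → ℝ) (q : X × X) : ℝ :=
  if g q.1 = g q.2 then
    (f q.1 - res g f h q.1) * (h q.2 - res g h f q.2) /
      min (cellMass g f (g q.1)) (cellMass g h (g q.1))
  else 0

lemma fineC_nonneg {g : X → ℕ} {f h : X → ℝ} (hf : ∀ x, 0 ≤ f x) (hh : ∀ x, 0 ≤ h x)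
    (q : X × X) : 0 ≤ fineC g f h q := by
  unfold fineC
  split
  · exact div_nonneg (mul_nonneg (sub_res_nonneg hf hh _) (sub_res_nonneg hh hf _))
      (le_min (cellMass_nonneg hf _) (cellMass_nonneg hh _))
  · exact le_refl 0

lemma fineC_marg_fst {g : X → ℕ} {f h : X → ℝ} (hf : ∀ x, 0 ≤ f x) (hh : ∀ x, 0 ≤ h x)
    (x : X) : ∑ y, fineC g f h (x, y) = f x - res g f h x := by
  classical
  have h1 : ∀ y, fineC g f h (x, y)
      = if g y = g x then (f x - res g f h x) *
          ((h y - res g h f y) / min (cellMass g f (g x)) (cellMass g h (g x))) else 0 := by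
    intro y
    unfold fineC
    by_cases hxy : g x = g y
    · rw [if_pos hxy, if_pos hxy.symm, mul_div_assoc]
    · rw [if_neg hxy, if_neg (fun hc => hxy hc.symm)]
  rw [Finset.sum_congr rfl (fun y _ => h1 y), ← Finset.sum_filter, ← Finset.mul_sum,
    ← Finset.sum_div]
  have h2 : (∑ y ∈ Finset.univ.filter (fun y => g y = g x), (h y - res g h f y))
      = cellMass g (fun y => h y - res g h f y) (g x) := rfl
  rw [h2, cellMass_sub_res hh hf, min_comm (cellMass g h (g x)) (cellMass g f (g x))]
  rcases eq_or_ne (min (cellMass g f (g x)) (cellMass g h (g x))) 0 with h0 | h0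
  · rw [h0, div_zero, mul_zero]
    exact (sub_res_eq_zero_of_min hf hh h0).symm
  · rw [div_self h0, mul_one]

lemma fineC_marg_snd {g : X → ℕ} {f h : X → ℝ} (hf : ∀ x, 0 ≤ f x) (hh : ∀ x, 0 ≤ h x)
    (y : X) : ∑ x, fineC g f h (x, y) = h y - res g h f y := by
  classical
  have h1 : ∀ x, fineC g f h (x, y)
      = if g x = g y then ((f x - res g f h x) / min (cellMass g f (g y)) (cellMass g h (g y))) *
          (h y - res g h f y) else 0 := by
    intro x
    unfold fineC
    by_cases hxy : g x = g y
    · rw [if_pos hxy, if_pos hxy]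
      rw [hxy]
      ring
    · rw [if_neg hxy, if_neg hxy]
  rw [Finset.sum_congr rfl (fun x _ => h1 x), ← Finset.sum_filter, ← Finset.sum_mul,
    ← Finset.sum_div]
  have h2 : (∑ x ∈ Finset.univ.filter (fun x => g x = g y), (f x - res g f h x))
      = cellMass g (fun x => f x - res g f h x) (g y) := rfl
  rw [h2, cellMass_sub_res hf hh]
  rcases eq_or_ne (min (cellMass g f (g y)) (cellMass g h (g y))) 0 with h0 | h0
  · rw [h0, div_zero, zero_mul]
    exact (sub_res_eq_zero_of_min hh hf (by rw [min_comm] at h0; exact h0)).symm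
  · rw [div_self h0, one_mul]

lemma fineC_cost [MetricSpace X] {g : X → ℕ} {f h : X → ℝ}
    (hf : ∀ x, 0 ≤ f x) (hh : ∀ x, 0 ≤ h x) :
    ∑ q : X × X, fineC g f h q * dist q.1 q.2
      ≤ ∑ x, f x * Metric.diam {y | g y = g x} := by
  rw [Fintype.sum_prod_type]
  refine Finset.sum_le_sum fun x _ => ?_
  have hd0 : 0 ≤ Metric.diam {y | g y = g x} := Metric.diam_nonneg
  calc ∑ y, fineC g f h (x, y) * dist x y
      ≤ ∑ y, fineC g f h (x, y) * Metric.diam {z | g z = g x} := by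
        refine Finset.sum_le_sum fun y _ => ?_
        by_cases hxy : g x = g y
        · refine mul_le_mul_of_nonneg_left ?_ (fineC_nonneg hf hh _)
          exact Metric.dist_le_diam_of_mem ((Set.toFinite _).isBounded) rfl hxy.symm
        · have : fineC g f h (x, y) = 0 := by unfold fineC; rw [if_neg hxy]
          rw [this, zero_mul, zero_mul]
    _ = (f x - res g f h x) * Metric.diam {z | g z = g x} := by
        rw [← Finset.sum_mul, fineC_marg_fst hf hh]
    _ ≤ f x * Metric.diam {z | g z = g x} :=
        mul_le_mul_of_nonneg_right (by linarith [res_nonneg (g := g) hf h x])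
          hd0

/-- global product coupling of the final residuals. -/
noncomputable def topC (f h : X → ℝ) (q : X × X) : ℝ :=
  f q.1 * h q.2 / (∑ z, f z)

lemma topC_nonneg {f h : X → ℝ} (hf : ∀ x, 0 ≤ f x) (hh : ∀ x, 0 ≤ h x)
    (q : X × X) : 0 ≤ topC f h q :=
  div_nonneg (mul_nonneg (hf _) (hh _)) (Finset.sum_nonneg fun z _ => hf z)

lemma topC_marg_fst {f h : X → ℝ} (hf : ∀ x, 0 ≤ f x)
    (hsum : ∑ z, h z = ∑ z, f z) (x : X) : ∑ y, topC f h (x, y) = f x := by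
  have h1 : ∀ y, topC f h (x, y) = f x * h y / (∑ z, f z) := fun y => rfl
  rw [Finset.sum_congr rfl (fun y _ => h1 y), ← Finset.sum_div, ← Finset.mul_sum, hsum]
  rcases eq_or_ne (∑ z, f z) 0 with h0 | h0
  · rw [h0, mul_zero, zero_div]
    exact ((Finset.sum_eq_zero_iff_of_nonneg (fun y _ => hf y)).1 h0 x (Finset.mem_univ x)).symm
  · rw [mul_div_assoc, div_self h0, mul_one]

lemma topC_marg_snd {f h : X → ℝ} (hh : ∀ x, 0 ≤ h x)
    (hsum : ∑ z, h z = ∑ z, f z) (y : X) : ∑ x, topC f h (x, y) = h y := by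
  have h1 : ∀ x, topC f h (x, y) = f x * h y / (∑ z, f z) := fun x => rfl
  rw [Finset.sum_congr rfl (fun x _ => h1 x), ← Finset.sum_div, ← Finset.sum_mul]
  rcases eq_or_ne (∑ z, f z) 0 with h0 | h0
  · rw [h0, zero_mul, zero_div]
    have : ∑ z, h z = 0 := by rw [hsum, h0]
    exact ((Finset.sum_eq_zero_iff_of_nonneg (fun z _ => hh z)).1 this y (Finset.mem_univ y)).symm
  · rw [mul_comm, mul_div_assoc, div_self h0, mul_one]

lemma topC_cost [MetricSpace X] {f h : X → ℝ} (hf : ∀ x, 0 ≤ f x) (hh : ∀ x, 0 ≤ h x)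
    (hsum : ∑ z, h z = ∑ z, f z) :
    ∑ q : X × X, topC f h q * dist q.1 q.2
      ≤ Metric.diam (Set.univ : Set X) * ∑ z, f z := by
  calc ∑ q : X × X, topC f h q * dist q.1 q.2
      ≤ ∑ q : X × X, topC f h q * Metric.diam (Set.univ : Set X) := by
        refine Finset.sum_le_sum fun q _ => ?_
        refine mul_le_mul_of_nonneg_left ?_ (topC_nonneg hf hh q)
        exact Metric.dist_le_diam_of_mem (Set.finite_univ.isBounded)
          (Set.mem_univ _) (Set.mem_univ _)
    _ = (∑ q : X × X, topC f h q) * Metric.diam (Set.univ : Set X) := by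
        rw [← Finset.sum_mul]
    _ = (∑ z, f z) * Metric.diam (Set.univ : Set X) := by
        rw [Fintype.sum_prod_type]
        congr 1
        rw [Finset.sum_congr rfl (fun x _ => topC_marg_fst hf hsum x)]
    _ = Metric.diam (Set.univ : Set X) * ∑ z, f z := mul_comm _ _

end EMDAux

open EMDAux in
/-- Let `(X, dist)` be a finite metric space and let
`Γ^(1), …, Γ^(t)` (here `γ 0, …, γ (t-1)`, with the cell of `x` at level `i` being
the fiber `{y | γ i y = γ i x}`) be a hierarchical clustering of `X`, i.e. each level
refines the previous one, with diameter bounds `δ 1, …, δ t` (every cell of level `i`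
has diameter at most `δ (i+1)`), and `δ 0 = diam X`.  Then for all probability
distributions `μ, ν` on `X`,
`EMD(μ,ν) ≤ Σ_{i=0}^{t-1} δ i · d_TV(μ_{γ i}, ν_{γ i}) + E_{x∼μ}[diam(cell_{t-1}(x))]`. -/
theorem emd_le_hierarchical_clustering_bound
    {X : Type*} [MetricSpace X] [Fintype X]
    (μ ν : X → ℝ)
    (hμ0 : ∀ x, 0 ≤ μ x) (hμ1 : ∑ x, μ x = 1)
    (hν0 : ∀ x, 0 ≤ ν x) (hν1 : ∑ x, ν x = 1)
    (t : ℕ) (ht : 1 ≤ t)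
    (γ : ℕ → X → ℕ) (δ : ℕ → ℝ)
    (hδ0 : δ 0 = Metric.diam (Set.univ : Set X))
    (hrefine : ∀ i, i + 1 < t → ∀ x y : X, γ (i + 1) x = γ (i + 1) y → γ i x = γ i y)
    (hdiam : ∀ i < t, ∀ x : X, Metric.diam {y | γ i y = γ i x} ≤ δ (i + 1)) :
    sInf {c : ℝ | ∃ π : X × X → ℝ,
        (∀ q, 0 ≤ π q) ∧
        (∀ x, ∑ y, π (x, y) = μ x) ∧
        (∀ y, ∑ x, π (x, y) = ν y) ∧
        c = ∑ q : X × X, π q * dist q.1 q.2} ≤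
      (∑ i ∈ Finset.range t, δ i *
          ((1 / 2) * ∑ v ∈ Finset.univ.image (γ i),
            |(∑ x ∈ Finset.univ.filter (fun x => γ i x = v), μ x) -
              ∑ x ∈ Finset.univ.filter (fun x => γ i x = v), ν x|)) +
        ∑ x : X, μ x * Metric.diam {y | γ (t - 1) y = γ (t - 1) x} := by
  classical
  set A : ℕ → X → ℝ := fun k => (iterPair γ t μ ν k).1 with hA
  set B : ℕ → X → ℝ := fun k => (iterPair γ t μ ν k).2 with hB
  have hAB0 : ∀ k, (∀ x, 0 ≤ A k x) ∧ (∀ x, 0 ≤ B k x) := by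
    intro k
    induction k with
    | zero => exact ⟨hμ0, hν0⟩
    | succ k ih =>
        exact ⟨res_nonneg ih.1 _, res_nonneg ih.2 _⟩
  have hA0 : ∀ k x, 0 ≤ A k x := fun k => (hAB0 k).1
  have hB0 : ∀ k x, 0 ≤ B k x := fun k => (hAB0 k).2
  have hAsucc : ∀ k, A (k+1) = res (γ (t-1-k)) (A k) (B k) := fun k => rfl
  have hBsucc : ∀ k, B (k+1) = res (γ (t-1-k)) (B k) (A k) := fun k => rfl
  -- the difference of cell masses at any coarser level is preserved
  have Ddiff : ∀ k, k ≤ t → ∀ g : X → ℕ,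
      (k = 0 ∨ ∀ x y : X, γ (t - k) x = γ (t - k) y → g x = g y) →
      ∀ v, cellMass g (A k) v - cellMass g (B k) v = cellMass g μ v - cellMass g ν v := by
    intro k
    induction k with
    | zero => intro _ g _ v; rfl
    | succ k ih =>
        intro hkt g hg v
        rcases hg with hg | hg
        · exact absurd hg (Nat.succ_ne_zero k)
        have hg₀ : ∀ x y : X, γ (t-1-k) x = γ (t-1-k) y → g x = g y := by
          have : t - 1 - k = t - (k+1) := by omega
          rw [this]; exact hg
        rw [hAsucc, hBsucc, cellMass_res_sub_res hg₀ (hA0 k) (hB0 k)]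
        refine ih (by omega) g ?_ v
        rcases Nat.eq_zero_or_pos k with hk0 | hk0
        · exact Or.inl hk0
        · refine Or.inr fun x y hxy => ?_
          refine hg₀ x y ?_
          have h1 : t - 1 - k + 1 = t - k := by omega
          have := hrefine (t - 1 - k) (by omega) x y (by rw [h1]; exact hxy)
          exact this
  -- cell masses of the iterated residuals at their own level
  have hinv : ∀ k, 1 ≤ k → k ≤ t → ∀ v,
      cellMass (γ (t - k)) (A k) v
        = max (cellMass (γ (t - k)) μ v - cellMass (γ (t - k)) ν v) 0 := by
    intro k hk1 hkt v
    obtain ⟨k', rfl⟩ : ∃ k', k = k' + 1 := ⟨k - 1, by omega⟩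
    have ht1 : t - 1 - k' = t - (k' + 1) := by omega
    rw [hAsucc, ht1, cellMass_res (hA0 k') (hB0 k'), Ddiff k' (by omega) (γ (t - (k'+1))) ?_ v]
    rcases Nat.eq_zero_or_pos k' with hk0 | hk0
    · exact Or.inl hk0
    · refine Or.inr fun x y hxy => ?_
      have h1 : t - (k' + 1) + 1 = t - k' := by omega
      exact hrefine (t - (k'+1)) (by omega) x y (by rw [h1]; exact hxy)
  -- total masses of the two residuals agree
  have htotal : ∀ k, k ≤ t → ∑ x, A k x = ∑ x, B k x := by
    intro k hkt
    have h1 := Ddiff k hkt (fun _ => 0) (Or.inr fun _ _ _ => rfl) 0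
    have h2 : ∀ f : X → ℝ, cellMass (fun _ : X => (0:ℕ)) f 0 = ∑ x, f x := by
      intro f
      unfold cellMass
      rw [Finset.filter_true_of_mem (fun _ _ => rfl)]
    rw [h2, h2, h2, h2, hμ1, hν1] at h1
    linarith
  -- total mass of `A k` equals the TV distance at level `t - k`
  have hmass : ∀ k, 1 ≤ k → k ≤ t →
      ∑ x, A k x = (1/2) * ∑ v ∈ Finset.univ.image (γ (t - k)),
        |cellMass (γ (t-k)) μ v - cellMass (γ (t-k)) ν v| := by
    intro k hk1 hkt
    rw [sum_eq_sum_cellMass (γ (t-k)) (A k),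
      Finset.sum_congr rfl (fun v _ => hinv k hk1 hkt v)]
    have hzero : ∑ v ∈ Finset.univ.image (γ (t-k)),
        (cellMass (γ (t-k)) μ v - cellMass (γ (t-k)) ν v) = 0 := by
      rw [Finset.sum_sub_distrib, ← sum_eq_sum_cellMass, ← sum_eq_sum_cellMass, hμ1, hν1]
      ring
    have hptw : ∀ a : ℝ, max a 0 = (a + |a|) / 2 := by
      intro a
      rcases le_total 0 a with h | h
      · rw [max_eq_left h, abs_of_nonneg h]; ring
      · rw [max_eq_right h, abs_of_nonpos h]; ring
    rw [Finset.sum_congr rfl (fun v _ => hptw _), ← Finset.sum_div,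
      Finset.sum_add_distrib, hzero]
    ring
  -- the coupling
  set piC : X × X → ℝ := fun q =>
    (∑ k ∈ Finset.range t, fineC (γ (t-1-k)) (A k) (B k) q) + topC (A t) (B t) q with hpiC
  have htop_sum : ∑ z, B t z = ∑ z, A t z := (htotal t le_rfl).symm
  have hpi0 : ∀ q, 0 ≤ piC q := fun q =>
    add_nonneg (Finset.sum_nonneg fun k _ => fineC_nonneg (hA0 k) (hB0 k) q)
      (topC_nonneg (hA0 t) (hB0 t) q)
  have hA00 : ∀ x, A 0 x = μ x := fun x => rfl
  have hB00 : ∀ y, B 0 y = ν y := fun y => rfl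
  have hpi1 : ∀ x, ∑ y, piC (x, y) = μ x := by
    intro x
    have hstep1 : ∀ k, ∑ y, fineC (γ (t-1-k)) (A k) (B k) (x, y) = A k x - A (k+1) x := by
      intro k
      rw [fineC_marg_fst (hA0 k) (hB0 k), hAsucc k]
    calc ∑ y, piC (x, y)
        = (∑ y, ∑ k ∈ Finset.range t, fineC (γ (t-1-k)) (A k) (B k) (x, y))
            + ∑ y, topC (A t) (B t) (x, y) := by
          simp only [hpiC]
          rw [Finset.sum_add_distrib]
      _ = (∑ k ∈ Finset.range t, ∑ y, fineC (γ (t-1-k)) (A k) (B k) (x, y))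
            + ∑ y, topC (A t) (B t) (x, y) := by rw [Finset.sum_comm]
      _ = (A 0 x - A t x) + A t x := by
          rw [Finset.sum_congr rfl (fun k _ => hstep1 k),
            Finset.sum_range_sub' (fun k => A k x) t, topC_marg_fst (hA0 t) htop_sum]
      _ = μ x := by rw [← hA00 x]; ring
  have hpi2 : ∀ y, ∑ x, piC (x, y) = ν y := by
    intro y
    have hstep1 : ∀ k, ∑ x, fineC (γ (t-1-k)) (A k) (B k) (x, y) = B k y - B (k+1) y := by
      intro k
      rw [fineC_marg_snd (hA0 k) (hB0 k), hBsucc k]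
    calc ∑ x, piC (x, y)
        = (∑ x, ∑ k ∈ Finset.range t, fineC (γ (t-1-k)) (A k) (B k) (x, y))
            + ∑ x, topC (A t) (B t) (x, y) := by
          simp only [hpiC]
          rw [Finset.sum_add_distrib]
      _ = (∑ k ∈ Finset.range t, ∑ x, fineC (γ (t-1-k)) (A k) (B k) (x, y))
            + ∑ x, topC (A t) (B t) (x, y) := by rw [Finset.sum_comm]
      _ = (B 0 y - B t y) + B t y := by
          rw [Finset.sum_congr rfl (fun k _ => hstep1 k),
            Finset.sum_range_sub' (fun k => B k y) t, topC_marg_snd (hB0 t) htop_sum]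
      _ = ν y := by rw [← hB00 y]; ring
  -- the infimum is at most the cost of this coupling
  have hbdd : BddBelow {c : ℝ | ∃ π : X × X → ℝ,
      (∀ q, 0 ≤ π q) ∧
      (∀ x, ∑ y, π (x, y) = μ x) ∧
      (∀ y, ∑ x, π (x, y) = ν y) ∧
      c = ∑ q : X × X, π q * dist q.1 q.2} := by
    refine ⟨0, fun c hc => ?_⟩
    obtain ⟨π', h0, _, _, hceq⟩ := hc
    rw [hceq]
    exact Finset.sum_nonneg fun q _ => mul_nonneg (h0 q) dist_nonneg
  have hmem : (∑ q : X × X, piC q * dist q.1 q.2) ∈ {c : ℝ | ∃ π : X × X → ℝ,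
      (∀ q, 0 ≤ π q) ∧
      (∀ x, ∑ y, π (x, y) = μ x) ∧
      (∀ y, ∑ x, π (x, y) = ν y) ∧
      c = ∑ q : X × X, π q * dist q.1 q.2} := ⟨piC, hpi0, hpi1, hpi2, rfl⟩
  refine le_trans (csInf_le hbdd hmem) ?_
  -- now bound the cost of the coupling
  have hcost : ∑ q : X × X, piC q * dist q.1 q.2
      = (∑ k ∈ Finset.range t,
          ∑ q : X × X, fineC (γ (t-1-k)) (A k) (B k) q * dist q.1 q.2)
        + ∑ q : X × X, topC (A t) (B t) q * dist q.1 q.2 := by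
    simp only [hpiC, add_mul, Finset.sum_mul]
    rw [Finset.sum_add_distrib, Finset.sum_comm]
  have hfine0 : ∑ q : X × X, fineC (γ (t-1-0)) (A 0) (B 0) q * dist q.1 q.2
      ≤ ∑ x : X, μ x * Metric.diam {y | γ (t-1) y = γ (t-1) x} := by
    have h1 := fineC_cost (g := γ (t-1-0)) (hA0 0) (hB0 0)
    have h2 : ∀ x : X, A 0 x * Metric.diam {y | γ (t-1-0) y = γ (t-1-0) x}
        = μ x * Metric.diam {y | γ (t-1) y = γ (t-1) x} := by
      intro x
      rw [hA00 x, Nat.sub_zero]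
    rw [Finset.sum_congr rfl (fun x _ => h2 x)] at h1
    exact h1
  have hfine1 : ∀ k, k < t - 1 →
      ∑ q : X × X, fineC (γ (t-1-(k+1))) (A (k+1)) (B (k+1)) q * dist q.1 q.2
        ≤ δ (t-1-k) * ((1/2) * ∑ v ∈ Finset.univ.image (γ (t-1-k)),
            |cellMass (γ (t-1-k)) μ v - cellMass (γ (t-1-k)) ν v|) := by
    intro k hk
    have e2 : (t - 1 - (k+1)) + 1 = t - 1 - k := by omega
    have e3 : t - (k + 1) = t - 1 - k := by omega
    calc ∑ q : X × X, fineC (γ (t-1-(k+1))) (A (k+1)) (B (k+1)) q * dist q.1 q.2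
        ≤ ∑ x : X, A (k+1) x * Metric.diam {y | γ (t-1-(k+1)) y = γ (t-1-(k+1)) x} :=
          fineC_cost (hA0 (k+1)) (hB0 (k+1))
      _ ≤ ∑ x : X, A (k+1) x * δ (t-1-k) := by
          refine Finset.sum_le_sum fun x _ => ?_
          refine mul_le_mul_of_nonneg_left ?_ (hA0 (k+1) x)
          have h3 := hdiam (t-1-(k+1)) (by omega) x
          rw [e2] at h3
          exact h3
      _ = δ (t-1-k) * ∑ x, A (k+1) x := by rw [← Finset.sum_mul, mul_comm]
      _ = δ (t-1-k) * ((1/2) * ∑ v ∈ Finset.univ.image (γ (t-1-k)),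
            |cellMass (γ (t-1-k)) μ v - cellMass (γ (t-1-k)) ν v|) := by
          rw [hmass (k+1) (by omega) (by omega), e3]
  have htop : ∑ q : X × X, topC (A t) (B t) q * dist q.1 q.2
      ≤ δ 0 * ((1/2) * ∑ v ∈ Finset.univ.image (γ 0),
          |cellMass (γ 0) μ v - cellMass (γ 0) ν v|) := by
    calc ∑ q : X × X, topC (A t) (B t) q * dist q.1 q.2
        ≤ Metric.diam (Set.univ : Set X) * ∑ z, A t z :=
          topC_cost (hA0 t) (hB0 t) htop_sum
      _ = δ 0 * ((1/2) * ∑ v ∈ Finset.univ.image (γ 0),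
            |cellMass (γ 0) μ v - cellMass (γ 0) ν v|) := by
          rw [← hδ0, hmass t ht le_rfl, Nat.sub_self]
  -- fold the statement's TV sums into `cellMass` form
  have hRHSfold : (∑ i ∈ Finset.range t, δ i *
          ((1 / 2) * ∑ v ∈ Finset.univ.image (γ i),
            |(∑ x ∈ Finset.univ.filter (fun x => γ i x = v), μ x) -
              ∑ x ∈ Finset.univ.filter (fun x => γ i x = v), ν x|))
      = ∑ i ∈ Finset.range t, δ i * ((1/2) * ∑ v ∈ Finset.univ.image (γ i),
          |cellMass (γ i) μ v - cellMass (γ i) ν v|) := rfl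
  rw [hcost, hRHSfold]
  have hrange : Finset.range t = Finset.range ((t-1)+1) :=
    congrArg Finset.range (by omega)
  -- split both sums at index 0 (resp. reflect)
  have hsplitL : (∑ k ∈ Finset.range t,
        ∑ q : X × X, fineC (γ (t-1-k)) (A k) (B k) q * dist q.1 q.2)
      = (∑ k ∈ Finset.range (t-1),
          ∑ q : X × X, fineC (γ (t-1-(k+1))) (A (k+1)) (B (k+1)) q * dist q.1 q.2)
        + ∑ q : X × X, fineC (γ (t-1-0)) (A 0) (B 0) q * dist q.1 q.2 := by
    rw [hrange, Finset.sum_range_succ']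
  have hsplitR : (∑ i ∈ Finset.range t, δ i * ((1/2) * ∑ v ∈ Finset.univ.image (γ i),
          |cellMass (γ i) μ v - cellMass (γ i) ν v|))
      = (∑ k ∈ Finset.range (t-1), δ (k+1) * ((1/2) * ∑ v ∈ Finset.univ.image (γ (k+1)),
          |cellMass (γ (k+1)) μ v - cellMass (γ (k+1)) ν v|))
        + δ 0 * ((1/2) * ∑ v ∈ Finset.univ.image (γ 0),
          |cellMass (γ 0) μ v - cellMass (γ 0) ν v|) := by
    rw [hrange, Finset.sum_range_succ']
  have hmiddle : (∑ k ∈ Finset.range (t-1),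
        ∑ q : X × X, fineC (γ (t-1-(k+1))) (A (k+1)) (B (k+1)) q * dist q.1 q.2)
      ≤ ∑ k ∈ Finset.range (t-1), δ (k+1) * ((1/2) * ∑ v ∈ Finset.univ.image (γ (k+1)),
          |cellMass (γ (k+1)) μ v - cellMass (γ (k+1)) ν v|) := by
    have h1 : (∑ k ∈ Finset.range (t-1),
          ∑ q : X × X, fineC (γ (t-1-(k+1))) (A (k+1)) (B (k+1)) q * dist q.1 q.2)
        ≤ ∑ k ∈ Finset.range (t-1), δ (t-1-k) * ((1/2) * ∑ v ∈ Finset.univ.image (γ (t-1-k)),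
            |cellMass (γ (t-1-k)) μ v - cellMass (γ (t-1-k)) ν v|) :=
      Finset.sum_le_sum fun k hk => hfine1 k (Finset.mem_range.1 hk)
    have h2 : (∑ k ∈ Finset.range (t-1), δ (t-1-k) * ((1/2) * ∑ v ∈ Finset.univ.image (γ (t-1-k)),
            |cellMass (γ (t-1-k)) μ v - cellMass (γ (t-1-k)) ν v|))
        = ∑ k ∈ Finset.range (t-1), δ (k+1) * ((1/2) * ∑ v ∈ Finset.univ.image (γ (k+1)),
            |cellMass (γ (k+1)) μ v - cellMass (γ (k+1)) ν v|) := by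
      have h3 : ∀ k ∈ Finset.range (t-1),
          δ (t-1-k) * ((1/2) * ∑ v ∈ Finset.univ.image (γ (t-1-k)),
            |cellMass (γ (t-1-k)) μ v - cellMass (γ (t-1-k)) ν v|)
          = (fun j => δ (j+1) * ((1/2) * ∑ v ∈ Finset.univ.image (γ (j+1)),
              |cellMass (γ (j+1)) μ v - cellMass (γ (j+1)) ν v|)) ((t-1) - 1 - k) := by
        intro k hk
        rw [Finset.mem_range] at hk
        have e4 : (t-1) - 1 - k + 1 = t - 1 - k := by omega
        simp only [e4]
      rw [Finset.sum_congr rfl h3,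
        Finset.sum_range_reflect (fun j => δ (j+1) * ((1/2) * ∑ v ∈ Finset.univ.image (γ (j+1)),
          |cellMass (γ (j+1)) μ v - cellMass (γ (j+1)) ν v|)) (t-1)]
    rw [h2] at h1
    exact h1
  rw [hsplitL, hsplitR]
  linarith [hmiddle, hfine0, htop]
end

section
/- Let X ⊂ ℝ^d be a bounded set, let p ≥ 1, and equip X with the normalized ℓ_p metric dist(x,y) = ‖x−y‖_p / d^{1/p}. Let μ and ν be Borel probability measures on X, and let (Γ^(1), …, Γ^(t)) be a hierarchical clustering of X (each Γ^(i+1) refining Γ^(i)) whose cells are all μ- and ν-measurable, with diameter bounds δ_1, …, δ_t (every cell of Γ^(i) has diameter at most δ_i); set δ_0 = diam(X). Then EMD_dist(μ, ν) ≤ Σ_{i=1}^t δ_{i−1} · d_TV(μ_{Γ^(i)}, ν_{Γ^(i)}) + E_{x∼μ}[diam(Γ^(t)_{γ^(t)(x)})], where γ^(t)(x) is the index of the cell of Γ^(t) containing x. -/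
open scoped BigOperators
open MeasureTheory

/-- The normalized `ℓ_p` distance on `ℝ^d`: `dist(x,y) = ‖x−y‖_p / d^{1/p}`. -/
noncomputable def lpNormalizedDist (d : ℕ) (p : ℝ) (x y : Fin d → ℝ) : ℝ :=
  (∑ i, |x i - y i| ^ p) ^ (1 / p) / (d : ℝ) ^ (1 / p)

/-- Diameter of a set with respect to the normalized `ℓ_p` distance. -/
noncomputable def lpNormalizedDiam (d : ℕ) (p : ℝ) (S : Set (Fin d → ℝ)) : ℝ :=
  sSup {r : ℝ | ∃ x ∈ S, ∃ y ∈ S, r = lpNormalizedDist d p x y}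

open scoped Classical ENNReal
open MeasureTheory Set

lemma lpDist_nonneg (d : ℕ) (p : ℝ) (x y : Fin d → ℝ) : 0 ≤ lpNormalizedDist d p x y :=
  div_nonneg (Real.rpow_nonneg (Finset.sum_nonneg fun i _ => Real.rpow_nonneg (abs_nonneg _) _) _)
    (Real.rpow_nonneg (Nat.cast_nonneg _) _)

lemma lpDist_le {d : ℕ} {p : ℝ} (hd : 1 ≤ d) (hp : 1 ≤ p) {x y : Fin d → ℝ} {Cb : ℝ}
    (hC : 0 ≤ Cb) (h : ∀ i, |x i - y i| ≤ Cb) : lpNormalizedDist d p x y ≤ Cb := by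
  have hp0 : 0 < p := lt_of_lt_of_le one_pos hp
  have hd0 : (0:ℝ) < d := by exact_mod_cast hd
  have hsum : (∑ i, |x i - y i| ^ p) ≤ (d:ℝ) * Cb ^ p := by
    calc (∑ i : Fin d, |x i - y i| ^ p) ≤ ∑ _i : Fin d, Cb ^ p :=
          Finset.sum_le_sum fun i _ => Real.rpow_le_rpow (abs_nonneg _) (h i) hp0.le
      _ = (d:ℝ) * Cb ^ p := by simp [mul_comm]
  have h1 : (∑ i, |x i - y i| ^ p) ^ (1/p) ≤ ((d:ℝ) * Cb ^ p) ^ (1/p) :=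
    Real.rpow_le_rpow (Finset.sum_nonneg fun i _ => Real.rpow_nonneg (abs_nonneg _) _) hsum
      (by positivity)
  have h2 : ((d:ℝ) * Cb ^ p) ^ (1/p) = (d:ℝ) ^ (1/p) * Cb := by
    rw [Real.mul_rpow hd0.le (Real.rpow_nonneg hC _), ← Real.rpow_mul hC,
      mul_one_div_cancel hp0.ne', Real.rpow_one]
  have hdp : (0:ℝ) < (d:ℝ) ^ (1/p) := Real.rpow_pos_of_pos hd0 _
  rw [lpNormalizedDist, div_le_iff₀ hdp]
  calc (∑ i, |x i - y i| ^ p) ^ (1/p) ≤ (d:ℝ) ^ (1/p) * Cb := h2 ▸ h1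
    _ = Cb * (d:ℝ) ^ (1/p) := mul_comm _ _

lemma lpDiam_bddAbove {d : ℕ} {p : ℝ} (hd : 1 ≤ d) (hp : 1 ≤ p) {X : Set (Fin d → ℝ)}
    (hX : Bornology.IsBounded X) {S : Set (Fin d → ℝ)} (hS : S ⊆ X) :
    BddAbove {r : ℝ | ∃ x ∈ S, ∃ y ∈ S, r = lpNormalizedDist d p x y} := by
  obtain ⟨C, hC⟩ := Metric.isBounded_iff.mp hX
  refine ⟨max C 0, ?_⟩
  rintro r ⟨x, hx, y, hy, rfl⟩
  refine lpDist_le hd hp (le_max_right _ _) fun i => ?_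
  calc |x i - y i| = dist (x i) (y i) := (Real.dist_eq _ _).symm
    _ ≤ dist x y := dist_le_pi_dist x y i
    _ ≤ C := hC (hS hx) (hS hy)
    _ ≤ max C 0 := le_max_left _ _

lemma lpDist_le_diam {d : ℕ} {p : ℝ} (hd : 1 ≤ d) (hp : 1 ≤ p) {X S : Set (Fin d → ℝ)}
    (hX : Bornology.IsBounded X) (hS : S ⊆ X) {x y : Fin d → ℝ} (hx : x ∈ S) (hy : y ∈ S) :
    lpNormalizedDist d p x y ≤ lpNormalizedDiam d p S :=
  le_csSup (lpDiam_bddAbove hd hp hX hS) ⟨x, hx, y, hy, rfl⟩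

lemma lpDiam_nonneg (d : ℕ) (p : ℝ) (S : Set (Fin d → ℝ)) : 0 ≤ lpNormalizedDiam d p S :=
  Real.sSup_nonneg (by rintro r ⟨x, hx, y, hy, rfl⟩; exact lpDist_nonneg _ _ _ _)

lemma lpDist_measurable (d : ℕ) (p : ℝ) :
    Measurable (fun q : (Fin d → ℝ) × (Fin d → ℝ) => lpNormalizedDist d p q.1 q.2) := by
  unfold lpNormalizedDist
  fun_prop

lemma integrable_and_integral_le {α : Type*} [MeasurableSpace α] {f : α → ℝ}
    (hf : Measurable f) (hf0 : ∀ q, 0 ≤ f q) (ρ : Measure α) [IsFiniteMeasure ρ]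
    {A : Set α} (hA : ρ Aᶜ = 0) {r : ℝ} (hb : ∀ q ∈ A, f q ≤ r) :
    Integrable f ρ ∧ ∫ q, f q ∂ρ ≤ r * (ρ Set.univ).toReal := by
  have hae : ∀ᵐ q ∂ρ, f q ≤ r := by
    rw [ae_iff]
    exact measure_mono_null (fun q hq hqA => hq (hb q hqA)) hA
  have hint : Integrable f ρ := by
    refine ⟨hf.aestronglyMeasurable, MeasureTheory.HasFiniteIntegral.of_bounded (C := r) ?_⟩
    filter_upwards [hae] with q hq
    rwa [Real.norm_of_nonneg (hf0 q)]
  refine ⟨hint, ?_⟩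
  calc ∫ q, f q ∂ρ ≤ ∫ _, r ∂ρ := integral_mono_ae hint (integrable_const r) hae
    _ = r * (ρ Set.univ).toReal := by rw [integral_const, smul_eq_mul, mul_comm]; rfl

lemma map_finset_sum' {α β ι : Type*} [MeasurableSpace α] [MeasurableSpace β] {g : α → β}
    (hg : Measurable g) (s : Finset ι) (μs : ι → Measure α) :
    (∑ i ∈ s, μs i).map g = ∑ i ∈ s, (μs i).map g := by
  classical
  induction s using Finset.induction with
  | empty => simp [Measure.map_zero]
  | insert _ _ h ih => simp [Finset.sum_insert h, Measure.map_add _ _ hg, ih]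


lemma diag_step
    (d : ℕ) (hd : 1 ≤ d) (p : ℝ) (hp : 1 ≤ p)
    (X : Set (Fin d → ℝ)) (hX : Bornology.IsBounded X) (hXm : MeasurableSet X)
    (k : ℕ) (C : ℕ → Set (Fin d → ℝ))
    (hCX : ∀ v, C v ⊆ X)
    (hCmeas : ∀ v, MeasurableSet (C v))
    (hCdisj : ∀ v w, v ≠ w → C v ∩ C w = ∅)
    (hCcover : ∀ x ∈ X, ∃ v ∈ Finset.range k, x ∈ C v)
    (μ' ν' : Measure (Fin d → ℝ)) [IsFiniteMeasure μ'] [IsFiniteMeasure ν']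
    (hμX : μ' Xᶜ = 0) (hνX : ν' Xᶜ = 0) :
    ∃ (πd : Measure ((Fin d → ℝ) × (Fin d → ℝ))) (μres νres : Measure (Fin d → ℝ)),
      IsFiniteMeasure πd ∧ IsFiniteMeasure μres ∧ IsFiniteMeasure νres ∧
      μres Xᶜ = 0 ∧ νres Xᶜ = 0 ∧
      πd.map Prod.fst + μres = μ' ∧ πd.map Prod.snd + νres = ν' ∧
      (∀ E : Set (Fin d → ℝ), MeasurableSet E →
          (∀ v ∈ Finset.range k, (C v ∩ E).Nonempty → C v ⊆ E) →
        μres E + (∑ v ∈ Finset.range k,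
            if (C v ∩ E).Nonempty then min (μ' (C v)) (ν' (C v)) else 0) = μ' E ∧
        νres E + (∑ v ∈ Finset.range k,
            if (C v ∩ E).Nonempty then min (μ' (C v)) (ν' (C v)) else 0) = ν' E) ∧
      Integrable (fun q => lpNormalizedDist d p q.1 q.2) πd ∧
      ∫ q, lpNormalizedDist d p q.1 q.2 ∂πd ≤
        ∑ v ∈ Finset.range k, (min (μ' (C v)) (ν' (C v))).toReal * lpNormalizedDiam d p (C v) := by
  classical
  set mn : ℕ → ℝ≥0∞ := fun v => min (μ' (C v)) (ν' (C v)) with hmn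
  set a : ℕ → ℝ≥0∞ := fun v => mn v / μ' (C v) with ha
  set b : ℕ → ℝ≥0∞ := fun v => mn v / ν' (C v) with hb
  set πv : ℕ → Measure ((Fin d → ℝ) × (Fin d → ℝ)) := fun v =>
    (mn v / (μ' (C v) * ν' (C v))) • ((μ'.restrict (C v)).prod (ν'.restrict (C v))) with hπv
  set πd : Measure ((Fin d → ℝ) × (Fin d → ℝ)) := ∑ v ∈ Finset.range k, πv v with hπd
  set μres : Measure (Fin d → ℝ) :=
    ∑ v ∈ Finset.range k, ((1 - a v) • μ'.restrict (C v)) with hμres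
  set νres : Measure (Fin d → ℝ) :=
    ∑ v ∈ Finset.range k, ((1 - b v) • ν'.restrict (C v)) with hνres
  have hmn_ne_top : ∀ v, mn v ≠ ⊤ := fun v =>
    ne_top_of_le_ne_top (measure_ne_top μ' _) (min_le_left _ _)
  -- partition lemma
  have hpart : ∀ (ρ : Measure (Fin d → ℝ)), ρ Xᶜ = 0 → ∀ s : Set (Fin d → ℝ), MeasurableSet s →
      ∑ v ∈ Finset.range k, ρ (s ∩ C v) = ρ s := by
    intro ρ hρ s hs
    have hdisj : (↑(Finset.range k) : Set ℕ).PairwiseDisjoint (fun v => s ∩ C v) := by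
      intro v _ w _ hvw
      refine Set.disjoint_left.mpr fun x hxv hxw => ?_
      have : x ∈ C v ∩ C w := ⟨hxv.2, hxw.2⟩
      rw [hCdisj v w hvw] at this
      exact this
    rw [← measure_biUnion_finset hdisj (fun v _ => hs.inter (hCmeas v))]
    have h1 : (⋃ v ∈ Finset.range k, s ∩ C v) = s ∩ X := by
      ext x
      simp only [mem_iUnion, mem_inter_iff, exists_prop]
      constructor
      · rintro ⟨v, _, hxs, hxC⟩
        exact ⟨hxs, hCX v hxC⟩
      · rintro ⟨hxs, hxX⟩
        obtain ⟨v, hv, hxC⟩ := hCcover x hxX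
        exact ⟨v, hv, hxs, hxC⟩
    rw [h1]
    have h2 : ρ (s \ X) = 0 := measure_mono_null (fun x hx => hx.2) hρ
    rw [← measure_inter_add_diff s hXm, h2, add_zero]
  have ha_le : ∀ v, a v ≤ 1 := fun v =>
    ENNReal.div_le_of_le_mul (by rw [one_mul]; exact min_le_left _ _)
  have hb_le : ∀ v, b v ≤ 1 := fun v =>
    ENNReal.div_le_of_le_mul (by rw [one_mul]; exact min_le_right _ _)
  -- marginals of the pieces
  have hfstv : ∀ v, (πv v).map Prod.fst = a v • μ'.restrict (C v) := by
    intro v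
    rw [hπv]
    simp only
    rw [Measure.map_smul, Measure.map_fst_prod, Measure.restrict_apply_univ, smul_smul]
    congr 1
    rcases eq_or_ne (μ' (C v)) 0 with h1 | h1
    · have hz : mn v = 0 := by simp [hmn, h1]
      simp [ha, hz]
    rcases eq_or_ne (ν' (C v)) 0 with h2 | h2
    · have hz : mn v = 0 := by simp [hmn, h2]
      simp [ha, hz]
    · simp only [ha]
      rw [div_eq_mul_inv, div_eq_mul_inv, ENNReal.mul_inv (Or.inl h1) (Or.inr h2)]
      calc mn v * ((μ' (C v))⁻¹ * (ν' (C v))⁻¹) * ν' (C v)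
          = mn v * (μ' (C v))⁻¹ * ((ν' (C v))⁻¹ * ν' (C v)) := by ring
        _ = mn v * (μ' (C v))⁻¹ := by
            rw [ENNReal.inv_mul_cancel h2 (measure_ne_top _ _), mul_one]
  have hsndv : ∀ v, (πv v).map Prod.snd = b v • ν'.restrict (C v) := by
    intro v
    rw [hπv]
    simp only
    rw [Measure.map_smul, Measure.map_snd_prod, Measure.restrict_apply_univ, smul_smul]
    congr 1
    rcases eq_or_ne (ν' (C v)) 0 with h2 | h2
    · have hz : mn v = 0 := by simp [hmn, h2]
      simp [hb, hz]
    rcases eq_or_ne (μ' (C v)) 0 with h1 | h1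
    · have hz : mn v = 0 := by simp [hmn, h1]
      simp [hb, hz]
    · simp only [hb]
      rw [div_eq_mul_inv, div_eq_mul_inv, ENNReal.mul_inv (Or.inl h1) (Or.inr h2)]
      calc mn v * ((μ' (C v))⁻¹ * (ν' (C v))⁻¹) * μ' (C v)
          = mn v * (ν' (C v))⁻¹ * ((μ' (C v))⁻¹ * μ' (C v)) := by ring
        _ = mn v * (ν' (C v))⁻¹ := by
            rw [ENNReal.inv_mul_cancel h1 (measure_ne_top _ _), mul_one]
  -- residuals vanish outside X
  have hresX : ∀ (ρ : Measure (Fin d → ℝ)) (c : ℕ → ℝ≥0∞), ρ Xᶜ = 0 →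
      (∑ v ∈ Finset.range k, (c v • ρ.restrict (C v))) Xᶜ = 0 := by
    intro ρ c hρ
    rw [Measure.finset_sum_apply]
    refine Finset.sum_eq_zero fun v _ => ?_
    rw [Measure.smul_apply, Measure.restrict_apply hXm.compl]
    have : ρ (Xᶜ ∩ C v) = 0 := measure_mono_null inter_subset_left hρ
    rw [this, smul_eq_mul, mul_zero]
  -- key cancellation
  have hμkey : ∀ v, (1 - a v) * μ' (C v) + mn v = μ' (C v) := by
    intro v
    rcases eq_or_ne (μ' (C v)) 0 with h1 | h1
    · have hz : mn v = 0 := by simp [hmn, h1]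
      simp [h1, hz]
    · have hμt : μ' (C v) ≠ ⊤ := measure_ne_top _ _
      have hgoal : (1 - a v) * μ' (C v) = μ' (C v) - mn v := by
        rw [ENNReal.sub_mul (fun _ _ => hμt), one_mul]
        simp only [ha]
        congr 1
        exact ENNReal.div_mul_cancel h1 hμt
      rw [hgoal]
      exact tsub_add_cancel_of_le (min_le_left _ _)
  have hνkey : ∀ v, (1 - b v) * ν' (C v) + mn v = ν' (C v) := by
    intro v
    rcases eq_or_ne (ν' (C v)) 0 with h2 | h2
    · have hz : mn v = 0 := by simp [hmn, h2]
      simp [h2, hz]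
    · have hνt : ν' (C v) ≠ ⊤ := measure_ne_top _ _
      have hgoal : (1 - b v) * ν' (C v) = ν' (C v) - mn v := by
        rw [ENNReal.sub_mul (fun _ _ => hνt), one_mul]
        simp only [hb]
        congr 1
        exact ENNReal.div_mul_cancel h2 hνt
      rw [hgoal]
      exact tsub_add_cancel_of_le (min_le_right _ _)
  -- the claim about residual measures on unions of cells
  have hclaim : ∀ (ρ : Measure (Fin d → ℝ)), ρ Xᶜ = 0 → ∀ (c : ℕ → ℝ≥0∞),
      (∀ v, (1 - c v) * ρ (C v) + mn v = ρ (C v)) →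
      ∀ E : Set (Fin d → ℝ), MeasurableSet E →
        (∀ v ∈ Finset.range k, (C v ∩ E).Nonempty → C v ⊆ E) →
      (∑ v ∈ Finset.range k, ((1 - c v) • ρ.restrict (C v))) E +
        (∑ v ∈ Finset.range k, if (C v ∩ E).Nonempty then mn v else 0) = ρ E := by
    intro ρ hρ c hc E hEm hEcond
    rw [Measure.finset_sum_apply, ← Finset.sum_add_distrib]
    rw [← hpart ρ hρ E hEm]
    refine Finset.sum_congr rfl fun v hv => ?_
    rw [Measure.smul_apply, Measure.restrict_apply hEm, smul_eq_mul]
    by_cases hne : (C v ∩ E).Nonempty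
    · have hsub : C v ⊆ E := hEcond v hv hne
      have hEq : E ∩ C v = C v := inter_eq_self_of_subset_right hsub
      rw [hEq, if_pos hne]
      exact hc v
    · rw [if_neg hne]
      have : E ∩ C v = ∅ := by rw [inter_comm]; exact not_nonempty_iff_eq_empty.mp hne
      simp [this]
  -- total marginals
  have hsum_restrict : ∀ (ρ : Measure (Fin d → ℝ)), ρ Xᶜ = 0 →
      (∑ v ∈ Finset.range k, ρ.restrict (C v)) = ρ := by
    intro ρ hρ
    ext s hs
    rw [Measure.finset_sum_apply]
    simp_rw [Measure.restrict_apply hs]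
    exact hpart ρ hρ s hs
  have hfst : πd.map Prod.fst + μres = μ' := by
    rw [hπd, map_finset_sum' measurable_fst, hμres, ← Finset.sum_add_distrib]
    calc (∑ v ∈ Finset.range k, ((πv v).map Prod.fst + (1 - a v) • μ'.restrict (C v)))
        = ∑ v ∈ Finset.range k, μ'.restrict (C v) := by
          refine Finset.sum_congr rfl fun v _ => ?_
          rw [hfstv v, ← add_smul, add_tsub_cancel_of_le (ha_le v), one_smul]
      _ = μ' := hsum_restrict μ' hμX
  have hsnd : πd.map Prod.snd + νres = ν' := by
    rw [hπd, map_finset_sum' measurable_snd, hνres, ← Finset.sum_add_distrib]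
    calc (∑ v ∈ Finset.range k, ((πv v).map Prod.snd + (1 - b v) • ν'.restrict (C v)))
        = ∑ v ∈ Finset.range k, ν'.restrict (C v) := by
          refine Finset.sum_congr rfl fun v _ => ?_
          rw [hsndv v, ← add_smul, add_tsub_cancel_of_le (hb_le v), one_smul]
      _ = ν' := hsum_restrict ν' hνX
  -- masses of pieces
  have hπv_univ : ∀ v, (πv v) Set.univ = mn v := by
    intro v
    rw [hπv]
    simp only
    rw [Measure.smul_apply, smul_eq_mul, ← univ_prod_univ, Measure.prod_prod,
      Measure.restrict_apply_univ, Measure.restrict_apply_univ]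
    rcases eq_or_ne (μ' (C v)) 0 with h1 | h1
    · have hz : mn v = 0 := by simp [hmn, h1]
      simp [h1, hz]
    rcases eq_or_ne (ν' (C v)) 0 with h2 | h2
    · have hz : mn v = 0 := by simp [hmn, h2]
      simp [h2, hz]
    · exact ENNReal.div_mul_cancel (mul_ne_zero h1 h2)
        (ENNReal.mul_ne_top (measure_ne_top _ _) (measure_ne_top _ _))
  have hπv_fin : ∀ v, IsFiniteMeasure (πv v) := by
    intro v
    constructor
    rw [hπv_univ v]
    exact lt_of_le_of_lt (min_le_left _ _) (measure_lt_top _ _)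
  -- integrability and cost of each piece
  have hIv : ∀ v, Integrable (fun q => lpNormalizedDist d p q.1 q.2) (πv v) ∧
      ∫ q, lpNormalizedDist d p q.1 q.2 ∂(πv v) ≤
        (min (μ' (C v)) (ν' (C v))).toReal * lpNormalizedDiam d p (C v) := by
    intro v
    haveI := hπv_fin v
    have hA : (πv v) ((C v ×ˢ C v)ᶜ) = 0 := by
      rw [hπv]
      simp only
      rw [Measure.smul_apply, smul_eq_mul]
      have h0 : ((μ'.restrict (C v)).prod (ν'.restrict (C v))) ((C v ×ˢ C v)ᶜ) = 0 := by
        have hsub : (C v ×ˢ C v)ᶜ ⊆ ((C v)ᶜ ×ˢ univ) ∪ (univ ×ˢ (C v)ᶜ) := by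
          intro q hq
          simp only [mem_compl_iff, mem_prod, not_and] at hq
          by_cases h1 : q.1 ∈ C v
          · exact Or.inr ⟨trivial, hq h1⟩
          · exact Or.inl ⟨h1, trivial⟩
        refine measure_mono_null hsub ?_
        refine le_antisymm (le_trans (measure_union_le _ _) ?_) zero_le
        rw [Measure.prod_prod, Measure.prod_prod, Measure.restrict_apply (hCmeas v).compl,
          Measure.restrict_apply (hCmeas v).compl]
        simp [compl_inter_self]
      rw [h0, mul_zero]
    have hbnd : ∀ q ∈ C v ×ˢ C v, lpNormalizedDist d p q.1 q.2 ≤ lpNormalizedDiam d p (C v) :=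
      fun q hq => lpDist_le_diam hd hp hX (hCX v) hq.1 hq.2
    obtain ⟨hint, hle⟩ := integrable_and_integral_le (lpDist_measurable d p)
      (fun q => lpDist_nonneg d p q.1 q.2) (πv v) hA hbnd
    refine ⟨hint, le_trans hle (le_of_eq ?_)⟩
    rw [hπv_univ v]
    simp only [hmn]
    ring
  have hIntd : Integrable (fun q => lpNormalizedDist d p q.1 q.2) πd := by
    rw [hπd]
    exact (integrable_finset_sum_measure).mpr fun v _ => (hIv v).1
  have hcost : ∫ q, lpNormalizedDist d p q.1 q.2 ∂πd ≤
      ∑ v ∈ Finset.range k, (min (μ' (C v)) (ν' (C v))).toReal * lpNormalizedDiam d p (C v) := by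
    rw [hπd, integral_finset_sum_measure fun v _ => (hIv v).1]
    exact Finset.sum_le_sum fun v _ => (hIv v).2
  -- finiteness
  have hπd_fin : IsFiniteMeasure πd := by
    constructor
    rw [hπd, Measure.finset_sum_apply]
    refine ENNReal.sum_lt_top.mpr fun v _ => ?_
    rw [hπv_univ v]
    exact lt_of_le_of_lt (min_le_left _ _) (measure_lt_top _ _)
  have hres_fin : ∀ (ρ : Measure (Fin d → ℝ)) (c : ℕ → ℝ≥0∞), IsFiniteMeasure ρ →
      (∀ v, c v ≤ 1) → IsFiniteMeasure (∑ v ∈ Finset.range k, (c v • ρ.restrict (C v))) := by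
    intro ρ c hρ hc
    constructor
    rw [Measure.finset_sum_apply]
    refine ENNReal.sum_lt_top.mpr fun v _ => ?_
    rw [Measure.smul_apply, smul_eq_mul, Measure.restrict_apply_univ]
    calc c v * ρ (C v) ≤ 1 * ρ (C v) := mul_le_mul_left (hc v) _
      _ = ρ (C v) := one_mul _
      _ < ⊤ := measure_lt_top _ _
  have hμres_fin : IsFiniteMeasure μres := by
    rw [hμres]; exact hres_fin μ' (fun v => 1 - a v) inferInstance (fun v => tsub_le_self)
  have hνres_fin : IsFiniteMeasure νres := by
    rw [hνres]; exact hres_fin ν' (fun v => 1 - b v) inferInstance (fun v => tsub_le_self)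
  have hμresX : μres Xᶜ = 0 := by rw [hμres]; exact hresX μ' _ hμX
  have hνresX : νres Xᶜ = 0 := by rw [hνres]; exact hresX ν' _ hνX
  refine ⟨πd, μres, νres, hπd_fin, hμres_fin, hνres_fin, hμresX, hνresX, hfst, hsnd,
    fun E hEm hEc => ⟨?_, ?_⟩, hIntd, hcost⟩
  · have := hclaim μ' hμX a hμkey E hEm hEc
    rw [hμres]
    simpa only [hmn] using this
  · have := hclaim ν' hνX b hνkey E hEm hEc
    rw [hνres]
    simpa only [hmn] using this

lemma top_coupling
    (d : ℕ) (hd : 1 ≤ d) (p : ℝ) (hp : 1 ≤ p)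
    (X : Set (Fin d → ℝ)) (hX : Bornology.IsBounded X) (hXm : MeasurableSet X)
    (μres νres : Measure (Fin d → ℝ)) [IsFiniteMeasure μres] [IsFiniteMeasure νres]
    (hμX : μres Xᶜ = 0) (hνX : νres Xᶜ = 0) (hmass : μres Set.univ = νres Set.univ) :
    ∃ ρ : Measure ((Fin d → ℝ) × (Fin d → ℝ)), IsFiniteMeasure ρ ∧
      ρ.map Prod.fst = μres ∧ ρ.map Prod.snd = νres ∧
      Integrable (fun q => lpNormalizedDist d p q.1 q.2) ρ ∧
      ∫ q, lpNormalizedDist d p q.1 q.2 ∂ρ ≤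
        lpNormalizedDiam d p X * (μres Set.univ).toReal := by
  classical
  rcases eq_or_ne (μres Set.univ) 0 with h0 | h0
  · have hμ0 : μres = 0 := MeasureTheory.Measure.measure_univ_eq_zero.mp h0
    have hν0 : νres = 0 := MeasureTheory.Measure.measure_univ_eq_zero.mp (hmass ▸ h0)
    refine ⟨0, inferInstance, ?_, ?_, ?_, ?_⟩
    · rw [Measure.map_zero, hμ0]
    · rw [Measure.map_zero, hν0]
    · exact integrable_zero_measure
    · rw [integral_zero_measure]
      exact mul_nonneg (lpDiam_nonneg d p X) ENNReal.toReal_nonneg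
  · set ρ : Measure ((Fin d → ℝ) × (Fin d → ℝ)) :=
      (μres Set.univ)⁻¹ • (μres.prod νres) with hρ
    have hν0' : νres Set.univ ≠ 0 := hmass ▸ h0
    have hinv : (μres Set.univ)⁻¹ * μres Set.univ = 1 :=
      ENNReal.inv_mul_cancel h0 (measure_ne_top _ _)
    have hρuniv : ρ Set.univ = μres Set.univ := by
      rw [hρ, Measure.smul_apply, smul_eq_mul, ← Set.univ_prod_univ, Measure.prod_prod,
        ← mul_assoc, hinv, one_mul]
      exact hmass.symm
    have hfst : ρ.map Prod.fst = μres := by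
      rw [hρ, Measure.map_smul, Measure.map_fst_prod, smul_smul, ← hmass, hinv, one_smul]
    have hsnd : ρ.map Prod.snd = νres := by
      rw [hρ, Measure.map_smul, Measure.map_snd_prod, smul_smul, hinv, one_smul]
    have hfin : IsFiniteMeasure ρ := by
      constructor
      rw [hρuniv]
      exact measure_lt_top _ _
    haveI := hfin
    have hA : ρ ((X ×ˢ X)ᶜ) = 0 := by
      rw [hρ, Measure.smul_apply, smul_eq_mul]
      have hsub : (X ×ˢ X)ᶜ ⊆ (Xᶜ ×ˢ Set.univ) ∪ (Set.univ ×ˢ Xᶜ) := by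
        intro q hq
        simp only [Set.mem_compl_iff, Set.mem_prod, not_and] at hq
        by_cases h1 : q.1 ∈ X
        · exact Or.inr ⟨trivial, hq h1⟩
        · exact Or.inl ⟨h1, trivial⟩
      have h00 : (μres.prod νres) ((X ×ˢ X)ᶜ) = 0 := by
        refine measure_mono_null hsub ?_
        refine le_antisymm (le_trans (measure_union_le _ _) ?_) zero_le
        rw [Measure.prod_prod, Measure.prod_prod, hμX, hνX]
        simp
      rw [h00, mul_zero]
    obtain ⟨hint, hle⟩ := integrable_and_integral_le (lpDist_measurable d p)
      (fun q => lpDist_nonneg d p q.1 q.2) ρ hA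
      (fun q hq => lpDist_le_diam hd hp hX (le_refl X) hq.1 hq.2)
    refine ⟨ρ, hfin, hfst, hsnd, hint, ?_⟩
    rw [hρuniv] at hle
    exact hle

lemma toReal_sub_of_add_eq {x T y : ℝ≥0∞} (hx : x ≠ ⊤) (hT : T ≠ ⊤) (h : x + T = y) :
    x.toReal = y.toReal - T.toReal := by
  have h2 := congrArg ENNReal.toReal h
  rw [ENNReal.toReal_add hx hT] at h2
  linarith

lemma hier_coupling
    (d : ℕ) (hd : 1 ≤ d) (p : ℝ) (hp : 1 ≤ p)
    (X : Set (Fin d → ℝ)) (hX : Bornology.IsBounded X)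
    (t : ℕ) (ht : 1 ≤ t) (k : ℕ)
    (γ : ℕ → (Fin d → ℝ) → ℕ)
    (hk : ∀ i < t, ∀ x ∈ X, γ i x < k)
    (hmeas : ∀ i < t, ∀ v : ℕ, MeasurableSet {x ∈ X | γ i x = v})
    (hrefine : ∀ i, i + 1 < t → ∀ x ∈ X, ∀ y ∈ X,
      γ (i + 1) x = γ (i + 1) y → γ i x = γ i y)
    (δ : ℕ → ℝ)
    (hδ0 : δ 0 = lpNormalizedDiam d p X)
    (hdiam : ∀ i < t, ∀ v : ℕ, lpNormalizedDiam d p {x ∈ X | γ i x = v} ≤ δ (i + 1)) :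
    ∀ m, m < t → ∀ μ' ν' : Measure (Fin d → ℝ),
      ∀ (_ : IsFiniteMeasure μ') (_ : IsFiniteMeasure ν'),
      μ' Xᶜ = 0 → ν' Xᶜ = 0 → μ' Set.univ = ν' Set.univ →
      ∃ π : Measure ((Fin d → ℝ) × (Fin d → ℝ)), IsFiniteMeasure π ∧
        π.map Prod.fst = μ' ∧ π.map Prod.snd = ν' ∧
        Integrable (fun q => lpNormalizedDist d p q.1 q.2) π ∧
        ∫ q, lpNormalizedDist d p q.1 q.2 ∂π ≤
          δ 0 * ((μ' Set.univ).toReal -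
            ∑ v ∈ Finset.range k,
              min (μ' {x ∈ X | γ 0 x = v}).toReal (ν' {x ∈ X | γ 0 x = v}).toReal)
          + (∑ i ∈ Finset.range m, δ (i + 1) *
              ((∑ v ∈ Finset.range k,
                  min (μ' {x ∈ X | γ i x = v}).toReal (ν' {x ∈ X | γ i x = v}).toReal) -
               (∑ v ∈ Finset.range k,
                  min (μ' {x ∈ X | γ (i+1) x = v}).toReal (ν' {x ∈ X | γ (i+1) x = v}).toReal)))
          + ∑ v ∈ Finset.range k,
              min (μ' {x ∈ X | γ m x = v}).toReal (ν' {x ∈ X | γ m x = v}).toReal *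
                lpNormalizedDiam d p {x ∈ X | γ m x = v} := by
  classical
  have ht0 : 0 < t := ht
  have hXm : MeasurableSet X := by
    have hXeq : X = ⋃ v ∈ Finset.range k, {x ∈ X | γ 0 x = v} := by
      ext x
      simp only [Set.mem_iUnion, Finset.mem_range, Set.mem_setOf_eq, exists_prop]
      constructor
      · intro hx
        exact ⟨γ 0 x, hk 0 ht0 x hx, hx, rfl⟩
      · rintro ⟨v, _, hx, _⟩
        exact hx
    rw [hXeq]
    exact (Finset.range k).measurableSet_biUnion fun v _ => hmeas 0 ht0 v
  have hchain : ∀ j, j < t → ∀ i, i ≤ j → ∀ x ∈ X, ∀ y ∈ X,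
      γ j x = γ j y → γ i x = γ i y := by
    intro j
    induction j with
    | zero =>
      intro _ i hi x hx y hy h
      obtain rfl := Nat.le_zero.mp hi
      exact h
    | succ n ih =>
      intro hjt i hi x hx y hy h
      rcases eq_or_lt_of_le hi with rfl | hlt
      · exact h
      · exact ih (Nat.lt_of_succ_lt hjt) i (Nat.lt_succ_iff.mp hlt) x hx y hy
          (hrefine n hjt x hx y hy h)
  have hcellX : ∀ L v : ℕ, {x ∈ X | γ L x = v} ⊆ X := fun L v x hx => hx.1
  have hcelldisj : ∀ L v w : ℕ, v ≠ w → {x ∈ X | γ L x = v} ∩ {x ∈ X | γ L x = w} = ∅ := by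
    intro L v w hvw
    ext x
    simp only [Set.mem_inter_iff, Set.mem_setOf_eq, Set.mem_empty_iff_false, iff_false]
    rintro ⟨⟨_, h1⟩, ⟨_, h2⟩⟩
    exact hvw (h1 ▸ h2 ▸ rfl)
  have hcellcover : ∀ L, L < t → ∀ x ∈ X, ∃ v ∈ Finset.range k, x ∈ {x ∈ X | γ L x = v} :=
    fun L hL x hx => ⟨γ L x, Finset.mem_range.mpr (hk L hL x hx), hx, rfl⟩
  intro m
  induction m with
  | zero =>
    intro hmt μ' ν' hfμ hfν hμ'X hν'X hmass
    obtain ⟨πd, μres, νres, hπdfin, hμrfin, hνrfin, hμrX, hνrX, hfst, hsnd, hclaims,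
        hint, hcost⟩ :=
      diag_step d hd p hp X hX hXm k (fun v => {x ∈ X | γ 0 x = v}) (hcellX 0)
        (fun v => hmeas 0 ht0 v) (hcelldisj 0) (hcellcover 0 ht0) μ' ν' hμ'X hν'X
    haveI := hπdfin; haveI := hμrfin; haveI := hνrfin; haveI := hfμ; haveI := hfν
    have hcU := hclaims Set.univ MeasurableSet.univ (fun v _ _ => Set.subset_univ _)
    have hTne : (∑ v ∈ Finset.range k,
        if ({x ∈ X | γ 0 x = v} ∩ Set.univ).Nonempty
        then min (μ' {x ∈ X | γ 0 x = v}) (ν' {x ∈ X | γ 0 x = v}) else 0) ≠ ⊤ := by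
      refine (ENNReal.sum_lt_top.mpr fun v _ => ?_).ne
      split
      · exact lt_of_le_of_lt (min_le_left _ _) (measure_lt_top _ _)
      · exact ENNReal.zero_lt_top
    have hmassres : μres Set.univ = νres Set.univ := by
      have h12 := hcU.1.trans (hmass.trans hcU.2.symm)
      exact (ENNReal.add_left_inj hTne).mp h12
    obtain ⟨ρ, hρfin, hρfst, hρsnd, hρint, hρcost⟩ :=
      top_coupling d hd p hp X hX hXm μres νres hμrX hνrX hmassres
    haveI := hρfin
    refine ⟨πd + ρ, inferInstance, ?_, ?_, hint.add_measure hρint, ?_⟩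
    · rw [Measure.map_add _ _ measurable_fst, hρfst]
      exact hfst
    · rw [Measure.map_add _ _ measurable_snd, hρsnd]
      exact hsnd
    · rw [integral_add_measure hint hρint]
      have hTtoReal : (∑ v ∈ Finset.range k,
          if ({x ∈ X | γ 0 x = v} ∩ Set.univ).Nonempty
          then min (μ' {x ∈ X | γ 0 x = v}) (ν' {x ∈ X | γ 0 x = v}) else 0).toReal
          = ∑ v ∈ Finset.range k,
            min (μ' {x ∈ X | γ 0 x = v}).toReal (ν' {x ∈ X | γ 0 x = v}).toReal := by
        have hne' : ∀ v ∈ Finset.range k,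
            (if ({x ∈ X | γ 0 x = v} ∩ Set.univ).Nonempty
             then min (μ' {x ∈ X | γ 0 x = v}) (ν' {x ∈ X | γ 0 x = v}) else 0) ≠ ⊤ := by
          intro v _
          split
          · exact (lt_of_le_of_lt (min_le_left _ _) (measure_lt_top _ _)).ne
          · exact ENNReal.zero_ne_top
        rw [ENNReal.toReal_sum hne']
        refine Finset.sum_congr rfl fun v _ => ?_
        rw [apply_ite ENNReal.toReal]
        by_cases hne : ({x ∈ X | γ 0 x = v} ∩ Set.univ).Nonempty
        · rw [if_pos hne, ENNReal.toReal_min (measure_ne_top _ _) (measure_ne_top _ _)]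
        · rw [if_neg hne]
          rw [Set.inter_univ] at hne
          rw [Set.not_nonempty_iff_eq_empty.mp hne]
          simp
      have hres_mass : (μres Set.univ).toReal = (μ' Set.univ).toReal -
          ∑ v ∈ Finset.range k,
            min (μ' {x ∈ X | γ 0 x = v}).toReal (ν' {x ∈ X | γ 0 x = v}).toReal := by
        rw [← hTtoReal]
        exact toReal_sub_of_add_eq (measure_ne_top _ _) hTne hcU.1
      have hcost2 : (∑ v ∈ Finset.range k,
          (min (μ' {x ∈ X | γ 0 x = v}) (ν' {x ∈ X | γ 0 x = v})).toReal *
            lpNormalizedDiam d p {x ∈ X | γ 0 x = v})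
          = ∑ v ∈ Finset.range k,
            min (μ' {x ∈ X | γ 0 x = v}).toReal (ν' {x ∈ X | γ 0 x = v}).toReal *
              lpNormalizedDiam d p {x ∈ X | γ 0 x = v} :=
        Finset.sum_congr rfl fun v _ => by
          rw [ENNReal.toReal_min (measure_ne_top _ _) (measure_ne_top _ _)]
      have e1 : lpNormalizedDiam d p X * (μres Set.univ).toReal
          = δ 0 * ((μ' Set.univ).toReal - ∑ v ∈ Finset.range k,
              min (μ' {x ∈ X | γ 0 x = v}).toReal (ν' {x ∈ X | γ 0 x = v}).toReal) := by
        rw [hres_mass, hδ0]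
      simp only [Finset.range_zero, Finset.sum_empty, add_zero]
      linarith [hcost, hρcost, e1, hcost2]
  | succ n ihn =>
    intro hmt μ' ν' hfμ hfν hμ'X hν'X hmass
    haveI := hfμ; haveI := hfν
    have hnt : n < t := Nat.lt_of_succ_lt hmt
    have hn1t : n + 1 < t := hmt
    obtain ⟨πd, μres, νres, hπdfin, hμrfin, hνrfin, hμrX, hνrX, hfst, hsnd, hclaims,
        hint, hcost⟩ :=
      diag_step d hd p hp X hX hXm k (fun v => {x ∈ X | γ (n+1) x = v}) (hcellX (n+1))
        (fun v => hmeas (n+1) hn1t v) (hcelldisj (n+1)) (hcellcover (n+1) hn1t) μ' ν' hμ'X hν'X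
    haveI := hπdfin; haveI := hμrfin; haveI := hνrfin
    have hTne : ∀ E : Set (Fin d → ℝ), (∑ v ∈ Finset.range k,
        if ({x ∈ X | γ (n+1) x = v} ∩ E).Nonempty
        then min (μ' {x ∈ X | γ (n+1) x = v}) (ν' {x ∈ X | γ (n+1) x = v}) else 0) ≠ ⊤ := by
      intro E
      refine (ENNReal.sum_lt_top.mpr fun v _ => ?_).ne
      split
      · exact lt_of_le_of_lt (min_le_left _ _) (measure_lt_top _ _)
      · exact ENNReal.zero_lt_top
    have hTtoReal : ∀ E : Set (Fin d → ℝ), (∑ v ∈ Finset.range k,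
        if ({x ∈ X | γ (n+1) x = v} ∩ E).Nonempty
        then min (μ' {x ∈ X | γ (n+1) x = v}) (ν' {x ∈ X | γ (n+1) x = v}) else 0).toReal
        = ∑ v ∈ Finset.range k,
          if ({x ∈ X | γ (n+1) x = v} ∩ E).Nonempty
          then min (μ' {x ∈ X | γ (n+1) x = v}).toReal (ν' {x ∈ X | γ (n+1) x = v}).toReal
          else 0 := by
      intro E
      have hne' : ∀ v ∈ Finset.range k,
          (if ({x ∈ X | γ (n+1) x = v} ∩ E).Nonempty
           then min (μ' {x ∈ X | γ (n+1) x = v}) (ν' {x ∈ X | γ (n+1) x = v}) else 0) ≠ ⊤ := by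
        intro v _
        split
        · exact (lt_of_le_of_lt (min_le_left _ _) (measure_lt_top _ _)).ne
        · exact ENNReal.zero_ne_top
      rw [ENNReal.toReal_sum hne']
      refine Finset.sum_congr rfl fun v _ => ?_
      rw [apply_ite ENNReal.toReal]
      by_cases hne : ({x ∈ X | γ (n+1) x = v} ∩ E).Nonempty
      · rw [if_pos hne, if_pos hne, ENNReal.toReal_min (measure_ne_top _ _) (measure_ne_top _ _)]
      · rw [if_neg hne, if_neg hne, ENNReal.toReal_zero]
    have hcU := hclaims Set.univ MeasurableSet.univ (fun v _ _ => Set.subset_univ _)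
    have hmassres : μres Set.univ = νres Set.univ := by
      have h12 := hcU.1.trans (hmass.trans hcU.2.symm)
      exact (ENNReal.add_left_inj (hTne Set.univ)).mp h12
    have hcond : ∀ i, i ≤ n → ∀ w : ℕ, ∀ v ∈ Finset.range k,
        ({x ∈ X | γ (n+1) x = v} ∩ {x ∈ X | γ i x = w}).Nonempty →
        {x ∈ X | γ (n+1) x = v} ⊆ {x ∈ X | γ i x = w} := by
      intro i hi w v _ hne y hy
      obtain ⟨x₀, hx₀v, hx₀w⟩ := hne
      refine ⟨hy.1, ?_⟩
      have hiy : γ i y = γ i x₀ :=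
        hchain (n+1) hn1t i (le_trans hi (Nat.le_succ n)) y hy.1 x₀ hx₀v.1
          (hy.2.trans hx₀v.2.symm)
      rw [hiy]
      exact hx₀w.2
    have hres_cell : ∀ i, i ≤ n → ∀ w : ℕ,
        min (μres {x ∈ X | γ i x = w}).toReal (νres {x ∈ X | γ i x = w}).toReal
        = min (μ' {x ∈ X | γ i x = w}).toReal (ν' {x ∈ X | γ i x = w}).toReal
          - ∑ v ∈ Finset.range k,
            (if ({x ∈ X | γ (n+1) x = v} ∩ {x ∈ X | γ i x = w}).Nonempty
             then min (μ' {x ∈ X | γ (n+1) x = v}).toReal (ν' {x ∈ X | γ (n+1) x = v}).toReal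
             else 0) := by
      intro i hi w
      have hit : i < t := lt_trans (Nat.lt_succ_of_le hi) hmt
      have hcl := hclaims {x ∈ X | γ i x = w} (hmeas i hit w) (hcond i hi w)
      have h1 := toReal_sub_of_add_eq (measure_ne_top _ _) (hTne _) hcl.1
      have h2 := toReal_sub_of_add_eq (measure_ne_top _ _) (hTne _) hcl.2
      rw [h1, h2, hTtoReal, min_sub_sub_right]
    have hB : ∀ i, i ≤ n →
        (∑ w ∈ Finset.range k, ∑ v ∈ Finset.range k,
          (if ({x ∈ X | γ (n+1) x = v} ∩ {x ∈ X | γ i x = w}).Nonempty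
           then min (μ' {x ∈ X | γ (n+1) x = v}).toReal (ν' {x ∈ X | γ (n+1) x = v}).toReal
           else 0))
        = ∑ v ∈ Finset.range k,
            min (μ' {x ∈ X | γ (n+1) x = v}).toReal (ν' {x ∈ X | γ (n+1) x = v}).toReal := by
      intro i hi
      have hit : i < t := lt_trans (Nat.lt_succ_of_le hi) hmt
      rw [Finset.sum_comm]
      refine Finset.sum_congr rfl fun v _ => ?_
      by_cases hne : ({x ∈ X | γ (n+1) x = v} : Set (Fin d → ℝ)).Nonempty
      · obtain ⟨x₀, hx₀⟩ := hne
        have hcqv : ∀ w, ({x ∈ X | γ (n+1) x = v} ∩ {x ∈ X | γ i x = w}).Nonempty ↔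
            w = γ i x₀ := by
          intro w
          constructor
          · rintro ⟨x, hxv, hxw⟩
            have hq := hchain (n+1) hn1t i (le_trans hi (Nat.le_succ n)) x hxv.1 x₀ hx₀.1
              (hxv.2.trans hx₀.2.symm)
            rw [← hxw.2, hq]
          · rintro rfl
            exact ⟨x₀, hx₀, hx₀.1, rfl⟩
        simp only [hcqv]
        rw [Finset.sum_ite_eq' (Finset.range k) (γ i x₀)]
        rw [if_pos (Finset.mem_range.mpr (hk i hit x₀ hx₀.1))]
      · have hempty : {x ∈ X | γ (n+1) x = v} = ∅ := Set.not_nonempty_iff_eq_empty.mp hne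
        rw [hempty]
        simp
    have hru : (μres Set.univ).toReal = (μ' Set.univ).toReal
        - ∑ v ∈ Finset.range k,
            min (μ' {x ∈ X | γ (n+1) x = v}).toReal (ν' {x ∈ X | γ (n+1) x = v}).toReal := by
      have h1 := toReal_sub_of_add_eq (measure_ne_top _ _) (hTne Set.univ) hcU.1
      rw [h1, hTtoReal]
      congr 1
      refine Finset.sum_congr rfl fun v _ => ?_
      by_cases hne : ({x ∈ X | γ (n+1) x = v} ∩ Set.univ).Nonempty
      · rw [if_pos hne]
      · rw [if_neg hne]
        rw [Set.inter_univ] at hne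
        rw [Set.not_nonempty_iff_eq_empty.mp hne]
        simp
    have hres_sum : ∀ i, i ≤ n →
        (∑ w ∈ Finset.range k,
          min (μres {x ∈ X | γ i x = w}).toReal (νres {x ∈ X | γ i x = w}).toReal)
        = (∑ w ∈ Finset.range k,
            min (μ' {x ∈ X | γ i x = w}).toReal (ν' {x ∈ X | γ i x = w}).toReal)
          - ∑ v ∈ Finset.range k,
              min (μ' {x ∈ X | γ (n+1) x = v}).toReal (ν' {x ∈ X | γ (n+1) x = v}).toReal := by
      intro i hi
      rw [← hB i hi, ← Finset.sum_sub_distrib]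
      exact Finset.sum_congr rfl fun w _ => hres_cell i hi w
    obtain ⟨πr, hπrfin, hπrfst, hπrsnd, hπrint, hπrcost⟩ :=
      ihn hnt μres νres hμrfin hνrfin hμrX hνrX hmassres
    refine ⟨πd + πr, inferInstance, ?_, ?_, hint.add_measure hπrint, ?_⟩
    · rw [Measure.map_add _ _ measurable_fst, hπrfst]; exact hfst
    · rw [Measure.map_add _ _ measurable_snd, hπrsnd]; exact hsnd
    · rw [integral_add_measure hint hπrint]
      have hdiag : (∑ w ∈ Finset.range k,
            min (μres {x ∈ X | γ n x = w}).toReal (νres {x ∈ X | γ n x = w}).toReal *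
              lpNormalizedDiam d p {x ∈ X | γ n x = w})
          ≤ δ (n+1) * ((∑ w ∈ Finset.range k,
              min (μ' {x ∈ X | γ n x = w}).toReal (ν' {x ∈ X | γ n x = w}).toReal)
            - ∑ v ∈ Finset.range k,
                min (μ' {x ∈ X | γ (n+1) x = v}).toReal (ν' {x ∈ X | γ (n+1) x = v}).toReal) := by
        calc (∑ w ∈ Finset.range k,
            min (μres {x ∈ X | γ n x = w}).toReal (νres {x ∈ X | γ n x = w}).toReal *
              lpNormalizedDiam d p {x ∈ X | γ n x = w})
            ≤ ∑ w ∈ Finset.range k,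
              min (μres {x ∈ X | γ n x = w}).toReal (νres {x ∈ X | γ n x = w}).toReal *
                δ (n+1) :=
              Finset.sum_le_sum fun w _ => mul_le_mul_of_nonneg_left (hdiam n hnt w)
                (le_min ENNReal.toReal_nonneg ENNReal.toReal_nonneg)
          _ = (∑ w ∈ Finset.range k,
              min (μres {x ∈ X | γ n x = w}).toReal (νres {x ∈ X | γ n x = w}).toReal) *
                δ (n+1) := (Finset.sum_mul _ _ _).symm
          _ = ((∑ w ∈ Finset.range k,
              min (μ' {x ∈ X | γ n x = w}).toReal (ν' {x ∈ X | γ n x = w}).toReal)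
            - ∑ v ∈ Finset.range k,
                min (μ' {x ∈ X | γ (n+1) x = v}).toReal (ν' {x ∈ X | γ (n+1) x = v}).toReal) *
                δ (n+1) := by rw [hres_sum n le_rfl]
          _ = _ := mul_comm _ _
      have e0 : δ 0 * ((μres Set.univ).toReal -
          ∑ v ∈ Finset.range k,
            min (μres {x ∈ X | γ 0 x = v}).toReal (νres {x ∈ X | γ 0 x = v}).toReal)
          = δ 0 * ((μ' Set.univ).toReal -
            ∑ v ∈ Finset.range k,
              min (μ' {x ∈ X | γ 0 x = v}).toReal (ν' {x ∈ X | γ 0 x = v}).toReal) := by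
        rw [hru, hres_sum 0 (Nat.zero_le n)]
        ring
      have e1 : (∑ i ∈ Finset.range n, δ (i + 1) *
            ((∑ v ∈ Finset.range k,
                min (μres {x ∈ X | γ i x = v}).toReal (νres {x ∈ X | γ i x = v}).toReal) -
             (∑ v ∈ Finset.range k,
                min (μres {x ∈ X | γ (i+1) x = v}).toReal (νres {x ∈ X | γ (i+1) x = v}).toReal)))
          = ∑ i ∈ Finset.range n, δ (i + 1) *
            ((∑ v ∈ Finset.range k,
                min (μ' {x ∈ X | γ i x = v}).toReal (ν' {x ∈ X | γ i x = v}).toReal) -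
             (∑ v ∈ Finset.range k,
                min (μ' {x ∈ X | γ (i+1) x = v}).toReal (ν' {x ∈ X | γ (i+1) x = v}).toReal)) :=
        Finset.sum_congr rfl fun i hi => by
          rw [hres_sum i (le_of_lt (Finset.mem_range.mp hi)),
            hres_sum (i+1) (Finset.mem_range.mp hi)]
          ring
      rw [e0, e1] at hπrcost
      have hcost2 : (∑ v ∈ Finset.range k,
          (min (μ' {x ∈ X | γ (n+1) x = v}) (ν' {x ∈ X | γ (n+1) x = v})).toReal *
            lpNormalizedDiam d p {x ∈ X | γ (n+1) x = v})
          = ∑ v ∈ Finset.range k,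
            min (μ' {x ∈ X | γ (n+1) x = v}).toReal (ν' {x ∈ X | γ (n+1) x = v}).toReal *
              lpNormalizedDiam d p {x ∈ X | γ (n+1) x = v} :=
        Finset.sum_congr rfl fun v _ => by
          rw [ENNReal.toReal_min (measure_ne_top _ _) (measure_ne_top _ _)]
      rw [Finset.sum_range_succ]
      linarith [hcost, hπrcost, hdiag, hcost2]


/-- Let `X ⊂ ℝ^d` be bounded, equipped with the normalized `ℓ_p`
metric, `p ≥ 1`.  Let `μ, ν` be Borel probability measures on `X`, and let
`γ 0, …, γ (t-1)` be a hierarchical clustering of `X` into at most `k` measurable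
cells per level (cell of `x` at level `i` is `{y ∈ X | γ i y = γ i x}`), each level
refining the previous, with diameter bounds `δ (i+1)` and `δ 0 = diam X`.  Then
`EMD(μ,ν) ≤ Σ_{i=0}^{t-1} δ i · d_TV(μ_{γ i}, ν_{γ i}) + Σ_v μ(cell_{t-1} v)·diam(cell_{t-1} v)`. -/
theorem emd_le_hierarchical_clustering_bound_continuous
    (d : ℕ) (hd : 1 ≤ d) (p : ℝ) (hp : 1 ≤ p)
    (X : Set (Fin d → ℝ)) (hX : Bornology.IsBounded X)
    (μ ν : Measure (Fin d → ℝ))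
    [IsProbabilityMeasure μ] [IsProbabilityMeasure ν]
    (hμX : μ X = 1) (hνX : ν X = 1)
    (t : ℕ) (ht : 1 ≤ t) (k : ℕ)
    (γ : ℕ → (Fin d → ℝ) → ℕ)
    (hk : ∀ i < t, ∀ x ∈ X, γ i x < k)
    (hmeas : ∀ i < t, ∀ v : ℕ, MeasurableSet {x ∈ X | γ i x = v})
    (hrefine : ∀ i, i + 1 < t → ∀ x ∈ X, ∀ y ∈ X,
      γ (i + 1) x = γ (i + 1) y → γ i x = γ i y)
    (δ : ℕ → ℝ)
    (hδ0 : δ 0 = lpNormalizedDiam d p X)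
    (hdiam : ∀ i < t, ∀ v : ℕ, lpNormalizedDiam d p {x ∈ X | γ i x = v} ≤ δ (i + 1)) :
    sInf {c : ℝ | ∃ π : Measure ((Fin d → ℝ) × (Fin d → ℝ)),
        IsProbabilityMeasure π ∧
        π.map Prod.fst = μ ∧ π.map Prod.snd = ν ∧
        c = ∫ q, lpNormalizedDist d p q.1 q.2 ∂π} ≤
      (∑ i ∈ Finset.range t, δ i *
          ((1 / 2) * ∑ v ∈ Finset.range k,
            |(μ {x ∈ X | γ i x = v}).toReal - (ν {x ∈ X | γ i x = v}).toReal|)) +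
        ∑ v ∈ Finset.range k,
          (μ {x ∈ X | γ (t - 1) x = v}).toReal *
            lpNormalizedDiam d p {x ∈ X | γ (t - 1) x = v} := by
  classical
  have ht0 : 0 < t := ht
  have hXm : MeasurableSet X := by
    have hXeq : X = ⋃ v ∈ Finset.range k, {x ∈ X | γ 0 x = v} := by
      ext x
      simp only [Set.mem_iUnion, Finset.mem_range, Set.mem_setOf_eq, exists_prop]
      constructor
      · intro hx
        exact ⟨γ 0 x, hk 0 ht0 x hx, hx, rfl⟩
      · rintro ⟨v, _, hx, _⟩
        exact hx
    rw [hXeq]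
    exact (Finset.range k).measurableSet_biUnion fun v _ => hmeas 0 ht0 v
  have hμXc : μ Xᶜ = 0 := by
    rw [measure_compl hXm (measure_ne_top _ _), measure_univ, hμX, tsub_self]
  have hνXc : ν Xᶜ = 0 := by
    rw [measure_compl hXm (measure_ne_top _ _), measure_univ, hνX, tsub_self]
  have hmass : μ Set.univ = ν Set.univ := by rw [measure_univ, measure_univ]
  have hm1t : t - 1 < t := Nat.sub_lt ht0 one_pos
  obtain ⟨π, hπfin, hπfst, hπsnd, hπint, hπcost⟩ :=
    hier_coupling d hd p hp X hX t ht k γ hk hmeas hrefine δ hδ0 hdiam (t - 1) hm1t μ ν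
      inferInstance inferInstance hμXc hνXc hmass
  -- π is a probability measure
  have hπuniv : π Set.univ = 1 := by
    have h1 : π.map Prod.fst Set.univ = μ Set.univ := by rw [hπfst]
    rw [Measure.map_apply measurable_fst MeasurableSet.univ, Set.preimage_univ] at h1
    rw [h1, measure_univ]
  have hπprob : IsProbabilityMeasure π := ⟨hπuniv⟩
  -- membership in the coupling-cost set
  have hmem : (∫ q, lpNormalizedDist d p q.1 q.2 ∂π) ∈
      {c : ℝ | ∃ π : Measure ((Fin d → ℝ) × (Fin d → ℝ)),
        IsProbabilityMeasure π ∧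
        π.map Prod.fst = μ ∧ π.map Prod.snd = ν ∧
        c = ∫ q, lpNormalizedDist d p q.1 q.2 ∂π} := ⟨π, hπprob, hπfst, hπsnd, rfl⟩
  have hbdd : BddBelow {c : ℝ | ∃ π : Measure ((Fin d → ℝ) × (Fin d → ℝ)),
      IsProbabilityMeasure π ∧
      π.map Prod.fst = μ ∧ π.map Prod.snd = ν ∧
      c = ∫ q, lpNormalizedDist d p q.1 q.2 ∂π} := by
    refine ⟨0, ?_⟩
    rintro c ⟨π', _, _, _, rfl⟩
    exact integral_nonneg fun q => lpDist_nonneg d p q.1 q.2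
  refine le_trans (csInf_le hbdd hmem) (le_trans hπcost ?_)
  -- partition sums equal one
  have hpart : ∀ (ρ : Measure (Fin d → ℝ)), ρ X = 1 → ∀ i, i < t →
      (∑ v ∈ Finset.range k, ρ {x ∈ X | γ i x = v}) = 1 := by
    intro ρ hρ i hit
    have hdisj : (↑(Finset.range k) : Set ℕ).PairwiseDisjoint
        (fun v => {x ∈ X | γ i x = v}) := by
      intro v _ w _ hvw
      refine Set.disjoint_left.mpr fun x hxv hxw => ?_
      exact hvw (hxv.2 ▸ hxw.2 ▸ rfl)
    rw [← measure_biUnion_finset hdisj (fun v _ => hmeas i hit v)]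
    have hXeq : (⋃ v ∈ Finset.range k, {x ∈ X | γ i x = v}) = X := by
      ext x
      simp only [Set.mem_iUnion, Finset.mem_range, Set.mem_setOf_eq, exists_prop]
      constructor
      · rintro ⟨v, _, hx, _⟩
        exact hx
      · intro hx
        exact ⟨γ i x, hk i hit x hx, hx, rfl⟩
    rw [hXeq, hρ]
  have hsum1μ : ∀ i, i < t →
      (∑ v ∈ Finset.range k, (μ {x ∈ X | γ i x = v}).toReal) = 1 := by
    intro i hit
    have h := congrArg ENNReal.toReal (hpart μ hμX i hit)
    rwa [ENNReal.toReal_sum (fun v _ => measure_ne_top _ _), ENNReal.toReal_one] at h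
  have hsum1ν : ∀ i, i < t →
      (∑ v ∈ Finset.range k, (ν {x ∈ X | γ i x = v}).toReal) = 1 := by
    intro i hit
    have h := congrArg ENNReal.toReal (hpart ν hνX i hit)
    rwa [ENNReal.toReal_sum (fun v _ => measure_ne_top _ _), ENNReal.toReal_one] at h
  -- total variation identity
  have hTV : ∀ i, i < t →
      (1 / 2 : ℝ) * ∑ v ∈ Finset.range k,
        |(μ {x ∈ X | γ i x = v}).toReal - (ν {x ∈ X | γ i x = v}).toReal|
      = 1 - ∑ v ∈ Finset.range k,
          min (μ {x ∈ X | γ i x = v}).toReal (ν {x ∈ X | γ i x = v}).toReal := by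
    intro i hit
    have habs : ∀ x y : ℝ, |x - y| = x + y - 2 * min x y := by
      intro x y
      rcases le_total x y with h | h
      · rw [abs_of_nonpos (by linarith), min_eq_left h]; ring
      · rw [abs_of_nonneg (by linarith), min_eq_right h]; ring
    have hs : (∑ v ∈ Finset.range k,
        |(μ {x ∈ X | γ i x = v}).toReal - (ν {x ∈ X | γ i x = v}).toReal|)
        = (∑ v ∈ Finset.range k, (μ {x ∈ X | γ i x = v}).toReal)
          + (∑ v ∈ Finset.range k, (ν {x ∈ X | γ i x = v}).toReal)
          - 2 * ∑ v ∈ Finset.range k,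
              min (μ {x ∈ X | γ i x = v}).toReal (ν {x ∈ X | γ i x = v}).toReal := by
      rw [Finset.sum_congr rfl (fun v _ => habs _ _), Finset.mul_sum,
        ← Finset.sum_add_distrib, ← Finset.sum_sub_distrib]
    rw [hs, hsum1μ i hit, hsum1ν i hit]
    ring
  -- δ's at positive levels are nonnegative
  have hδnn : ∀ i, i < t → 0 ≤ δ (i + 1) := fun i hit =>
    le_trans (lpDiam_nonneg d p _) (hdiam i hit 0)
  -- M i ≤ 1
  have hMle : ∀ i, i < t →
      (∑ v ∈ Finset.range k,
        min (μ {x ∈ X | γ i x = v}).toReal (ν {x ∈ X | γ i x = v}).toReal) ≤ 1 := by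
    intro i hit
    rw [← hsum1μ i hit]
    exact Finset.sum_le_sum fun v _ => min_le_left _ _
  -- final arithmetic
  have htt : t - 1 + 1 = t := Nat.succ_pred_eq_of_pos ht0
  rw [← htt, Finset.sum_range_succ']
  rw [htt]
  -- goal now: hier bound ≤ (∑ i ∈ range (t-1), δ (i+1) * TV (i+1)) + δ 0 * TV 0 + diag
  have hterm1 : δ 0 * ((μ Set.univ).toReal -
      ∑ v ∈ Finset.range k,
        min (μ {x ∈ X | γ 0 x = v}).toReal (ν {x ∈ X | γ 0 x = v}).toReal)
      = δ 0 * ((1 / 2 : ℝ) * ∑ v ∈ Finset.range k,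
        |(μ {x ∈ X | γ 0 x = v}).toReal - (ν {x ∈ X | γ 0 x = v}).toReal|) := by
    rw [hTV 0 ht0, measure_univ, ENNReal.toReal_one]
  have hterm2 : (∑ i ∈ Finset.range (t - 1), δ (i + 1) *
      ((∑ v ∈ Finset.range k,
          min (μ {x ∈ X | γ i x = v}).toReal (ν {x ∈ X | γ i x = v}).toReal) -
       (∑ v ∈ Finset.range k,
          min (μ {x ∈ X | γ (i + 1) x = v}).toReal (ν {x ∈ X | γ (i + 1) x = v}).toReal)))
      ≤ ∑ i ∈ Finset.range (t - 1), δ (i + 1) *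
        ((1 / 2 : ℝ) * ∑ v ∈ Finset.range k,
          |(μ {x ∈ X | γ (i + 1) x = v}).toReal - (ν {x ∈ X | γ (i + 1) x = v}).toReal|) := by
    refine Finset.sum_le_sum fun i hi => ?_
    have hi1t : i + 1 < t := by
      have := Finset.mem_range.mp hi
      omega
    have hit : i < t := Nat.lt_of_succ_lt hi1t
    rw [hTV (i + 1) hi1t]
    exact mul_le_mul_of_nonneg_left (by linarith [hMle i hit]) (hδnn i hit)
  have hterm3 : (∑ v ∈ Finset.range k,
      min (μ {x ∈ X | γ (t - 1) x = v}).toReal (ν {x ∈ X | γ (t - 1) x = v}).toReal *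
        lpNormalizedDiam d p {x ∈ X | γ (t - 1) x = v})
      ≤ ∑ v ∈ Finset.range k,
        (μ {x ∈ X | γ (t - 1) x = v}).toReal *
          lpNormalizedDiam d p {x ∈ X | γ (t - 1) x = v} :=
    Finset.sum_le_sum fun v _ =>
      mul_le_mul_of_nonneg_right (min_le_left _ _) (lpDiam_nonneg d p _)
  linarith [hterm1, hterm2, hterm3]
end

section
/- Let n ∈ ℕ, let m > 0 be a real number, and let μ be a probability vector on {0,…,n−1}. Let T_0, …, T_{n−1} be mutually independent random variables with T_i ∼ Poisson(m·μ_i), and let Φ be a random n×n real matrix, independent of (T_0,…,T_{n−1}), that is symmetric, has all entries in {0,1}, and has Φ_{ii} = 1 for every i. Define the test statistic Y = (1/m²)·(Σ_{i,j} T_i T_j Φ_{ij} − Σ_i T_i). Then E[Y] = μᵀ · E[Φ] · μ, i.e. E[Y] = Σ_{i,j} μ_i μ_j E[Φ_{ij}]. -/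
open scoped BigOperators
open MeasureTheory ProbabilityTheory

private lemma exp_tsum' (lam : ℝ) : Real.exp lam = ∑' k : ℕ, lam ^ k / k.factorial := by
  rw [Real.exp_eq_exp_ℝ, NormedSpace.exp_eq_tsum_div]

private lemma summable1' (lam : ℝ) :
    Summable (fun k : ℕ => (k : ℝ) * lam ^ k / k.factorial) := by
  rw [← summable_nat_add_iff 1]
  have : (fun k : ℕ => ((k + 1 : ℕ) : ℝ) * lam ^ (k + 1) / (k + 1).factorial)
      = fun k : ℕ => lam * (lam ^ k / k.factorial) := by
    funext k
    rw [Nat.factorial_succ]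
    push_cast
    field_simp
    ring
  rw [this]
  exact (Real.summable_pow_div_factorial lam).mul_left lam

private lemma tsum1' (lam : ℝ) :
    ∑' k : ℕ, (k : ℝ) * lam ^ k / k.factorial = lam * Real.exp lam := by
  rw [Summable.tsum_eq_zero_add (summable1' lam)]
  simp only [Nat.cast_zero, zero_mul, zero_div, zero_add]
  have : (fun k : ℕ => ((k + 1 : ℕ) : ℝ) * lam ^ (k + 1) / (k + 1).factorial)
      = fun k : ℕ => lam * (lam ^ k / k.factorial) := by
    funext k
    rw [Nat.factorial_succ]
    push_cast
    field_simp
    ring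
  rw [this, tsum_mul_left, ← exp_tsum']

private lemma shift2' (lam : ℝ) :
    (fun k : ℕ => ((k + 2 : ℕ) : ℝ) * ((k + 2 : ℕ) - 1) * lam ^ (k + 2) / (k + 2).factorial)
    = fun k : ℕ => lam ^ 2 * (lam ^ k / k.factorial) := by
  funext k
  rw [Nat.factorial_succ, Nat.factorial_succ]
  push_cast
  field_simp
  ring

private lemma summable2' (lam : ℝ) :
    Summable (fun k : ℕ => (k : ℝ) * ((k : ℝ) - 1) * lam ^ k / k.factorial) := by
  rw [← summable_nat_add_iff 2]
  have := shift2' lam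
  push_cast at this ⊢
  rw [this]
  exact (Real.summable_pow_div_factorial lam).mul_left _

private lemma tsum2' (lam : ℝ) :
    ∑' k : ℕ, (k : ℝ) * ((k : ℝ) - 1) * lam ^ k / k.factorial = lam ^ 2 * Real.exp lam := by
  rw [Summable.tsum_eq_zero_add (summable2' lam)]
  rw [Summable.tsum_eq_zero_add ((summable_nat_add_iff 1).mpr (summable2' lam))]
  simp only [Nat.cast_zero, Nat.cast_one, zero_mul, zero_div, zero_add, sub_self, mul_zero]
  norm_num
  rw [show (fun b : ℕ => ((b : ℝ) + 1 + 1) * ((b : ℝ) + 1) * lam ^ (b + 1 + 1) / (b + 1 + 1).factorial)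
      = fun k : ℕ => lam ^ 2 * (lam ^ k / k.factorial) from by
    funext k
    rw [Nat.factorial_succ, Nat.factorial_succ]
    push_cast
    field_simp
    ring]
  rw [tsum_mul_left, ← exp_tsum']

private lemma poisson_moment' {Ω : Type*} [MeasurableSpace Ω] (P : Measure Ω)
    [IsProbabilityMeasure P]
    (lam : ℝ) (hlam : 0 ≤ lam) (X : Ω → ℕ) (hX : Measurable X)
    (hpois : ∀ k, P {ω | X ω = k} = ENNReal.ofReal (Real.exp (-lam) * lam ^ k / k.factorial))
    (f : ℕ → ℝ) (hf : ∀ k, 0 ≤ f k)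
    (hsum : Summable fun k => f k * (Real.exp (-lam) * lam ^ k / k.factorial)) :
    Integrable (fun ω => f (X ω)) P ∧
      ∫ ω, f (X ω) ∂P = ∑' k, f k * (Real.exp (-lam) * lam ^ k / k.factorial) := by
  set p : ℕ → ℝ := fun k => Real.exp (-lam) * lam ^ k / k.factorial with hp
  have hpnn : ∀ k, 0 ≤ p k := fun k => by
    apply div_nonneg (mul_nonneg (Real.exp_pos _).le (pow_nonneg hlam _))
    positivity
  have hnn : ∀ k, 0 ≤ f k * p k := fun k => mul_nonneg (hf k) (hpnn k)
  have hmeas : Measurable fun ω => f (X ω) := measurable_from_nat.comp hX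
  have hmap : ∀ k : ℕ, (P.map X) {k} = ENNReal.ofReal (p k) := by
    intro k
    rw [Measure.map_apply hX (measurableSet_singleton k)]
    have : X ⁻¹' {k} = {ω | X ω = k} := rfl
    rw [this, hpois k]
  have hlint : ∫⁻ ω, ENNReal.ofReal (f (X ω)) ∂P = ENNReal.ofReal (∑' k, f k * p k) := by
    have h1 : ∫⁻ ω, ENNReal.ofReal (f (X ω)) ∂P
        = ∫⁻ k, ENNReal.ofReal (f k) ∂(P.map X) :=
      (lintegral_map (measurable_from_nat.ennreal_ofReal) hX).symm
    rw [h1, lintegral_countable' (f := fun k : ℕ => ENNReal.ofReal (f k)) (μ := P.map X)]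
    rw [ENNReal.ofReal_tsum_of_nonneg hnn hsum]
    congr 1
    funext k
    rw [hmap k, ← ENNReal.ofReal_mul (hf k)]
  have hint : Integrable (fun ω => f (X ω)) P := by
    refine ⟨hmeas.aestronglyMeasurable, ?_⟩
    rw [hasFiniteIntegral_iff_ofReal (ae_of_all _ fun ω => hf _), hlint]
    exact ENNReal.ofReal_lt_top
  refine ⟨hint, ?_⟩
  rw [integral_eq_lintegral_of_nonneg_ae (ae_of_all _ fun ω => hf _) hmeas.aestronglyMeasurable,
    hlint, ENNReal.toReal_ofReal (tsum_nonneg hnn)]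

private lemma poisson_mean' {Ω : Type*} [MeasurableSpace Ω] (P : Measure Ω)
    [IsProbabilityMeasure P]
    (lam : ℝ) (hlam : 0 ≤ lam) (X : Ω → ℕ) (hX : Measurable X)
    (hpois : ∀ k, P {ω | X ω = k} = ENNReal.ofReal (Real.exp (-lam) * lam ^ k / k.factorial)) :
    Integrable (fun ω => (X ω : ℝ)) P ∧ ∫ ω, (X ω : ℝ) ∂P = lam := by
  have hs : Summable fun k : ℕ => (k : ℝ) * (Real.exp (-lam) * lam ^ k / k.factorial) :=
    ((summable1' lam).mul_left (Real.exp (-lam))).congr (fun k => by ring)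
  obtain ⟨h1, h2⟩ := poisson_moment' P lam hlam X hX hpois (fun k => (k : ℝ))
    (fun k => Nat.cast_nonneg k) hs
  refine ⟨h1, ?_⟩
  rw [h2, tsum_congr (f := fun k : ℕ => (k : ℝ) * (Real.exp (-lam) * lam ^ k / k.factorial))
    (g := fun k : ℕ => Real.exp (-lam) * ((k : ℝ) * lam ^ k / k.factorial)) (fun k => by ring),
    tsum_mul_left, tsum1', Real.exp_neg]
  field_simp

private lemma poisson_sq' {Ω : Type*} [MeasurableSpace Ω] (P : Measure Ω)
    [IsProbabilityMeasure P]
    (lam : ℝ) (hlam : 0 ≤ lam) (X : Ω → ℕ) (hX : Measurable X)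
    (hpois : ∀ k, P {ω | X ω = k} = ENNReal.ofReal (Real.exp (-lam) * lam ^ k / k.factorial)) :
    Integrable (fun ω => (X ω : ℝ) * (X ω : ℝ)) P ∧
      ∫ ω, (X ω : ℝ) * (X ω : ℝ) ∂P = lam * lam + lam := by
  have hsg : Summable fun k : ℕ => (k : ℝ) * (k : ℝ) * lam ^ k / k.factorial :=
    ((summable2' lam).add (summable1' lam)).congr (fun k => by push_cast; ring)
  have hs : Summable fun k : ℕ => (k : ℝ) * (k : ℝ) * (Real.exp (-lam) * lam ^ k / k.factorial) :=
    (hsg.mul_left (Real.exp (-lam))).congr (fun k => by ring)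
  obtain ⟨h1, h2⟩ := poisson_moment' P lam hlam X hX hpois (fun k => (k : ℝ) * (k : ℝ))
    (fun k => mul_nonneg (Nat.cast_nonneg k) (Nat.cast_nonneg k)) hs
  refine ⟨h1, ?_⟩
  rw [h2, tsum_congr
    (f := fun k : ℕ => (k : ℝ) * (k : ℝ) * (Real.exp (-lam) * lam ^ k / k.factorial))
    (g := fun k : ℕ => Real.exp (-lam) * ((k : ℝ) * (k : ℝ) * lam ^ k / k.factorial))
    (fun k => by ring), tsum_mul_left]
  have hgt : ∑' k : ℕ, (k : ℝ) * (k : ℝ) * lam ^ k / k.factorial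
      = lam ^ 2 * Real.exp lam + lam * Real.exp lam := by
    rw [← tsum2' lam, ← tsum1' lam, ← Summable.tsum_add (summable2' lam) (summable1' lam)]
    exact tsum_congr (fun k => by ring)
  rw [hgt, Real.exp_neg]
  have h := Real.exp_ne_zero lam
  field_simp

/-- Let `μ` be a probability vector on `{0,…,n−1}`, let
`T_0, …, T_{n−1}` be mutually independent with `T_i ∼ Poisson(m·μ_i)`, and let `Φ`
be a random symmetric `{0,1}`-valued `n×n` matrix with unit diagonal, independent
of `(T_0,…,T_{n−1})`.  For the test statistic
`Y = (1/m²)·(Σ_{i,j} T_i T_j Φ_{ij} − Σ_i T_i)` we have `E[Y] = μᵀ·E[Φ]·μ`. -/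
theorem expectation_test_statistic
    {Ω : Type*} [MeasurableSpace Ω] (P : Measure Ω) [IsProbabilityMeasure P]
    (n : ℕ) (m : ℝ) (hm : 0 < m)
    (μ : Fin n → ℝ) (hμ0 : ∀ i, 0 ≤ μ i) (hμ1 : ∑ i, μ i = 1)
    (T : Fin n → Ω → ℕ) (hTmeas : ∀ i, Measurable (T i))
    (hTindep : iIndepFun T P)
    (hTpois : ∀ i k, P {ω | T i ω = k} =
      ENNReal.ofReal (Real.exp (-(m * μ i)) * (m * μ i) ^ k / (Nat.factorial k)))
    (Φ : Ω → Fin n → Fin n → ℝ) (hΦmeas : Measurable Φ)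
    (hIndep : IndepFun (fun ω => fun i => T i ω) Φ P)
    (hΦsymm : ∀ ω i j, Φ ω i j = Φ ω j i)
    (hΦ01 : ∀ ω i j, Φ ω i j = 0 ∨ Φ ω i j = 1)
    (hΦdiag : ∀ ω i, Φ ω i i = 1) :
    ∫ ω, (1 / m ^ 2) *
        ((∑ i, ∑ j, (T i ω : ℝ) * (T j ω : ℝ) * Φ ω i j) - ∑ i, (T i ω : ℝ)) ∂P
      = ∑ i, ∑ j, μ i * μ j * ∫ ω, Φ ω i j ∂P := by
  have hlam : ∀ i, 0 ≤ m * μ i := fun i => mul_nonneg hm.le (hμ0 i)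
  have hmean : ∀ i, Integrable (fun ω => (T i ω : ℝ)) P ∧
      ∫ ω, (T i ω : ℝ) ∂P = m * μ i :=
    fun i => poisson_mean' P (m * μ i) (hlam i) (T i) (hTmeas i) (hTpois i)
  have hsq : ∀ i, Integrable (fun ω => (T i ω : ℝ) * (T i ω : ℝ)) P ∧
      ∫ ω, (T i ω : ℝ) * (T i ω : ℝ) ∂P = (m * μ i) * (m * μ i) + m * μ i :=
    fun i => poisson_sq' P (m * μ i) (hlam i) (T i) (hTmeas i) (hTpois i)
  have hΦijmeas : ∀ i j, Measurable fun ω => Φ ω i j :=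
    fun i j => (measurable_pi_apply j).comp ((measurable_pi_apply i).comp hΦmeas)
  have hΦint : ∀ i j, Integrable (fun ω => Φ ω i j) P := by
    intro i j
    refine Integrable.mono' (integrable_const (1 : ℝ))
      (hΦijmeas i j).aestronglyMeasurable (ae_of_all _ ?_)
    intro ω
    rcases hΦ01 ω i j with h | h <;> simp [h]
  have hTT : ∀ i j, i ≠ j →
      IndepFun (fun ω => (T i ω : ℝ)) (fun ω => (T j ω : ℝ)) P :=
    fun i j hij => (hTindep.indepFun hij).comp measurable_from_nat measurable_from_nat
  have hTTint : ∀ i j, Integrable (fun ω => (T i ω : ℝ) * (T j ω : ℝ)) P := by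
    intro i j
    by_cases hij : i = j
    · subst hij; exact (hsq i).1
    · exact (hTT i j hij).integrable_mul (hmean i).1 (hmean j).1
  have hIndepTTΦ : ∀ i j,
      IndepFun (fun ω => (T i ω : ℝ) * (T j ω : ℝ)) (fun ω => Φ ω i j) P := by
    intro i j
    exact hIndep.comp (φ := fun v : Fin n → ℕ => (v i : ℝ) * (v j : ℝ))
      (ψ := fun M : Fin n → Fin n → ℝ => M i j)
      ((measurable_from_nat.comp (measurable_pi_apply i)).mul
        (measurable_from_nat.comp (measurable_pi_apply j)))
      ((measurable_pi_apply j).comp (measurable_pi_apply i))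
  have htermInt : ∀ i j, Integrable (fun ω => (T i ω : ℝ) * (T j ω : ℝ) * Φ ω i j) P :=
    fun i j => (hIndepTTΦ i j).integrable_mul (hTTint i j) (hΦint i j)
  have hΦdiagInt : ∀ i, ∫ ω, Φ ω i i ∂P = 1 := by
    intro i
    simp [hΦdiag]
  have htermVal : ∀ i j, ∫ ω, (T i ω : ℝ) * (T j ω : ℝ) * Φ ω i j ∂P
      = m ^ 2 * (μ i * μ j * ∫ ω, Φ ω i j ∂P) + (if i = j then m * μ i else 0) := by
    intro i j
    have h1 : ∫ ω, (T i ω : ℝ) * (T j ω : ℝ) * Φ ω i j ∂P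
        = (∫ ω, (T i ω : ℝ) * (T j ω : ℝ) ∂P) * ∫ ω, Φ ω i j ∂P :=
      (hIndepTTΦ i j).integral_fun_mul_eq_mul_integral (hTTint i j).1 (hΦint i j).1
    by_cases hij : i = j
    · subst hij
      rw [h1, (hsq i).2, hΦdiagInt i, if_pos rfl]
      ring
    · have h2 : ∫ ω, (T i ω : ℝ) * (T j ω : ℝ) ∂P = (m * μ i) * (m * μ j) := by
        have := (hTT i j hij).integral_mul_eq_mul_integral (hmean i).1.1 (hmean j).1.1
        rw [show (fun ω => (T i ω : ℝ)) * (fun ω => (T j ω : ℝ))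
            = fun ω => (T i ω : ℝ) * (T j ω : ℝ) from rfl] at this
        rw [this, (hmean i).2, (hmean j).2]
      rw [h1, h2, if_neg hij]
      ring
  have hBigInt : Integrable (fun ω => ∑ i, ∑ j, (T i ω : ℝ) * (T j ω : ℝ) * Φ ω i j) P := by
    apply integrable_finset_sum
    intro i _
    exact integrable_finset_sum _ (fun j _ => htermInt i j)
  have hSumInt : Integrable (fun ω => ∑ i, (T i ω : ℝ)) P :=
    integrable_finset_sum _ (fun i _ => (hmean i).1)
  rw [MeasureTheory.integral_const_mul, integral_sub hBigInt hSumInt,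
    integral_finset_sum _ (fun i _ => integrable_finset_sum _ (fun j _ => htermInt i j)),
    integral_finset_sum _ (fun i _ => (hmean i).1)]
  rw [show (∑ i, ∫ ω, ∑ j, (T i ω : ℝ) * (T j ω : ℝ) * Φ ω i j ∂P)
      = ∑ i, ∑ j, ∫ ω, (T i ω : ℝ) * (T j ω : ℝ) * Φ ω i j ∂P from
    Finset.sum_congr rfl (fun i _ => integral_finset_sum _ (fun j _ => htermInt i j))]
  rw [show (∑ i, ∑ j, ∫ ω, (T i ω : ℝ) * (T j ω : ℝ) * Φ ω i j ∂P)
      = ∑ i, ∑ j, (m ^ 2 * (μ i * μ j * ∫ ω, Φ ω i j ∂P) + (if i = j then m * μ i else 0)) from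
    Finset.sum_congr rfl (fun i _ => Finset.sum_congr rfl (fun j _ => htermVal i j))]
  rw [show (∑ i, ∫ ω, (T i ω : ℝ) ∂P) = ∑ i, m * μ i from
    Finset.sum_congr rfl (fun i _ => (hmean i).2)]
  simp only [Finset.sum_add_distrib, Finset.sum_ite_eq, Finset.mem_univ, if_true,
    ← Finset.mul_sum]
  have hm2 : m ^ 2 ≠ 0 := pow_ne_zero 2 hm.ne'
  field_simp
  ring
end

section
/- For every n ∈ ℕ with n ≥ 1 and every ρ ∈ (0,1], setting η = 1 − ρ, every eigenvalue of the n×n real symmetric matrix A(n,η) with entries A(n,η)_{ij} = η^{|i−j|} is strictly greater than ρ/2; equivalently, A(n,η) − (ρ/2)·I is positive definite. -/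
open Finset

private def pathS (η : ℝ) (x : ℕ → ℝ) (k : ℕ) : ℝ :=
  ∑ i ∈ range k, η ^ (k - 1 - i) * x i

private def pathQ (η : ℝ) (x : ℕ → ℝ) (k : ℕ) : ℝ :=
  ∑ i ∈ range k, ∑ j ∈ range k, η ^ ((i : ℤ) - (j : ℤ)).natAbs * x i * x j

private lemma pathS_succ (η : ℝ) (x : ℕ → ℝ) (k : ℕ) :
    pathS η x (k + 1) = η * pathS η x k + x k := by
  unfold pathS
  rw [sum_range_succ, mul_sum]
  congr 1
  · apply sum_congr rfl
    intro i hi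
    rw [mem_range] at hi
    rw [← mul_assoc, ← pow_succ']
    congr 2
    omega
  · simp

private lemma pathQ_succ (η : ℝ) (x : ℕ → ℝ) (k : ℕ) :
    pathQ η x (k + 1) = pathQ η x k + 2 * (η * pathS η x k) * x k + x k * x k := by
  have hcross : ∀ i ∈ range k, η ^ ((i : ℤ) - ((k : ℕ) : ℤ)).natAbs * x i * x k
      = (η * (η ^ (k - 1 - i) * x i)) * x k := by
    intro i hi
    rw [mem_range] at hi
    have h1 : ((i : ℤ) - (k : ℤ)).natAbs = k - 1 - i + 1 := by omega
    rw [h1, pow_succ']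
    ring
  have hcross' : ∀ j ∈ range k, η ^ (((k : ℕ) : ℤ) - (j : ℤ)).natAbs * x k * x j
      = (η * (η ^ (k - 1 - j) * x j)) * x k := by
    intro j hj
    rw [mem_range] at hj
    have h1 : ((k : ℤ) - (j : ℤ)).natAbs = k - 1 - j + 1 := by omega
    rw [h1, pow_succ']
    ring
  unfold pathQ pathS
  rw [sum_range_succ]
  simp only [sum_range_succ]
  rw [sum_add_distrib, sum_congr rfl hcross, sum_congr rfl hcross', ← sum_mul, ← mul_sum]
  simp only [sub_self, Int.natAbs_zero, pow_zero, one_mul]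
  ring

private lemma pathQ_ge (η : ℝ) (h0 : 0 ≤ η) (h1 : η ≤ 1) (x : ℕ → ℝ) (k : ℕ) :
    (1 - η) * ∑ i ∈ range k, x i ^ 2 + (1 + η) * η * pathS η x k ^ 2
      ≤ (1 + η) * pathQ η x k := by
  induction k with
  | zero => simp [pathQ, pathS]
  | succ k ih =>
    rw [pathQ_succ, pathS_succ, sum_range_succ]
    nlinarith [mul_nonneg (mul_nonneg h0 (by linarith : (0:ℝ) ≤ 1 - η))
      (sq_nonneg ((1 + η) * pathS η x k + x k)), ih]

/-- For every `n ≥ 1` and `ρ ∈ (0,1]`, with `η = 1 − ρ`, every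
eigenvalue of the `n×n` symmetric Toeplitz matrix `A(n,η)` with entries
`A_{ij} = η^{|i−j|}` is strictly greater than `ρ/2`; equivalently,
`A(n,η) − (ρ/2)·I` is positive definite. -/
theorem min_eigenvalue_path_matrix
    (n : ℕ) (hn : 1 ≤ n) (ρ η : ℝ) (hρ0 : 0 < ρ) (hρ1 : ρ ≤ 1) (hη : η = 1 - ρ)
    (A : Matrix (Fin n) (Fin n) ℝ)
    (hA : ∀ i j, A i j = η ^ (((i : ℤ) - (j : ℤ)).natAbs)) :
    (∀ t : ℝ, Module.End.HasEigenvalue (Matrix.toLin' A) t → ρ / 2 < t) ∧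
      (A - (ρ / 2) • (1 : Matrix (Fin n) (Fin n) ℝ)).PosDef := by
  have hη0 : 0 ≤ η := by rw [hη]; linarith
  have hη1 : η ≤ 1 := by rw [hη]; linarith
  have hAsymm : ∀ i j, A i j = A j i := by
    intro i j
    rw [hA, hA]
    congr 1
    omega
  have hposdef : (A - (ρ / 2) • (1 : Matrix (Fin n) (Fin n) ℝ)).PosDef := by
    rw [Matrix.posDef_iff_dotProduct_mulVec]
    constructor
    · ext i j
      simp only [Matrix.conjTranspose_apply, Matrix.sub_apply, Matrix.smul_apply,
        Matrix.one_apply, starRingEnd_apply, star_trivial, star_sub, star_smul]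
      rw [hAsymm i j]
      by_cases h : i = j <;> simp [h, eq_comm]
    · intro v hv
      set x : ℕ → ℝ := fun i => if h : i < n then v ⟨i, h⟩ else 0 with hxdef
      have hx : ∀ i : Fin n, x (i : ℕ) = v i := by
        intro i
        simp [hxdef, i.isLt]
      have hsum : ∑ i ∈ range n, x i ^ 2 = ∑ i : Fin n, v i ^ 2 := by
        rw [← Fin.sum_univ_eq_sum_range]
        exact Finset.sum_congr rfl fun i _ => by rw [hx]
      have hQ : pathQ η x n = ∑ i : Fin n, ∑ j : Fin n, A i j * v i * v j := by
        unfold pathQ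
        rw [← Fin.sum_univ_eq_sum_range]
        apply Finset.sum_congr rfl
        intro i _
        rw [← Fin.sum_univ_eq_sum_range]
        apply Finset.sum_congr rfl
        intro j _
        rw [hx, hx, hA]
      have hvv : 0 < ∑ i : Fin n, v i ^ 2 := by
        obtain ⟨i, hi⟩ := Function.ne_iff.mp hv
        apply Finset.sum_pos' (fun i _ => sq_nonneg _)
        exact ⟨i, Finset.mem_univ i, lt_of_le_of_ne (sq_nonneg _) (Ne.symm (pow_ne_zero 2 hi))⟩
      have hkey := pathQ_ge η hη0 hη1 x n
      rw [hsum, hQ] at hkey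
      have hquad : dotProduct (star v)
            ((A - (ρ / 2) • (1 : Matrix (Fin n) (Fin n) ℝ)).mulVec v)
          = (∑ i : Fin n, ∑ j : Fin n, A i j * v i * v j) - (ρ / 2) * ∑ i : Fin n, v i ^ 2 := by
        rw [Matrix.sub_mulVec, Matrix.smul_mulVec, Matrix.one_mulVec,
          dotProduct_sub, dotProduct_smul]
        simp only [star_trivial, smul_eq_mul]
        congr 1
        · simp only [dotProduct, Matrix.mulVec, Finset.mul_sum]
          apply Finset.sum_congr rfl
          intro i _
          apply Finset.sum_congr rfl
          intro j _
          ring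
        · congr 1
          simp [dotProduct, sq]
      rw [hquad]
      have hS := sq_nonneg (pathS η x n)
      have h1η : 0 < 1 + η := by linarith
      nlinarith [mul_pos hρ0 hvv, hkey, mul_nonneg (mul_nonneg h1η.le hη0) hS]
  refine ⟨?_, hposdef⟩
  intro t ht
  obtain ⟨v, hv⟩ := ht.exists_hasEigenvector
  have hAv : A.mulVec v = t • v := by
    have h := hv.apply_eq_smul
    rwa [Matrix.toLin'_apply] at h
  have h1 := hposdef.dotProduct_mulVec_pos hv.right
  have h2 : (A - (ρ / 2) • (1 : Matrix (Fin n) (Fin n) ℝ)).mulVec v = (t - ρ / 2) • v := by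
    rw [Matrix.sub_mulVec, hAv, Matrix.smul_mulVec, Matrix.one_mulVec, ← sub_smul]
  rw [h2, dotProduct_smul] at h1
  have hvv : 0 ≤ dotProduct (star v) v := by
    simp only [star_trivial, dotProduct]
    exact Finset.sum_nonneg fun i _ => mul_self_nonneg _
  simp only [smul_eq_mul] at h1
  nlinarith [h1, hvv]
end

section
/- For every δ ∈ (0,1) and every C > 0 there exists N ∈ ℕ such that for all n ≥ N and all ρ ∈ (0,1] with ρ ≥ C·n^{−δ}, setting η = 1 − ρ, every eigenvalue of the n×n real symmetric circulant matrix M with entries M_{ij} = η^{min(|i−j|, n−|i−j|)} (rows and columns indexed by {0,…,n−1}) is strictly greater than ρ/3. -/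
open Real Filter Finset Matrix

private lemma sac_c_bound (n v : ℕ) (η : ℝ) (h0 : 0 ≤ η) (h1 : η ≤ 1) (hn : 12 ≤ n)
    (hv1 : 1 ≤ v) (hv2 : v ≤ n - 1) :
    |(1 + η^2) * η ^ (min v (n - v)) - η * η ^ (min (v+1) (n - (v+1)))
      - η * η ^ (min (v-1) (n - (v-1)))| ≤ 4 * η ^ ((n-3)/2) := by
  rcases le_or_gt (2*(v+1)) n with hc | hc
  · obtain ⟨w, rfl⟩ : ∃ w, v = w + 1 := ⟨v - 1, by omega⟩
    rw [show min (w+1) (n - (w+1)) = w+1 by omega,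
        show min (w+1+1) (n - (w+1+1)) = w+2 by omega,
        show min (w+1-1) (n - (w+1-1)) = w by omega]
    rw [show (1 + η^2) * η ^ (w+1) - η * η ^ (w+2) - η * η ^ w = 0 by ring]
    simp
    positivity
  rcases le_or_gt n (2*(v-1)) with hc2 | hc2
  · obtain ⟨w, hw⟩ : ∃ w, n - v = w + 1 := ⟨n - v - 1, by omega⟩
    rw [show min v (n - v) = w + 1 by omega,
        show min (v+1) (n - (v+1)) = w by omega,
        show min (v-1) (n - (v-1)) = w + 2 by omega]
    rw [show (1 + η^2) * η ^ (w+1) - η * η ^ w - η * η ^ (w+2) = 0 by ring]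
    simp
    positivity
  · set q := (n-3)/2 with hq
    have e1 : q ≤ min v (n - v) := by omega
    have e2 : q ≤ min (v+1) (n - (v+1)) + 1 := by omega
    have e3 : q ≤ min (v-1) (n - (v-1)) + 1 := by omega
    have hpow : ∀ a b : ℕ, a ≤ b → η ^ b ≤ η ^ a := fun a b hab =>
      pow_le_pow_of_le_one h0 h1 hab
    have b1 : η ^ (min v (n - v)) ≤ η ^ q := hpow _ _ e1
    have b2 : η * η ^ (min (v+1) (n - (v+1))) ≤ η ^ q := by
      rw [← pow_succ']
      exact hpow _ _ e2
    have b3 : η * η ^ (min (v-1) (n - (v-1))) ≤ η ^ q := by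
      rw [← pow_succ']
      exact hpow _ _ e3
    have hb1 : (0:ℝ) ≤ η ^ (min v (n - v)) := by positivity
    have hb2 : (0:ℝ) ≤ η * η ^ (min (v+1) (n - (v+1))) := by positivity
    have hb3 : (0:ℝ) ≤ η * η ^ (min (v-1) (n - (v-1))) := by positivity
    have hq0 : (0:ℝ) ≤ η ^ q := by positivity
    have hη2 : η^2 ≤ 1 := by nlinarith
    have key := mul_le_mul_of_nonneg_left b1 (show (0:ℝ) ≤ 1 + η^2 by positivity)
    rw [abs_le]
    constructor <;> nlinarith [mul_nonneg hq0 (sub_nonneg.mpr hη2)]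

private lemma sac_exists_N (δ C : ℝ) (hδ1 : δ < 1) (hC : 0 < C) :
    ∃ N : ℕ, 100 ≤ N ∧ ∀ n : ℕ, N ≤ n →
      24 * (n:ℝ) ^ ((1:ℝ)+δ) * Real.exp (-(C/4) * (n:ℝ) ^ ((1:ℝ)-δ)) < C := by
  have hb : (0:ℝ) < C/4 := by linarith
  have h1 := tendsto_rpow_mul_exp_neg_mul_atTop_nhds_zero ((1+δ)/(1-δ)) (C/4) hb
  have h2 : Tendsto (fun x : ℝ => x ^ ((1:ℝ)-δ)) atTop atTop :=
    tendsto_rpow_atTop (by linarith)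
  have h3 := h1.comp h2
  have h4 : Tendsto (fun x : ℝ => x ^ ((1:ℝ)+δ) * Real.exp (-(C/4) * x ^ ((1:ℝ)-δ)))
      atTop (nhds 0) := by
    apply h3.congr'
    filter_upwards [eventually_ge_atTop (0:ℝ)] with x hx
    have : (x ^ ((1:ℝ)-δ)) ^ ((1+δ)/(1-δ)) = x ^ ((1:ℝ)+δ) := by
      rw [← Real.rpow_mul hx]
      congr 1
      rw [mul_div_assoc']
      exact mul_div_cancel_left₀ _ (by linarith)
    simp only [Function.comp]
    rw [this]
  have h5 : Tendsto (fun x : ℝ => 24 * (x ^ ((1:ℝ)+δ) * Real.exp (-(C/4) * x ^ ((1:ℝ)-δ))))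
      atTop (nhds 0) := by
    simpa using h4.const_mul (24:ℝ)
  have h6 : ∀ᶠ x : ℝ in atTop,
      24 * (x ^ ((1:ℝ)+δ) * Real.exp (-(C/4) * x ^ ((1:ℝ)-δ))) < C :=
    h5.eventually_lt_const hC
  obtain ⟨x₀, hx₀⟩ := eventually_atTop.mp h6
  refine ⟨max 100 ⌈x₀⌉₊, le_max_left _ _, fun n hn => ?_⟩
  have hx : x₀ ≤ (n:ℝ) := by
    have : (⌈x₀⌉₊ : ℝ) ≤ (n:ℝ) := by exact_mod_cast le_trans (le_max_right _ _) hn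
    exact le_trans (Nat.le_ceil x₀) this
  have := hx₀ (n:ℝ) hx
  linarith [this]

set_option maxHeartbeats 1600000 in
/-- For every `δ ∈ (0,1)` and `C > 0` there is `N` such that for all
`n ≥ N` and `ρ ∈ (0,1]` with `ρ ≥ C·n^{−δ}`, setting `η = 1 − ρ`, every eigenvalue of
the `n×n` symmetric circulant matrix `M` with entries
`M_{ij} = η^{min(|i−j|, n−|i−j|)}` is strictly greater than `ρ/3`. -/
theorem min_eigenvalue_small_arc_circulant
    (δ : ℝ) (hδ : δ ∈ Set.Ioo (0 : ℝ) 1) (C : ℝ) (hC : 0 < C) :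
    ∃ N : ℕ, ∀ n : ℕ, N ≤ n → ∀ ρ η : ℝ, 0 < ρ → ρ ≤ 1 →
      C * (n : ℝ) ^ (-δ) ≤ ρ → η = 1 - ρ →
      ∀ M : Matrix (Fin n) (Fin n) ℝ,
        (∀ i j, M i j =
          η ^ (min (((i : ℤ) - (j : ℤ)).natAbs) (n - ((i : ℤ) - (j : ℤ)).natAbs))) →
        ∀ t : ℝ, Module.End.HasEigenvalue (Matrix.toLin' M) t → ρ / 3 < t := by
  obtain ⟨N, hN100, hNbig⟩ := sac_exists_N δ C hδ.2 hC
  refine ⟨N, ?_⟩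
  intro n hn ρ η hρ0 hρ1 hρC hη M hM t ht
  have hn100 : 100 ≤ n := le_trans hN100 hn
  haveI : NeZero n := ⟨by omega⟩
  have hη0 : 0 ≤ η := by rw [hη]; linarith
  have hη1 : η < 1 := by rw [hη]; linarith
  have hnpos : (0:ℝ) < n := by positivity
  -- the circulant profile
  set F : ℕ → ℝ := fun v => η ^ (min v (n - v)) with hF
  have hMF : ∀ i j : Fin n, M i j = F ((i - j : Fin n).val) := by
    intro i j
    rw [hM]
    congr 1
    have hv : ((i - j : Fin n) : ℕ) = (n - j.val + i.val) % n := by rw [Fin.sub_def]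
    have hi := i.isLt
    have hj := j.isLt
    rcases le_or_gt j.val i.val with h | h
    · have : (n - j.val + i.val) % n = i.val - j.val := by
        rw [show n - j.val + i.val = n + (i.val - j.val) by omega, Nat.add_mod_left,
          Nat.mod_eq_of_lt (by omega)]
      rw [hv, this]
      omega
    · have : (n - j.val + i.val) % n = n - (j.val - i.val) := by
        rw [Nat.mod_eq_of_lt (by omega)]
        omega
      rw [hv, this]
      omega
  -- eigenvector
  obtain ⟨x, hx⟩ := ht.exists_hasEigenvector
  have hxne : x ≠ 0 := hx.right
  have hMx : M *ᵥ x = t • x := by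
    have := hx.apply_eq_smul
    rwa [Matrix.toLin'_apply] at this
  -- basic quantities
  set X : ℝ := ∑ i, x i ^ 2 with hXdef
  set P : ℝ := ∑ i, x i * x (i + 1) with hPdef
  set S : ℝ := ∑ i, (x i - η * x (i + 1)) ^ 2 with hSdef
  have hre : ∀ g : Fin n → ℝ, ∑ i, g (i + 1) = ∑ i, g i := fun g =>
    Fintype.sum_equiv (Equiv.addRight 1) _ _ (fun i => rfl)
  have hX : 0 < X := by
    obtain ⟨i, hi⟩ : ∃ i, x i ≠ 0 := by
      by_contra h
      push_neg at h
      exact hxne (funext h)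
    refine Finset.sum_pos' (fun j _ => sq_nonneg _) ⟨i, mem_univ i, ?_⟩
    have : 0 < |x i| := abs_pos.mpr hi
    calc (0:ℝ) < |x i| ^ 2 := by positivity
      _ = x i ^ 2 := sq_abs _
  have hshift : ∑ i, x (i + 1) ^ 2 = X := hre (fun i => x i ^ 2)
  have hP : |P| ≤ X := by
    rw [abs_le]
    constructor
    · rw [hPdef, ← neg_le, ← Finset.sum_neg_distrib]
      calc ∑ i, -(x i * x (i+1)) ≤ ∑ i, (x i ^ 2 + x (i+1) ^ 2) / 2 :=
            Finset.sum_le_sum (fun i _ => by nlinarith [sq_nonneg (x i + x (i+1))])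
        _ = X := by
          rw [show (fun i : Fin n => (x i ^ 2 + x (i+1) ^ 2)/2)
              = fun i : Fin n => x i ^ 2 / 2 + x (i+1) ^ 2 / 2 from funext fun i => by ring,
            Finset.sum_add_distrib, ← Finset.sum_div, ← Finset.sum_div,
            hre (fun i => x i ^ 2)]
          rw [hXdef]; ring
    · rw [hPdef]
      calc ∑ i, x i * x (i+1) ≤ ∑ i, (x i ^ 2 + x (i+1) ^ 2) / 2 :=
            Finset.sum_le_sum (fun i _ => by nlinarith [sq_nonneg (x i - x (i+1))])
        _ = X := by
          rw [show (fun i : Fin n => (x i ^ 2 + x (i+1) ^ 2)/2)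
              = fun i : Fin n => x i ^ 2 / 2 + x (i+1) ^ 2 / 2 from funext fun i => by ring,
            Finset.sum_add_distrib, ← Finset.sum_div, ← Finset.sum_div,
            hre (fun i => x i ^ 2)]
          rw [hXdef]; ring
  have hS : S = (1 + η^2) * X - 2 * η * P := by
    rw [hSdef, show (fun i : Fin n => (x i - η * x (i+1))^2)
        = fun i : Fin n => x i ^ 2 + η^2 * x (i+1)^2 - 2*η*(x i * x (i+1))
        from funext fun i => by ring]
    rw [Finset.sum_sub_distrib, Finset.sum_add_distrib, ← Finset.mul_sum, ← Finset.mul_sum,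
      hshift]
    rw [hXdef, hPdef]
    ring
  have hSle : S ≤ (1 + η)^2 * X := by
    rw [hS]
    nlinarith [mul_le_mul_of_nonneg_left (show -P ≤ X by linarith [(abs_le.mp hP).1])
      (show (0:ℝ) ≤ 2*η by linarith), hX]
  have hSpos : 0 < S := by
    rw [hS]
    nlinarith [mul_le_mul_of_nonneg_left (abs_le.mp hP).2 (show (0:ℝ) ≤ 2*η by linarith),
      mul_pos (pow_pos (show (0:ℝ) < 1 - η by linarith) 2) hX]
  -- the coefficient function
  set cc : Fin n → ℝ := fun k =>
    (1 + η^2) * F k.val - η * F ((k+1 : Fin n)).val - η * F ((k-1 : Fin n)).val with hccdef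
  have hone : ((1 : Fin n)).val = 1 := by
    rw [Fin.val_one']
    exact Nat.mod_eq_of_lt (by omega)
  have hcc0 : cc 0 = 1 - η^2 := by
    have h1 : ((0 + 1 : Fin n)).val = 1 := by rw [zero_add, hone]
    have h2 : ((0 - 1 : Fin n)).val = n - 1 := by
      rw [Fin.sub_def]
      simp only [Fin.val_zero, hone, add_zero]
      exact Nat.mod_eq_of_lt (by omega)
    rw [hccdef]
    simp only [h1, h2, Fin.val_zero]
    rw [hF]
    simp only
    rw [show min 0 (n - 0) = 0 by omega, show min 1 (n-1) = 1 by omega,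
      show min (n-1) (n - (n-1)) = 1 by omega]
    ring
  set q : ℕ := (n - 3) / 2 with hqdef
  have hccb : ∀ k : Fin n, k ≠ 0 → |cc k| ≤ 4 * η ^ q := by
    intro k hk
    have hkv : 1 ≤ k.val := by
      rcases Nat.eq_zero_or_pos k.val with h | h
      · exact absurd (Fin.ext h : k = 0) hk
      · exact h
    have hklt := k.isLt
    have h1 : ((k + 1 : Fin n)).val = (k.val + 1) % n := by
      rw [Fin.add_def, hone]
    have h2 : ((k - 1 : Fin n)).val = k.val - 1 := by
      have hnat : (n - 1 + k.val) % n = k.val - 1 := by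
        rw [show n - 1 + k.val = n + (k.val - 1) by omega, Nat.add_mod_left]
        exact Nat.mod_eq_of_lt (by omega)
      rw [Fin.sub_def]
      simpa [Nat.mod_eq_of_lt (show 1 < n by omega)] using hnat
    have h3 : F ((k.val + 1) % n) = F (k.val + 1) := by
      rcases eq_or_lt_of_le (show k.val + 1 ≤ n by omega) with h | h
      · rw [h, Nat.mod_self, hF]
        simp only
        rw [show min 0 (n - 0) = 0 by omega, show min n (n - n) = 0 by omega]
      · rw [Nat.mod_eq_of_lt h]
    rw [hccdef]
    simp only [h1, h2, h3]
    rw [hF]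
    simp only
    exact sac_c_bound n k.val η hη0 (by linarith) (by omega) hkv (by omega)
  -- the mulVec as a convolution
  have hmv : ∀ i : Fin n, (M *ᵥ x) i = ∑ j, F ((i - j : Fin n)).val * x j := by
    intro i
    simp only [Matrix.mulVec, dotProduct]
    exact Finset.sum_congr rfl fun j _ => by rw [hMF]
  -- the smoothed vector
  set w : Fin n → ℝ := fun i =>
    (1 + η^2) * (M *ᵥ x) i - η * (M *ᵥ x) (i + 1) - η * (M *ᵥ x) (i - 1) with hwdef
  have hwB : ∀ i, w i = ∑ j, cc (i - j) * x j := by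
    intro i
    rw [hwdef]
    simp only [hmv]
    rw [Finset.mul_sum, Finset.mul_sum, Finset.mul_sum, ← Finset.sum_sub_distrib,
      ← Finset.sum_sub_distrib]
    refine Finset.sum_congr rfl fun j _ => ?_
    have e1 : i + 1 - j = i - j + 1 := by abel
    have e2 : i - 1 - j = i - j - 1 := by abel
    rw [e1, e2]
    simp only [hccdef]
    ring
  have hP' : ∑ i, x i * x (i - 1) = P := by
    have := hre (fun i => x i * x (i - 1))
    simp only [add_sub_cancel_right] at this
    rw [← this, hPdef]
    exact Finset.sum_congr rfl fun i _ => by ring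
  have hwA : ∑ i, x i * w i = t * S := by
    have h1 : ∀ i, w i = t * ((1 + η^2) * x i - η * x (i + 1) - η * x (i - 1)) := by
      intro i
      rw [hwdef]
      simp only [hMx, Pi.smul_apply, smul_eq_mul]
      ring
    calc ∑ i, x i * w i
        = ∑ i, (t*(1+η^2) * x i ^ 2 - t*η*(x i * x (i+1)) - t*η*(x i * x (i-1))) :=
          Finset.sum_congr rfl fun i _ => by rw [h1]; ring
      _ = t*(1+η^2) * X - t*η*P - t*η*P := by
          rw [Finset.sum_sub_distrib, Finset.sum_sub_distrib, ← Finset.mul_sum,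
            ← Finset.mul_sum, ← Finset.mul_sum, hP', hXdef, hPdef]
      _ = t * S := by rw [hS]; ring
  -- split diagonal and off-diagonal
  have hsplit : t * S = (1 - η^2) * X + ∑ i, ∑ j ∈ univ.erase i, cc (i - j) * (x i * x j) := by
    rw [← hwA]
    calc ∑ i, x i * w i = ∑ i, ∑ j, cc (i - j) * (x i * x j) := by
          refine Finset.sum_congr rfl fun i _ => ?_
          rw [hwB, Finset.mul_sum]
          exact Finset.sum_congr rfl fun j _ => by ring
      _ = ∑ i, (cc 0 * (x i * x i) + ∑ j ∈ univ.erase i, cc (i - j) * (x i * x j)) := by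
          refine Finset.sum_congr rfl fun i _ => ?_
          rw [← Finset.add_sum_erase _ _ (mem_univ i), sub_self]
      _ = (1 - η^2) * X + ∑ i, ∑ j ∈ univ.erase i, cc (i - j) * (x i * x j) := by
          rw [Finset.sum_add_distrib, hcc0]
          congr 1
          rw [hXdef, ← Finset.mul_sum]
          congr 1
          exact Finset.sum_congr rfl fun i _ => by ring
  -- bound the off-diagonal part
  have hcard : (Finset.univ : Finset (Fin n)).card = n := by simp
  have hqeta : (0:ℝ) ≤ 4 * η ^ q := by positivity
  have hB : |∑ i, ∑ j ∈ univ.erase i, cc (i - j) * (x i * x j)| ≤ (4 * η ^ q) * n * X := by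
    calc |∑ i, ∑ j ∈ univ.erase i, cc (i - j) * (x i * x j)|
        ≤ ∑ i, |∑ j ∈ univ.erase i, cc (i - j) * (x i * x j)| :=
          Finset.abs_sum_le_sum_abs _ _
      _ ≤ ∑ i, ∑ j ∈ univ.erase i, |cc (i - j) * (x i * x j)| :=
          Finset.sum_le_sum fun i _ => Finset.abs_sum_le_sum_abs _ _
      _ ≤ ∑ i : Fin n, ∑ j ∈ univ.erase i, (4 * η ^ q) * ((x i ^2 + x j ^2)/2) := by
          refine Finset.sum_le_sum fun i _ => Finset.sum_le_sum fun j hj => ?_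
          have hij : i - j ≠ 0 :=
            sub_ne_zero.mpr (fun h => (Finset.mem_erase.mp hj).1 h.symm)
          have h1 := hccb (i - j) hij
          have h2 : |x i * x j| ≤ (x i ^2 + x j ^2)/2 := by
            rw [abs_mul]
            nlinarith [sq_nonneg (|x i| - |x j|), sq_abs (x i), sq_abs (x j),
              abs_nonneg (x i), abs_nonneg (x j)]
          rw [abs_mul]
          exact mul_le_mul h1 h2 (abs_nonneg _) hqeta
      _ ≤ ∑ i : Fin n, ∑ j : Fin n, (4 * η ^ q) * ((x i ^2 + x j ^2)/2) := by
          refine Finset.sum_le_sum fun i _ => ?_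
          refine Finset.sum_le_sum_of_subset_of_nonneg (Finset.erase_subset _ _)
            fun j _ _ => by positivity
      _ = (4 * η ^ q) * n * X := by
          have inner : ∀ i : Fin n, ∑ j : Fin n, (4 * η ^ q) * ((x i ^2 + x j ^2)/2)
              = (4 * η ^ q) * ((n : ℝ) * x i ^ 2 + X) / 2 := by
            intro i
            rw [show (fun j : Fin n => (4 * η ^ q) * ((x i ^2 + x j ^2)/2))
              = fun j : Fin n => (4*η^q/2) * x i ^ 2 + (4*η^q/2) * x j ^ 2
              from funext fun j => by ring]
            rw [Finset.sum_add_distrib, Finset.sum_const, ← Finset.mul_sum, hcard,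
              nsmul_eq_mul, ← hXdef]
            ring
          rw [Finset.sum_congr rfl (fun i _ => inner i)]
          rw [show (fun i : Fin n => (4 * η ^ q) * ((n : ℝ) * x i ^ 2 + X) / 2)
            = fun i : Fin n => (4*η^q*(n:ℝ)/2) * x i ^ 2 + 4*η^q*X/2
            from funext fun i => by ring]
          rw [Finset.sum_add_distrib, Finset.sum_const, ← Finset.mul_sum, hcard,
            nsmul_eq_mul, ← hXdef]
          ring
  -- numeric estimates
  have hqn4 : (n:ℝ) ≤ 4 * (q:ℝ) := by
    have h : n ≤ 4 * q := by omega
    exact_mod_cast h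
  have hηexp : η ≤ Real.exp (-ρ) := by
    rw [hη]
    linarith [Real.add_one_le_exp (-ρ)]
  have hpow1 : (n:ℝ)^((1:ℝ)-δ) = (n:ℝ)^(-δ) * n := by
    rw [show (1:ℝ)-δ = -δ + 1 by ring, Real.rpow_add hnpos, Real.rpow_one]
  have hηq : η ^ q ≤ Real.exp (-(C/4) * (n:ℝ) ^ ((1:ℝ)-δ)) := by
    calc η ^ q ≤ Real.exp (-ρ) ^ q := pow_le_pow_left₀ hη0 hηexp q
      _ = Real.exp (-(ρ * q)) := by rw [← Real.exp_nat_mul]; ring_nf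
      _ ≤ Real.exp (-(C/4) * (n:ℝ)^((1:ℝ)-δ)) := by
          apply Real.exp_le_exp.mpr
          have h1 : C * (n:ℝ)^(-δ) * n ≤ ρ * n :=
            mul_le_mul_of_nonneg_right hρC hnpos.le
          have h2 : ρ * (n:ℝ) ≤ ρ * (4*(q:ℝ)) := mul_le_mul_of_nonneg_left hqn4 hρ0.le
          rw [hpow1]
          nlinarith
  have hY : (0:ℝ) < (n:ℝ)^(δ:ℝ) := Real.rpow_pos_of_pos hnpos δ
  have hsplit1 : (n:ℝ)^((1:ℝ)+δ) = n * (n:ℝ)^(δ:ℝ) := by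
    rw [Real.rpow_add hnpos, Real.rpow_one]
  have hneg : (n:ℝ)^(-δ) = ((n:ℝ)^(δ:ℝ))⁻¹ := by rw [Real.rpow_neg hnpos.le]
  have hEbound := hNbig n hn
  rw [hsplit1] at hEbound
  have hεn : (4*η^q) * n < ρ/6 := by
    set E := Real.exp (-(C/4) * (n:ℝ)^((1:ℝ)-δ)) with hE
    have hE0 : 0 < E := Real.exp_pos _
    have h4 : 4 * E * n < C * (n:ℝ)^(-δ) / 6 := by
      rw [hneg, show C * ((n:ℝ)^(δ:ℝ))⁻¹ / 6 = C / (6 * (n:ℝ)^(δ:ℝ)) by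
        field_simp]
      rw [lt_div_iff₀ (by positivity)]
      nlinarith [hEbound]
    have h5 : (4*η^q) * n ≤ 4 * E * n := by
      nlinarith [mul_le_mul_of_nonneg_right hηq hnpos.le]
    linarith
  -- conclusion
  have hmain : ((1 - η^2) - (4*η^q)*n) * X ≤ t * S := by
    rw [hsplit]
    nlinarith [(abs_le.mp hB).1]
  have h1mη : ρ ≤ 1 - η^2 := by
    rw [hη]
    nlinarith
  have hDpos : 0 < (1 - η^2) - (4*η^q)*n := by
    have h0 : 0 ≤ (4*η^q) * n := by positivity
    linarith
  have htpos : 0 < t := by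
    by_contra h
    push_neg at h
    have h1 : t * S ≤ 0 := mul_nonpos_of_nonpos_of_nonneg h hSpos.le
    have h2 : 0 < ((1 - η^2) - (4*η^q)*n) * X := mul_pos hDpos hX
    linarith
  have hfin : ((1 - η^2) - (4*η^q)*n) * X ≤ (t * (1+η)^2) * X := by
    calc ((1 - η^2) - (4*η^q)*n) * X ≤ t * S := hmain
      _ ≤ t * ((1+η)^2 * X) := mul_le_mul_of_nonneg_left hSle htpos.le
      _ = (t * (1+η)^2) * X := by ring
  have hfin2 : (1 - η^2) - (4*η^q)*n ≤ t * (1+η)^2 :=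
    le_of_mul_le_mul_right hfin hX
  nlinarith [hfin2, hεn, hρ0, hρ1, sq_nonneg (1+η),
    mul_nonneg (mul_nonneg hρ0.le hρ0.le) (show (0:ℝ) ≤ 1 - ρ by linarith),
    mul_pos hρ0 hρ0]
end

section
/- For every δ ∈ (0,1) and every C > 0 there exists N ∈ ℕ such that for all n ≥ N and all ρ ∈ (0,1] with ρ ≥ C·n^{−δ}, setting η = 1 − ρ, every eigenvalue of the n×n real symmetric matrix φ^cycle with entries φ^cycle_{ij} = η^{|i−j|} + η^{n−|i−j|} − η^n (rows and columns indexed by {0,…,n−1}) is strictly greater than ρ/4. -/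
open Finset Filter Real
open scoped Fin.NatCast Fin.CommRing

set_option linter.unusedSectionVars false
set_option linter.deprecated false


private lemma geom_aux (η : ℝ) (m : ℕ) :
    (1 - η ^ 2) * ∑ a ∈ Finset.range m, (η ^ 2) ^ a = 1 - (η ^ 2) ^ m := by
  linear_combination (-1 : ℝ) * geom_sum_mul (η ^ 2) m

private lemma core_aux (η : ℝ) (e m : ℕ) :
    (1 - η ^ 2) * (η ^ e * ∑ a ∈ Finset.range m, (η ^ 2) ^ a
        + η ^ m * ∑ a ∈ Finset.range e, (η ^ 2) ^ a)
      = (1 - η ^ (e + m)) * (η ^ e + η ^ m) := by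
  have h1 := geom_aux η m
  have h2 := geom_aux η e
  have hm : (η ^ 2) ^ m = (η ^ m) ^ 2 := by rw [← pow_mul, ← pow_mul, Nat.mul_comm]
  have he : (η ^ 2) ^ e = (η ^ e) ^ 2 := by rw [← pow_mul, ← pow_mul, Nat.mul_comm]
  have hem : η ^ (e + m) = η ^ e * η ^ m := pow_add η e m
  rw [mul_add, ← mul_assoc, mul_comm (1 - η^2) (η^e), mul_assoc, h1,
    ← mul_assoc, mul_comm (1 - η^2) (η^m), mul_assoc, h2, hm, he, hem]
  ring

private lemma sum_core (n : ℕ) [NeZero n] (η : ℝ) (e : Fin n) :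
    (1 - η ^ 2) * ∑ a : Fin n, η ^ ((a : ℕ) + ((a + e : Fin n) : ℕ))
      = (1 - η ^ n) * (η ^ (e : ℕ) + η ^ (n - (e : ℕ))) := by
  have hen : (e : ℕ) < n := e.isLt
  have h1 : ∑ a : Fin n, η ^ ((a : ℕ) + ((a + e : Fin n) : ℕ))
      = ∑ a ∈ Finset.range n, η ^ (a + (a + (e : ℕ)) % n) := by
    rw [← Fin.sum_univ_eq_sum_range (fun x => η ^ (x + (x + (e : ℕ)) % n)) n]
    exact Finset.sum_congr rfl fun a _ => by rw [Fin.val_add]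
  have h2 : ∑ a ∈ Finset.range n, η ^ (a + (a + (e : ℕ)) % n)
      = ∑ a ∈ Finset.Ico 0 (n - (e : ℕ)), η ^ (a + (a + (e : ℕ)) % n)
        + ∑ a ∈ Finset.Ico (n - (e : ℕ)) n, η ^ (a + (a + (e : ℕ)) % n) := by
    rw [Finset.sum_Ico_consecutive _ (Nat.zero_le _) (Nat.sub_le n _), ← Finset.range_eq_Ico]
  have h3 : ∑ a ∈ Finset.Ico 0 (n - (e : ℕ)), η ^ (a + (a + (e : ℕ)) % n)
      = η ^ (e : ℕ) * ∑ a ∈ Finset.range (n - (e : ℕ)), (η ^ 2) ^ a := by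
    rw [← Finset.range_eq_Ico, Finset.mul_sum]
    refine Finset.sum_congr rfl fun a ha => ?_
    rw [Finset.mem_range] at ha
    have hlt : a + (e : ℕ) < n := by omega
    rw [Nat.mod_eq_of_lt hlt, ← pow_mul, ← pow_add]
    congr 1
    omega
  have h4 : ∑ a ∈ Finset.Ico (n - (e : ℕ)) n, η ^ (a + (a + (e : ℕ)) % n)
      = η ^ (n - (e : ℕ)) * ∑ a ∈ Finset.range (e : ℕ), (η ^ 2) ^ a := by
    rw [Finset.sum_Ico_eq_sum_range, Nat.sub_sub_self hen.le, Finset.mul_sum]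
    refine Finset.sum_congr rfl fun t ht => ?_
    rw [Finset.mem_range] at ht
    have hmod : (n - (e : ℕ) + t + (e : ℕ)) % n = t := by
      have : n - (e : ℕ) + t + (e : ℕ) = n + t := by omega
      rw [this, Nat.add_mod_left, Nat.mod_eq_of_lt (by omega)]
    rw [hmod, ← pow_mul, ← pow_add]
    congr 1
    omega
  have hsum : (e : ℕ) + (n - (e : ℕ)) = n := by omega
  rw [h1, h2, h3, h4, core_aux η (e : ℕ) (n - (e : ℕ)), hsum]

private lemma sum_core' (n : ℕ) [NeZero n] (η : ℝ) (j k : Fin n) :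
    (1 - η ^ 2) * ∑ i : Fin n, η ^ (((j - i : Fin n) : ℕ) + ((k - i : Fin n) : ℕ))
      = (1 - η ^ n) * (η ^ (((j : ℤ) - (k : ℤ)).natAbs)
          + η ^ (n - ((j : ℤ) - (k : ℤ)).natAbs)) := by
  have hre : ∑ i : Fin n, η ^ (((j - i : Fin n) : ℕ) + ((k - i : Fin n) : ℕ))
      = ∑ a : Fin n, η ^ ((a : ℕ) + ((a + (k - j) : Fin n) : ℕ)) := by
    refine (Fintype.sum_equiv (Equiv.subLeft j) _ _ fun a => ?_).symm
    have h1 : j - (Equiv.subLeft j a) = a := by simp [Equiv.subLeft]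
    have h2 : k - (Equiv.subLeft j a) = a + (k - j) := by simp [Equiv.subLeft]; ring
    rw [h1, h2]
  rw [hre, sum_core n η (k - j)]
  have hd : ((j : ℤ) - (k : ℤ)).natAbs < n := by
    have := j.isLt; have := k.isLt; omega
  by_cases h : j ≤ k
  · have hle : (j : ℕ) ≤ (k : ℕ) := h
    have hval : ((k - j : Fin n) : ℕ) = (k : ℕ) - (j : ℕ) := Fin.coe_sub_iff_le.2 h
    have hd' : ((j : ℤ) - (k : ℤ)).natAbs = (k : ℕ) - (j : ℕ) := by omega
    rw [hval, hd']
  · have hlt : k < j := lt_of_not_ge h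
    have hval : ((k - j : Fin n) : ℕ) = n + (k : ℕ) - (j : ℕ) := Fin.coe_sub_iff_lt.2 hlt
    have hd' : ((j : ℤ) - (k : ℤ)).natAbs = (j : ℕ) - (k : ℕ) := by omega
    have hlt' : (k : ℕ) < (j : ℕ) := hlt
    have hjn := j.isLt
    have e1 : n + (k : ℕ) - (j : ℕ) = n - ((j : ℕ) - (k : ℕ)) := by omega
    have e2 : n - (n + (k : ℕ) - (j : ℕ)) = (j : ℕ) - (k : ℕ) := by omega
    have e3 : n - (n - ((j:ℕ) - (k:ℕ))) = (j:ℕ) - (k:ℕ) := by omega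
    rw [hval, hd', e1, e3, add_comm]

section
variable (n : ℕ) [NeZero n] (η : ℝ) (v : Fin n → ℝ)

private noncomputable def wf (i : Fin n) : ℝ := ∑ j : Fin n, η ^ ((j - i : Fin n) : ℕ) * v j

private lemma w_range (i : Fin n) :
    wf n η v i = ∑ m ∈ Finset.range n, η ^ m * v (i + (m : Fin n)) := by
  have h1 : wf n η v i = ∑ m : Fin n, η ^ ((m : Fin n) : ℕ) * v (i + m) := by
    refine (Fintype.sum_equiv (Equiv.addLeft i) _ _ fun m => ?_).symm
    have : (Equiv.addLeft i) m - i = m := by simp [Equiv.addLeft]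
    rw [this]
    simp [Equiv.addLeft]
  rw [h1, ← Fin.sum_univ_eq_sum_range (fun m => η ^ m * v (i + (m : Fin n))) n]
  exact Finset.sum_congr rfl fun m _ => by rw [Fin.cast_val_eq_self]

private lemma w_shift (i : Fin n) :
    wf n η v i - η * wf n η v (i + 1) = (1 - η ^ n) * v i := by
  set f : ℕ → ℝ := fun m => η ^ m * v (i + (m : Fin n)) with hf
  have hs : ∑ m ∈ Finset.range (n + 1), f m = ∑ m ∈ Finset.range n, f m + f n :=
    Finset.sum_range_succ f n
  have hs' : ∑ m ∈ Finset.range (n + 1), f m = ∑ m ∈ Finset.range n, f (m + 1) + f 0 :=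
    Finset.sum_range_succ' f n
  have hfn : f n = η ^ n * v i := by
    simp [hf, Fin.natCast_self]
  have hf0 : f 0 = v i := by simp [hf]
  have hmid : ∑ m ∈ Finset.range n, f (m + 1) = η * wf n η v (i + 1) := by
    rw [w_range, Finset.mul_sum]
    refine Finset.sum_congr rfl fun m _ => ?_
    have hc : ((m + 1 : ℕ) : Fin n) = (m : Fin n) + 1 := by push_cast; ring
    rw [hf]
    simp only [hc]
    have : i + ((m : Fin n) + 1) = (i + 1) + (m : Fin n) := by ring
    rw [this, pow_succ]
    ring
  have hw : wf n η v i = ∑ m ∈ Finset.range n, f m := w_range n η v i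
  rw [hw, ← hmid]
  have := hs.symm.trans hs'
  rw [hfn, hf0] at this
  linarith [this]


private lemma sum_sq_w_lower (hη0 : 0 ≤ η) :
    (1 - η ^ n) ^ 2 * ∑ i : Fin n, v i ^ 2
      ≤ (1 + η) ^ 2 * ∑ i : Fin n, (wf n η v i) ^ 2 := by
  have hpt : ∀ i : Fin n, ((1 - η ^ n) * v i) ^ 2
      ≤ (1 + η) * (wf n η v i) ^ 2 + (η + η ^ 2) * (wf n η v (i + 1)) ^ 2 := by
    intro i
    rw [← w_shift n η v i]
    nlinarith [sq_nonneg (wf n η v i + wf n η v (i + 1)), hη0]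
  have hsum := Finset.sum_le_sum fun i (_ : i ∈ Finset.univ) => hpt i
  have hL : ∑ i : Fin n, ((1 - η ^ n) * v i) ^ 2
      = (1 - η ^ n) ^ 2 * ∑ i : Fin n, v i ^ 2 := by
    rw [Finset.mul_sum]
    exact Finset.sum_congr rfl fun i _ => by ring
  have hshiftsum : ∑ i : Fin n, (wf n η v (i + 1)) ^ 2 = ∑ i : Fin n, (wf n η v i) ^ 2 := by
    exact Fintype.sum_equiv (Equiv.addRight (1 : Fin n)) _ _ fun i => by simp [Equiv.addRight]
  have hR : ∑ i : Fin n, ((1 + η) * (wf n η v i) ^ 2 + (η + η ^ 2) * (wf n η v (i + 1)) ^ 2)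
      = (1 + η) ^ 2 * ∑ i : Fin n, (wf n η v i) ^ 2 := by
    rw [Finset.sum_add_distrib, ← Finset.mul_sum, ← Finset.mul_sum, hshiftsum]
    ring
  rw [← hL, ← hR]
  exact hsum

private lemma quad_identity :
    (1 - η ^ 2) * ∑ i : Fin n, (wf n η v i) ^ 2
      = (1 - η ^ n) * ∑ j : Fin n, ∑ k : Fin n,
          (η ^ (((j : ℤ) - (k : ℤ)).natAbs) + η ^ (n - ((j : ℤ) - (k : ℤ)).natAbs))
            * (v j * v k) := by
  have h1 : ∑ i : Fin n, (wf n η v i) ^ 2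
      = ∑ j : Fin n, ∑ k : Fin n,
          (∑ i : Fin n, η ^ (((j - i : Fin n) : ℕ) + ((k - i : Fin n) : ℕ))) * (v j * v k) := by
    calc ∑ i : Fin n, (wf n η v i) ^ 2
        = ∑ i : Fin n, ∑ j : Fin n, ∑ k : Fin n,
            η ^ ((j - i : Fin n) : ℕ) * v j * (η ^ ((k - i : Fin n) : ℕ) * v k) := by
          refine Finset.sum_congr rfl fun i _ => ?_
          rw [sq, wf, Finset.sum_mul_sum]
      _ = ∑ j : Fin n, ∑ k : Fin n, ∑ i : Fin n,
            η ^ ((j - i : Fin n) : ℕ) * v j * (η ^ ((k - i : Fin n) : ℕ) * v k) := by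
          rw [Finset.sum_comm]
          exact Finset.sum_congr rfl fun j _ => Finset.sum_comm
      _ = ∑ j : Fin n, ∑ k : Fin n,
            (∑ i : Fin n, η ^ (((j - i : Fin n) : ℕ) + ((k - i : Fin n) : ℕ))) * (v j * v k) := by
          refine Finset.sum_congr rfl fun j _ => Finset.sum_congr rfl fun k _ => ?_
          rw [Finset.sum_mul]
          exact Finset.sum_congr rfl fun i _ => by rw [pow_add]; ring
  rw [h1, Finset.mul_sum, Finset.mul_sum]
  refine Finset.sum_congr rfl fun j _ => ?_
  rw [Finset.mul_sum, Finset.mul_sum]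
  refine Finset.sum_congr rfl fun k _ => ?_
  rw [← mul_assoc, sum_core' n η j k, mul_assoc]

private lemma quad_lower (hη0 : 0 ≤ η) (hη1 : η < 1) (hn : 0 < n) :
    ((1 - η) * (1 - η ^ n) / (1 + η) - n * η ^ n) * ∑ i : Fin n, v i ^ 2
      ≤ ∑ j : Fin n, ∑ k : Fin n,
          (η ^ (((j : ℤ) - (k : ℤ)).natAbs) + η ^ (n - ((j : ℤ) - (k : ℤ)).natAbs) - η ^ n)
            * (v j * v k) := by
  set A := ∑ i : Fin n, v i ^ 2 with hA
  set W := ∑ i : Fin n, (wf n η v i) ^ 2 with hW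
  set S := ∑ i : Fin n, v i with hSdef
  set T := ∑ j : Fin n, ∑ k : Fin n,
      (η ^ (((j : ℤ) - (k : ℤ)).natAbs) + η ^ (n - ((j : ℤ) - (k : ℤ)).natAbs))
        * (v j * v k) with hT
  have hQ : ∑ j : Fin n, ∑ k : Fin n,
      (η ^ (((j : ℤ) - (k : ℤ)).natAbs) + η ^ (n - ((j : ℤ) - (k : ℤ)).natAbs) - η ^ n)
        * (v j * v k) = T - η ^ n * S ^ 2 := by
    have hSsq : S ^ 2 = ∑ j : Fin n, ∑ k : Fin n, v j * v k := by
      rw [sq, hSdef, Finset.sum_mul_sum]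
    rw [hSsq, hT, Finset.mul_sum, ← Finset.sum_sub_distrib]
    refine Finset.sum_congr rfl fun j _ => ?_
    rw [Finset.mul_sum, ← Finset.sum_sub_distrib]
    exact Finset.sum_congr rfl fun k _ => by ring
  have hA0 : 0 ≤ A := Finset.sum_nonneg fun i _ => sq_nonneg _
  have hS : S ^ 2 ≤ n * A := by
    have := sq_sum_le_card_mul_sum_sq (s := (Finset.univ : Finset (Fin n))) (f := v)
    simpa using this
  have h1 : (1 - η ^ 2) * W = (1 - η ^ n) * T := quad_identity n η v
  have h2 : (1 - η ^ n) ^ 2 * A ≤ (1 + η) ^ 2 * W := sum_sq_w_lower n η v hη0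
  have hηn : η ^ n < 1 := pow_lt_one₀ hη0 hη1 hn.ne'
  have h1η : (0 : ℝ) < 1 + η := by linarith
  have h1ηn : (0 : ℝ) < 1 - η ^ n := by linarith
  have h3 : (1 - η ^ n) * ((1 - η) * (1 - η ^ n) * A) ≤ (1 - η ^ n) * ((1 + η) * T) := by
    have hmul := mul_le_mul_of_nonneg_left h2 (by linarith : (0 : ℝ) ≤ 1 - η)
    calc (1 - η ^ n) * ((1 - η) * (1 - η ^ n) * A) = (1 - η) * ((1 - η ^ n) ^ 2 * A) := by ring
      _ ≤ (1 - η) * ((1 + η) ^ 2 * W) := hmul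
      _ = (1 - η ^ n) * ((1 + η) * T) := by linear_combination (1 + η) * h1
  have h4 : (1 - η) * (1 - η ^ n) * A ≤ (1 + η) * T := le_of_mul_le_mul_left h3 h1ηn
  have h5 : (1 - η) * (1 - η ^ n) / (1 + η) * A ≤ T := by
    rw [div_mul_eq_mul_div, div_le_iff₀ h1η]
    calc (1 - η) * (1 - η ^ n) * A ≤ (1 + η) * T := h4
      _ = T * (1 + η) := mul_comm _ _
  have h6 : η ^ n * S ^ 2 ≤ η ^ n * (n * A) := mul_le_mul_of_nonneg_left hS (pow_nonneg hη0 n)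
  rw [hQ, sub_mul]
  have hrw : (n : ℝ) * η ^ n * A = η ^ n * (n * A) := by ring
  linarith

end


private lemma eventually_small (δ C : ℝ) (hδ0 : 0 < δ) (hδ1 : δ < 1) (hC : 0 < C) :
    ∀ᶠ n : ℕ in Filter.atTop,
      ((n : ℝ) + 1) * (n : ℝ) ^ δ * Real.exp (-(C * (n : ℝ) ^ (1 - δ))) ≤ C / 4 := by
  set s : ℝ := (1 + δ) / (1 - δ) with hs
  have hd : (0 : ℝ) < 1 - δ := by linarith
  have h0 : Tendsto (fun x : ℝ => 2 * (x ^ s * Real.exp (-C * x))) atTop (nhds 0) := by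
    have := (tendsto_rpow_mul_exp_neg_mul_atTop_nhds_zero s C hC).const_mul 2
    simpa using this
  have h1 : Tendsto (fun n : ℕ => (n : ℝ) ^ (1 - δ)) atTop atTop :=
    (tendsto_rpow_atTop hd).comp tendsto_natCast_atTop_atTop
  have h2 : Tendsto (fun n : ℕ =>
      2 * (((n : ℝ) ^ (1 - δ)) ^ s * Real.exp (-C * (n : ℝ) ^ (1 - δ)))) atTop (nhds 0) :=
    h0.comp h1
  have h3 : ∀ᶠ n : ℕ in atTop,
      2 * (((n : ℝ) ^ (1 - δ)) ^ s * Real.exp (-C * (n : ℝ) ^ (1 - δ))) ≤ C / 4 :=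
    h2.eventually (eventually_le_nhds (by positivity))
  filter_upwards [h3, eventually_ge_atTop 1] with n hn hn1
  have hn0 : (0 : ℝ) < (n : ℝ) := by exact_mod_cast hn1
  have hup : ((n : ℝ) + 1) * (n : ℝ) ^ δ ≤ 2 * ((n : ℝ) ^ (1 - δ)) ^ s := by
    have e1 : ((n : ℝ) ^ (1 - δ)) ^ s = (n : ℝ) ^ (1 + δ) := by
      rw [← Real.rpow_mul (le_of_lt hn0)]
      congr 1
      rw [hs, mul_comm, div_mul_cancel₀ _ (ne_of_gt hd)]
    have e2 : (n : ℝ) ^ (1 + δ) = (n : ℝ) * (n : ℝ) ^ δ := by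
      rw [Real.rpow_add hn0, Real.rpow_one]
    have e3 : ((n : ℝ) + 1) ≤ 2 * (n : ℝ) := by
      have : (1 : ℝ) ≤ (n : ℝ) := by exact_mod_cast hn1
      linarith
    calc ((n : ℝ) + 1) * (n : ℝ) ^ δ ≤ 2 * (n : ℝ) * (n : ℝ) ^ δ := by
          have := Real.rpow_nonneg (le_of_lt hn0) δ
          nlinarith
      _ = 2 * ((n : ℝ) ^ (1 - δ)) ^ s := by rw [e1, e2]; ring
  have hexp : (0 : ℝ) < Real.exp (-(C * (n : ℝ) ^ (1 - δ))) := Real.exp_pos _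
  calc ((n : ℝ) + 1) * (n : ℝ) ^ δ * Real.exp (-(C * (n : ℝ) ^ (1 - δ)))
      ≤ 2 * ((n : ℝ) ^ (1 - δ)) ^ s * Real.exp (-(C * (n : ℝ) ^ (1 - δ))) := by
        exact mul_le_mul_of_nonneg_right hup (le_of_lt hexp)
    _ = 2 * (((n : ℝ) ^ (1 - δ)) ^ s * Real.exp (-C * (n : ℝ) ^ (1 - δ))) := by
        rw [neg_mul]; ring
    _ ≤ C / 4 := hn

/-- For every `δ ∈ (0,1)` and `C > 0` there is `N` such that for all
`n ≥ N` and `ρ ∈ (0,1]` with `ρ ≥ C·n^{−δ}`, setting `η = 1 − ρ`, every eigenvalue of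
the expected join matrix of the `n`-cycle, `φ^cycle_{ij} = η^{|i−j|} + η^{n−|i−j|} − η^n`,
is strictly greater than `ρ/4`. -/
theorem min_eigenvalue_cycle_matrix
    (δ : ℝ) (hδ : δ ∈ Set.Ioo (0 : ℝ) 1) (C : ℝ) (hC : 0 < C) :
    ∃ N : ℕ, ∀ n : ℕ, N ≤ n → ∀ ρ η : ℝ, 0 < ρ → ρ ≤ 1 →
      C * (n : ℝ) ^ (-δ) ≤ ρ → η = 1 - ρ →
      ∀ M : Matrix (Fin n) (Fin n) ℝ,
        (∀ i j, M i j =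
          η ^ (((i : ℤ) - (j : ℤ)).natAbs) +
            η ^ (n - ((i : ℤ) - (j : ℤ)).natAbs) - η ^ n) →
        ∀ t : ℝ, Module.End.HasEigenvalue (Matrix.toLin' M) t → ρ / 4 < t := by
  obtain ⟨hδ0, hδ1⟩ := hδ
  obtain ⟨N0, hN0⟩ := Filter.eventually_atTop.1 (eventually_small δ C hδ0 hδ1 hC)
  refine ⟨max N0 1, fun n hn ρ η hρ0 hρ1 hρC hη M hM t ht => ?_⟩
  subst hη
  set η : ℝ := 1 - ρ with hη
  have hn1 : 1 ≤ n := le_trans (le_max_right N0 1) hn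
  have hn0 : 0 < n := hn1
  haveI : NeZero n := ⟨hn0.ne'⟩
  have hη0 : 0 ≤ η := by rw [hη]; linarith
  have hη1 : η < 1 := by rw [hη]; linarith
  have hnR : (0 : ℝ) < (n : ℝ) := by exact_mod_cast hn0
  obtain ⟨v, hv⟩ := ht.exists_hasEigenvector
  have hv0 : v ≠ 0 := hv.2
  have hMv : M.mulVec v = t • v := by
    have := hv.apply_eq_smul
    rwa [Matrix.toLin'_apply] at this
  set A := ∑ i : Fin n, v i ^ 2 with hAdef
  have hA : 0 < A := by
    obtain ⟨i, hi⟩ := Function.ne_iff.1 hv0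
    have hi' : v i ≠ 0 := hi
    refine Finset.sum_pos' (fun i _ => sq_nonneg _) ⟨i, Finset.mem_univ i, ?_⟩
    have := pow_pos (abs_pos.2 hi') 2
    rwa [sq_abs] at this
  have hQ : ∑ j : Fin n, ∑ k : Fin n, M j k * (v j * v k) = t * A := by
    have h1 : ∀ j, (M.mulVec v) j = ∑ k, M j k * v k := fun j => rfl
    calc ∑ j : Fin n, ∑ k : Fin n, M j k * (v j * v k)
        = ∑ j : Fin n, v j * (M.mulVec v) j := by
          refine Finset.sum_congr rfl fun j _ => ?_
          rw [h1 j, Finset.mul_sum]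
          exact Finset.sum_congr rfl fun k _ => by ring
      _ = ∑ j : Fin n, v j * (t * v j) := by
          rw [hMv]; exact Finset.sum_congr rfl fun j _ => by simp [smul_eq_mul]
      _ = t * A := by
          rw [hAdef, Finset.mul_sum]
          exact Finset.sum_congr rfl fun j _ => by ring
  have hquad := quad_lower n η v hη0 hη1 hn0
  have hMeq : ∑ j : Fin n, ∑ k : Fin n, M j k * (v j * v k)
      = ∑ j : Fin n, ∑ k : Fin n,
          (η ^ (((j : ℤ) - (k : ℤ)).natAbs) + η ^ (n - ((j : ℤ) - (k : ℤ)).natAbs) - η ^ n)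
            * (v j * v k) :=
    Finset.sum_congr rfl fun j _ => Finset.sum_congr rfl fun k _ => by rw [hM j k]
  have hlow : ((1 - η) * (1 - η ^ n) / (1 + η) - n * η ^ n) * A ≤ t * A := by
    rw [← hQ, hMeq]; exact hquad
  have ht' : (1 - η) * (1 - η ^ n) / (1 + η) - n * η ^ n ≤ t :=
    le_of_mul_le_mul_right hlow hA
  have hηn0 : 0 ≤ η ^ n := pow_nonneg hη0 n
  have hηn1 : η ^ n < 1 := pow_lt_one₀ hη0 hη1 hn0.ne'
  have hexp1 : η ≤ Real.exp (-ρ) := by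
    have := Real.add_one_le_exp (-ρ); rw [hη]; linarith
  have hexp2 : η ^ n ≤ Real.exp (-ρ) ^ n := pow_le_pow_left₀ hη0 hexp1 n
  have hexp3 : Real.exp (-ρ) ^ n = Real.exp (-(ρ * n)) := by
    rw [← Real.exp_nat_mul]; congr 1; ring
  have hpowid : (n : ℝ) ^ (-δ) * (n : ℝ) = (n : ℝ) ^ (1 - δ) := by
    rw [show (1 : ℝ) - δ = -δ + 1 by ring, Real.rpow_add hnR, Real.rpow_one]
  have hrn : C * (n : ℝ) ^ (1 - δ) ≤ ρ * n := by
    have h := mul_le_mul_of_nonneg_right hρC (le_of_lt hnR)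
    calc C * (n : ℝ) ^ (1 - δ) = C * (n : ℝ) ^ (-δ) * n := by rw [mul_assoc, hpowid]
      _ ≤ ρ * n := h
  have hηexp : η ^ n ≤ Real.exp (-(C * (n : ℝ) ^ (1 - δ))) := by
    refine le_trans hexp2 ?_
    rw [hexp3]
    exact Real.exp_le_exp.2 (by linarith)
  have hkey : ((n : ℝ) + 1) * η ^ n ≤ ρ / 4 := by
    have hN := hN0 n (le_trans (le_max_left N0 1) hn)
    have hpow : (0 : ℝ) < (n : ℝ) ^ (-δ) := Real.rpow_pos_of_pos hnR _
    have h1 : ((n : ℝ) + 1) * Real.exp (-(C * (n : ℝ) ^ (1 - δ))) ≤ C / 4 * (n : ℝ) ^ (-δ) := by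
      have hm := mul_le_mul_of_nonneg_right hN (le_of_lt hpow)
      have hcancel : (n : ℝ) ^ δ * (n : ℝ) ^ (-δ) = 1 := by
        rw [← Real.rpow_add hnR]; simp
      have hre : ((n : ℝ) + 1) * (n : ℝ) ^ δ * Real.exp (-(C * (n : ℝ) ^ (1 - δ))) * (n : ℝ) ^ (-δ)
          = ((n : ℝ) + 1) * Real.exp (-(C * (n : ℝ) ^ (1 - δ))) * ((n : ℝ) ^ δ * (n : ℝ) ^ (-δ)) := by
        ring
      rw [hre, hcancel, mul_one] at hm
      exact hm
    have h2 : C / 4 * (n : ℝ) ^ (-δ) ≤ ρ / 4 := by linarith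
    have h3 : ((n : ℝ) + 1) * η ^ n ≤ ((n : ℝ) + 1) * Real.exp (-(C * (n : ℝ) ^ (1 - δ))) :=
      mul_le_mul_of_nonneg_left hηexp (by positivity)
    linarith
  have hfinal : ρ / 4 < (1 - η) * (1 - η ^ n) / (1 + η) - n * η ^ n := by
    have h1η2 : 1 + η < 2 := by linarith
    have h1η0 : (0 : ℝ) < 1 + η := by linarith
    have hnum : 0 < (1 - η) * (1 - η ^ n) := by
      have : 1 - η = ρ := by rw [hη]; ring
      rw [this]; exact mul_pos hρ0 (by linarith)
    have hstrict : (1 - η) * (1 - η ^ n) / 2 < (1 - η) * (1 - η ^ n) / (1 + η) :=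
      div_lt_div_of_pos_left hnum h1η0 h1η2
    have hρηn : ρ * η ^ n ≤ η ^ n := by nlinarith
    have hge : ρ / 4 ≤ (1 - η) * (1 - η ^ n) / 2 - n * η ^ n := by
      have h1mη : 1 - η = ρ := by rw [hη]; ring
      rw [h1mη]
      nlinarith [hkey, hηn0, hρ0]
    linarith
  linarith
end

section
/- Let n ∈ ℕ with n ≥ 1, let ρ ∈ (0,1] and η = 1 − ρ, and let A(n,η) be the n×n matrix with entries A(n,η)_{ij} = η^{|i−j|}. Let δ > 0 and let z ∈ ℝ^n satisfy Σ_{i=0}^{n−1} z_i = 0 and ‖z‖_∞ ≤ δ. Then |νᵀ · A(n,η) · z| ≤ 2δ/(n ρ²), where ν = (1/n, …, 1/n). -/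
open scoped BigOperators

lemma col_sum_path (n : ℕ) (η : ℝ) (hη1 : η ≠ 1) (j : Fin n) :
    (∑ i : Fin n, η ^ (((i : ℤ) - (j : ℤ)).natAbs))
      = ((1 - η ^ ((j : ℕ) + 1)) + (η - η ^ (n - (j : ℕ)))) / (1 - η) := by
  have hj : (j : ℕ) + 1 ≤ n := j.2
  rw [Fin.sum_univ_eq_sum_range (fun i => η ^ (((i : ℤ) - (j : ℤ)).natAbs)) n]
  have hsplit : (∑ i ∈ Finset.range n, η ^ (((i : ℤ) - (j : ℤ)).natAbs))
      = (∑ i ∈ Finset.range ((j : ℕ) + 1), η ^ (((i : ℤ) - (j : ℤ)).natAbs))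
      + ∑ i ∈ Finset.Ico ((j : ℕ) + 1) n, η ^ (((i : ℤ) - (j : ℤ)).natAbs) := by
    rw [Finset.range_eq_Ico, ← Finset.sum_Ico_consecutive _ (Nat.zero_le ((j : ℕ) + 1)) hj, ← Finset.range_eq_Ico]
  have h1 : (∑ i ∈ Finset.range ((j : ℕ) + 1), η ^ (((i : ℤ) - (j : ℤ)).natAbs))
      = ∑ k ∈ Finset.range ((j : ℕ) + 1), η ^ k := by
    rw [← Finset.sum_range_reflect (fun k => η ^ k) ((j : ℕ) + 1)]
    refine Finset.sum_congr rfl fun i hi => ?_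
    rw [Finset.mem_range] at hi
    congr 1
    omega
  have h2 : (∑ i ∈ Finset.Ico ((j : ℕ) + 1) n, η ^ (((i : ℤ) - (j : ℤ)).natAbs))
      = ∑ k ∈ Finset.range (n - ((j : ℕ) + 1)), η ^ (k + 1) := by
    rw [Finset.sum_Ico_eq_sum_range]
    refine Finset.sum_congr rfl fun k hk => ?_
    congr 1
    omega
  have hg1 : (∑ k ∈ Finset.range ((j : ℕ) + 1), η ^ k)
      = (η ^ ((j : ℕ) + 1) - 1) / (η - 1) := geom_sum_eq hη1 _
  have hg2 : (∑ k ∈ Finset.range (n - ((j : ℕ) + 1)), η ^ k)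
      = (η ^ (n - ((j : ℕ) + 1)) - 1) / (η - 1) := geom_sum_eq hη1 _
  have h3 : (∑ k ∈ Finset.range (n - ((j : ℕ) + 1)), η ^ (k + 1))
      = (∑ k ∈ Finset.range (n - ((j : ℕ) + 1)), η ^ k) * η := by
    rw [Finset.sum_mul]
    exact Finset.sum_congr rfl fun k _ => (pow_succ η k)
  have hnj : η ^ (n - (j : ℕ)) = η ^ (n - ((j : ℕ) + 1)) * η := by
    rw [← pow_succ]
    congr 1
    omega
  rw [hsplit, h1, h2, h3, hg1, hg2, hnj]
  have hne : (1 : ℝ) - η ≠ 0 := by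
    intro h; apply hη1; linarith
  have hne' : η - 1 ≠ 0 := by intro h; apply hη1; linarith
  field_simp
  ring

/-- For the expected join matrix `A(n,η)` of the path,
`A_{ij} = η^{|i−j|}` with `η = 1 − ρ`, and any `z ∈ ℝ^n` with `Σ z_i = 0` and
`‖z‖_∞ ≤ δ`, the cross term satisfies `|νᵀ A z| ≤ 2δ/(nρ²)`, where `ν` is the
uniform vector `(1/n,…,1/n)`. -/
theorem cross_term_bound_path
    (n : ℕ) (hn : 1 ≤ n) (ρ η : ℝ) (hρ0 : 0 < ρ) (hρ1 : ρ ≤ 1) (hη : η = 1 - ρ)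
    (δ : ℝ) (hδ : 0 < δ) (z : Fin n → ℝ)
    (hz0 : ∑ i, z i = 0) (hzinf : ∀ i, |z i| ≤ δ) :
    |∑ i : Fin n, ∑ j : Fin n,
        (1 / n : ℝ) * η ^ (((i : ℤ) - (j : ℤ)).natAbs) * z j|
      ≤ 2 * δ / (n * ρ ^ 2) := by
  have hη0 : 0 ≤ η := by rw [hη]; linarith
  have hη1 : η < 1 := by rw [hη]; linarith
  have hρη : 1 - η = ρ := by rw [hη]; ring
  have hn0 : (0 : ℝ) < n := by exact_mod_cast hn
  set K : ℝ := (1 + η) / ρ with hK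
  set c : Fin n → ℝ := fun j => ∑ i : Fin n, η ^ (((i : ℤ) - (j : ℤ)).natAbs) with hc
  have hcval : ∀ j : Fin n,
      c j = ((1 - η ^ ((j : ℕ) + 1)) + (η - η ^ (n - (j : ℕ)))) / ρ := by
    intro j
    simp only [hc]
    rw [col_sum_path n η hη1.ne j, hρη]
  -- rewrite the double sum
  have hKz : ∑ j : Fin n, z j * K / n = 0 := by
    rw [← Finset.sum_div, ← Finset.sum_mul, hz0, zero_mul, zero_div]
  have h1 : (∑ i : Fin n, ∑ j : Fin n,
        (1 / n : ℝ) * η ^ (((i : ℤ) - (j : ℤ)).natAbs) * z j)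
      = ∑ j : Fin n, z j * c j / n := by
    rw [Finset.sum_comm]
    refine Finset.sum_congr rfl fun j _ => ?_
    rw [hc, mul_comm (z j), Finset.sum_mul, Finset.sum_div]
    exact Finset.sum_congr rfl fun i _ => by ring
  have hS : (∑ i : Fin n, ∑ j : Fin n,
        (1 / n : ℝ) * η ^ (((i : ℤ) - (j : ℤ)).natAbs) * z j)
      = ∑ j : Fin n, z j * (c j - K) / n := by
    rw [h1, ← sub_zero (∑ j : Fin n, z j * c j / n), ← hKz,
      ← Finset.sum_sub_distrib]
    exact Finset.sum_congr rfl fun j _ => by ring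
  -- per-term bound
  have habs : ∀ j : Fin n, |z j * (c j - K) / n|
      ≤ δ / (ρ * n) * (η ^ ((j : ℕ) + 1) + η ^ (n - (j : ℕ))) := by
    intro j
    have hcK : c j - K = -((η ^ ((j : ℕ) + 1) + η ^ (n - (j : ℕ))) / ρ) := by
      rw [hcval j, hK]
      field_simp
      ring
    have hpos : 0 ≤ (η ^ ((j : ℕ) + 1) + η ^ (n - (j : ℕ))) / ρ :=
      div_nonneg (by positivity) hρ0.le
    rw [abs_div, abs_mul, hcK, abs_neg, abs_of_nonneg hpos, abs_of_pos hn0]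
    rw [div_le_iff₀ hn0] at *
    calc |z j| * ((η ^ ((j : ℕ) + 1) + η ^ (n - (j : ℕ))) / ρ)
        ≤ δ * ((η ^ ((j : ℕ) + 1) + η ^ (n - (j : ℕ))) / ρ) := by
          exact mul_le_mul_of_nonneg_right (hzinf j) hpos
      _ = δ / (ρ * n) * (η ^ ((j : ℕ) + 1) + η ^ (n - (j : ℕ))) * n := by
          field_simp
  -- geometric sum bounds
  have hgeom : ∀ m : ℕ, (∑ k ∈ Finset.range m, η ^ k) ≤ 1 / (1 - η) := by
    intro m
    have h1 : (0 : ℝ) < 1 - η := by linarith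
    have h2 : 0 ≤ η ^ m := pow_nonneg hη0 m
    have key : (η ^ m - 1) / (η - 1) = (1 - η ^ m) / (1 - η) := by
      rw [← neg_sub 1 (η ^ m), ← neg_sub 1 η, neg_div_neg_eq]
    rw [geom_sum_eq hη1.ne, key, div_le_div_iff₀ h1 h1]
    nlinarith
  have hsum1 : (∑ j : Fin n, η ^ ((j : ℕ) + 1)) ≤ η / ρ := by
    rw [Fin.sum_univ_eq_sum_range (fun j => η ^ (j + 1)) n]
    have : (∑ j ∈ Finset.range n, η ^ (j + 1))
        = (∑ j ∈ Finset.range n, η ^ j) * η := by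
      rw [Finset.sum_mul]
      exact Finset.sum_congr rfl fun k _ => (pow_succ η k)
    rw [this, ← hρη]
    calc (∑ j ∈ Finset.range n, η ^ j) * η ≤ (1 / (1 - η)) * η :=
          mul_le_mul_of_nonneg_right (hgeom n) hη0
      _ = η / (1 - η) := by ring
  have hsum2 : (∑ j : Fin n, η ^ (n - (j : ℕ))) ≤ η / ρ := by
    rw [Fin.sum_univ_eq_sum_range (fun j => η ^ (n - j)) n]
    have : (∑ j ∈ Finset.range n, η ^ (n - j))
        = ∑ j ∈ Finset.range n, η ^ (j + 1) := by
      rw [← Finset.sum_range_reflect (fun k => η ^ (k + 1)) n]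
      refine Finset.sum_congr rfl fun i hi => ?_
      rw [Finset.mem_range] at hi
      congr 1
      omega
    rw [this]
    have h2 : (∑ j ∈ Finset.range n, η ^ (j + 1))
        = (∑ j ∈ Finset.range n, η ^ j) * η := by
      rw [Finset.sum_mul]
      exact Finset.sum_congr rfl fun k _ => (pow_succ η k)
    rw [h2, ← hρη]
    calc (∑ j ∈ Finset.range n, η ^ j) * η ≤ (1 / (1 - η)) * η :=
          mul_le_mul_of_nonneg_right (hgeom n) hη0
      _ = η / (1 - η) := by ring
  -- put it together
  rw [hS]
  calc |∑ j : Fin n, z j * (c j - K) / n|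
      ≤ ∑ j : Fin n, |z j * (c j - K) / n| := Finset.abs_sum_le_sum_abs _ _
    _ ≤ ∑ j : Fin n, δ / (ρ * n) * (η ^ ((j : ℕ) + 1) + η ^ (n - (j : ℕ))) :=
        Finset.sum_le_sum fun j _ => habs j
    _ = δ / (ρ * n) * ((∑ j : Fin n, η ^ ((j : ℕ) + 1))
          + ∑ j : Fin n, η ^ (n - (j : ℕ))) := by
        rw [← Finset.mul_sum, Finset.sum_add_distrib]
    _ ≤ δ / (ρ * n) * (η / ρ + η / ρ) := by
        refine mul_le_mul_of_nonneg_left (add_le_add hsum1 hsum2) ?_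
        positivity
    _ = 2 * δ * η / (n * ρ ^ 2) := by
        field_simp
        ring
    _ ≤ 2 * δ / (n * ρ ^ 2) := by
        rw [div_le_div_iff_of_pos_right (by positivity)]
        nlinarith
end

section
/- Let C > 0, let n ∈ ℕ with n ≥ 2, let ρ ∈ (0,1] and η = 1 − ρ, let ε > 0, and let m be a real number with 8C·log(n)/(ρ³ ε²) ≤ m ≤ C·n·log(n). Let μ be a probability vector on {0,…,n−1} with ‖μ‖_∞ ≤ C·log(n)/m, and set z = μ − ν where ν = (1/n,…,1/n). Then |2·νᵀ · A(n,η) · z| ≤ ε² ρ/(2n). -/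
open scoped BigOperators

set_option maxHeartbeats 1000000 in
/-- Let `A(n,η)` be the expected join matrix of the path,
`A_{ij} = η^{|i−j|}`, `η = 1 − ρ`.  If `8C log n/(ρ³ε²) ≤ m ≤ C n log n` and `μ` is a
probability vector with `‖μ‖_∞ ≤ C log n / m`, then with `z = μ − ν` (`ν` uniform),
`|2·νᵀ A z| ≤ ε²ρ/(2n)`. -/
theorem cross_term_small_path
    (C : ℝ) (hC : 0 < C) (n : ℕ) (hn : 2 ≤ n)
    (ρ η : ℝ) (hρ0 : 0 < ρ) (hρ1 : ρ ≤ 1) (hη : η = 1 - ρ)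
    (ε : ℝ) (hε : 0 < ε) (m : ℝ)
    (hm1 : 8 * C * Real.log n / (ρ ^ 3 * ε ^ 2) ≤ m)
    (hm2 : m ≤ C * n * Real.log n)
    (μ : Fin n → ℝ) (hμ0 : ∀ i, 0 ≤ μ i) (hμ1 : ∑ i, μ i = 1)
    (hμinf : ∀ i, μ i ≤ C * Real.log n / m) :
    |2 * ∑ i : Fin n, ∑ j : Fin n,
        (1 / n : ℝ) * η ^ (((i : ℤ) - (j : ℤ)).natAbs) * (μ j - 1 / n)|
      ≤ ε ^ 2 * ρ / (2 * n) := by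
  have hn1 : (1:ℝ) < n := by
    have : (2:ℝ) ≤ n := by exact_mod_cast hn
    linarith
  have hn0 : (0:ℝ) < n := by linarith
  have hlog : 0 < Real.log n := Real.log_pos hn1
  have hm0 : 0 < m := lt_of_lt_of_le (by positivity) hm1
  have hη0 : 0 ≤ η := by rw [hη]; linarith
  have hη1 : η ≤ 1 := by rw [hη]; linarith
  set B : ℝ := C * Real.log n / m with hBdef
  have hB0 : 0 < B := by positivity
  have hB8 : B ≤ ρ ^ 3 * ε ^ 2 / 8 := by
    rw [hBdef, div_le_div_iff₀ hm0 (by norm_num : (0:ℝ) < 8)]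
    have h := (div_le_iff₀ (by positivity : (0:ℝ) < ρ ^ 3 * ε ^ 2)).mp hm1
    nlinarith
  have h1n : 1 / (n:ℝ) ≤ B := by
    rw [hBdef, div_le_div_iff₀ hn0 hm0]
    nlinarith
  -- geometric sums
  set G : ℕ → ℝ := fun k => ∑ d ∈ Finset.range k, η ^ d with hGdef
  have hG : ∀ k, ρ * G k = 1 - η ^ k := by
    intro k
    have h := geom_sum_mul η k
    simp only [hGdef]
    linear_combination -h + (∑ i ∈ Finset.range k, η ^ i) * hη
  have hGnonneg : ∀ k, 0 ≤ G k := by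
    intro k
    apply Finset.sum_nonneg
    intro d _
    positivity
  have hGn : η * G n ≤ 1 / ρ := by
    have h := hG n
    rw [le_div_iff₀ hρ0]
    have hpow : 0 ≤ η ^ n := by positivity
    have h2 : G n * ρ ≤ 1 := by nlinarith
    have h3 : η * G n ≤ G n := by nlinarith [hGnonneg n]
    nlinarith [hGnonneg n]
  -- the column sums
  have hs : ∀ j : Fin n, (∑ i : Fin n, η ^ (((i:ℤ) - (j:ℤ)).natAbs))
      = G ((j:ℕ) + 1) + G (n - (j:ℕ)) - 1 := by
    intro j
    have hj : (j:ℕ) < n := j.isLt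
    rw [Fin.sum_univ_eq_sum_range (fun i => η ^ (((i:ℤ) - (j:ℤ)).natAbs)) n]
    rw [← Finset.sum_range_add_sum_Ico _ (by omega : (j:ℕ) + 1 ≤ n)]
    have e1 : ∑ i ∈ Finset.range ((j:ℕ) + 1), η ^ (((i:ℤ) - (j:ℤ)).natAbs)
        = G ((j:ℕ) + 1) := by
      have hr := Finset.sum_range_reflect (fun d => η ^ d) ((j:ℕ) + 1)
      simp only [hGdef]
      rw [← hr]
      apply Finset.sum_congr rfl
      intro i hi
      simp only [Finset.mem_range] at hi
      congr 1
      omega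
    have e2 : ∑ i ∈ Finset.Ico ((j:ℕ) + 1) n, η ^ (((i:ℤ) - (j:ℤ)).natAbs)
        = G (n - (j:ℕ)) - 1 := by
      rw [Finset.sum_Ico_eq_sum_range]
      have hk : n - (j:ℕ) = (n - (j:ℕ) - 1) + 1 := by omega
      have h2 : G (n - (j:ℕ))
          = (∑ i ∈ Finset.range (n - (j:ℕ) - 1), η ^ (i + 1)) + 1 := by
        simp only [hGdef]
        rw [hk, Finset.sum_range_succ']
        norm_num
      rw [h2]
      have h3 : n - ((j:ℕ) + 1) = n - (j:ℕ) - 1 := by omega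
      rw [h3]
      rw [add_sub_cancel_right]
      apply Finset.sum_congr rfl
      intro i hi
      simp only [Finset.mem_range] at hi
      congr 1
      omega
    rw [e1, e2]
    ring
  -- z sums to zero
  have hzsum : ∑ j : Fin n, (μ j - 1 / (n:ℝ)) = 0 := by
    rw [Finset.sum_sub_distrib, hμ1]
    simp [Finset.card_fin]
    field_simp
    norm_num
  -- z is small
  have hzabs : ∀ j : Fin n, |μ j - 1 / (n:ℝ)| ≤ B := by
    intro j
    rw [abs_le]
    constructor
    · have := hμ0 j; have hp : (0:ℝ) < 1 / n := by positivity
      linarith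
    · have := hμinf j; have hp : (0:ℝ) < 1 / n := by positivity
      linarith
  set c : ℝ := 2 / ρ - 1 with hcdef
  have hcs : ∀ j : Fin n,
      c - (G ((j:ℕ) + 1) + G (n - (j:ℕ)) - 1)
        = (η ^ ((j:ℕ) + 1) + η ^ (n - (j:ℕ))) / ρ := by
    intro j
    have e1 := hG ((j:ℕ) + 1)
    have e2 := hG (n - (j:ℕ))
    rw [hcdef, eq_div_iff hρ0.ne']
    have h2 : 2 / ρ * ρ = 2 := div_mul_cancel₀ 2 hρ0.ne'
    linear_combination h2 - e1 - e2
  set T : ℝ := ∑ j : Fin n, (G ((j:ℕ) + 1) + G (n - (j:ℕ)) - 1) * (μ j - 1 / n)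
    with hTdef
  -- rewrite the double sum
  have hswap : ∑ i : Fin n, ∑ j : Fin n,
      (1 / n : ℝ) * η ^ (((i : ℤ) - (j : ℤ)).natAbs) * (μ j - 1 / n)
      = (1 / n) * T := by
    rw [Finset.sum_comm, hTdef, Finset.mul_sum]
    apply Finset.sum_congr rfl
    intro j _
    rw [← hs j, Finset.sum_mul, Finset.mul_sum]
    apply Finset.sum_congr rfl
    intro i _
    ring
  -- subtract c
  have hTc : T = ∑ j : Fin n,
      ((G ((j:ℕ) + 1) + G (n - (j:ℕ)) - 1) - c) * (μ j - 1 / n) := by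
    have : ∑ j : Fin n,
        ((G ((j:ℕ) + 1) + G (n - (j:ℕ)) - 1) - c) * (μ j - 1 / n)
        = T - c * ∑ j : Fin n, (μ j - 1 / n) := by
      rw [hTdef, Finset.mul_sum, ← Finset.sum_sub_distrib]
      apply Finset.sum_congr rfl
      intro j _
      ring
    rw [this, hzsum]
    ring
  -- sums of powers
  have hsum1 : ∑ j : Fin n, η ^ ((j:ℕ) + 1) = η * G n := by
    rw [Fin.sum_univ_eq_sum_range (fun j => η ^ (j + 1)) n]
    simp only [hGdef]
    rw [Finset.mul_sum]
    apply Finset.sum_congr rfl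
    intro j _
    ring
  have hsum2 : ∑ j : Fin n, η ^ (n - (j:ℕ)) = η * G n := by
    rw [Fin.sum_univ_eq_sum_range (fun j => η ^ (n - j)) n, ← hsum1,
      Fin.sum_univ_eq_sum_range (fun j => η ^ (j + 1)) n]
    rw [← Finset.sum_range_reflect (fun j => η ^ (j + 1)) n]
    apply Finset.sum_congr rfl
    intro i hi
    simp only [Finset.mem_range] at hi
    congr 1
    omega
  -- bound |T|
  have hTbound : |T| ≤ ε ^ 2 * ρ / 4 := by
    rw [hTc]
    calc |∑ j : Fin n,
        ((G ((j:ℕ) + 1) + G (n - (j:ℕ)) - 1) - c) * (μ j - 1 / n)|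
        ≤ ∑ j : Fin n,
          |((G ((j:ℕ) + 1) + G (n - (j:ℕ)) - 1) - c) * (μ j - 1 / n)| :=
          Finset.abs_sum_le_sum_abs _ _
      _ ≤ ∑ j : Fin n, ((η ^ ((j:ℕ) + 1) + η ^ (n - (j:ℕ))) / ρ) * B := by
          apply Finset.sum_le_sum
          intro j _
          rw [abs_mul, abs_sub_comm, abs_of_nonneg (by
            rw [hcs j]; positivity), hcs j]
          apply mul_le_mul_of_nonneg_left (hzabs j)
          positivity
      _ = (2 * (η * G n) / ρ) * B := by
          rw [← Finset.sum_mul, ← Finset.sum_div, Finset.sum_add_distrib,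
            hsum1, hsum2]
          ring
      _ ≤ (2 * (1 / ρ) / ρ) * B := by
          gcongr
      _ ≤ (2 * (1 / ρ) / ρ) * (ρ ^ 3 * ε ^ 2 / 8) := by
          gcongr
      _ = ε ^ 2 * ρ / 4 := by
          field_simp
          ring
  rw [hswap]
  have habs : |2 * ((1 / (n:ℝ)) * T)| = 2 * ((1 / n) * |T|) := by
    rw [abs_mul, abs_mul, abs_of_nonneg (by norm_num : (0:ℝ) ≤ 2),
      abs_of_nonneg (by positivity : (0:ℝ) ≤ 1 / (n:ℝ))]
  rw [habs]
  have : 2 * ((1 / (n:ℝ)) * (ε ^ 2 * ρ / 4)) = ε ^ 2 * ρ / (2 * n) := by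
    field_simp
    ring
  rw [← this]
  gcongr
end
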